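/- arXiv:1312.1744 — 11 statements merged into one kernel-verified Lean document; each statement's English description precedes it below -/
import Mathlib

section
/- Let p > 0 and let a < b be real numbers. For every measurable function f : [a,b] → (0,∞), ∫_a^b ((1/(x-a)) ∫_a^x f(y) dy)^{-p} dx ≤ ((p+1)/p)^p · ∫_a^b f(x)^{-p} dx (both sides possibly infinite). -/
open MeasureTheory Set intervalIntegral
open scoped ENNReal

namespace HardyAux


lemma lint_rpow_inv (p a x : ℝ) (hp : 0 < p) (hax : a < x) :
    ∫⁻ y in Ioc a x, ENNReal.ofReal ((y - a) ^ (1/p))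
      = ENNReal.ofReal ((p / (p+1)) * (x - a) ^ ((p+1)/p)) := by
  have hp1 : (0:ℝ) < p + 1 := by linarith
  have hm1 : (-1:ℝ) < 1/p := by linarith [one_div_pos.mpr hp]
  have hii : IntervalIntegrable (fun y => (y - a) ^ (1/p)) volume a x := by
    have := (intervalIntegrable_rpow' (a := 0) (b := x - a) hm1).comp_sub_right a
    simpa using this
  have h1 : IntegrableOn (fun y => (y - a) ^ (1/p)) (Ioc a x) := by
    rw [← uIoc_of_le hax.le, ← intervalIntegrable_iff]; exact hii
  have hnn : 0 ≤ᵐ[volume.restrict (Ioc a x)] fun y => (y - a) ^ (1/p) :=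
    (ae_restrict_iff' measurableSet_Ioc).mpr
      (Filter.Eventually.of_forall fun y hy => Real.rpow_nonneg (by linarith [hy.1]) _)
  rw [← ofReal_integral_eq_lintegral_ofReal h1 hnn]
  congr 1
  rw [← intervalIntegral.integral_of_le hax.le]
  have := intervalIntegral.integral_comp_sub_right (a := a) (b := x)
    (fun t => t ^ (1/p)) a
  rw [this, sub_self, integral_rpow (Or.inl hm1),
    Real.zero_rpow (by positivity), sub_zero,
    show 1/p + 1 = (p+1)/p by field_simp; ring,
    div_eq_mul_inv, mul_comm]
  congr 1
  rw [inv_eq_one_div]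
  field_simp


lemma lint_rpow_neg (p a y b : ℝ) (hp : 0 < p) (hay : a < y) (hyb : y ≤ b) :
    ∫⁻ x in Ioc y b, ENNReal.ofReal ((x - a) ^ (-(2*p+1)/p))
      ≤ ENNReal.ofReal ((p / (p+1)) * (y - a) ^ (-((p+1)/p))) := by
  have hp1 : (0:ℝ) < p + 1 := by linarith
  have hya : (0:ℝ) < y - a := by linarith
  have hba : (0:ℝ) < b - a := by linarith
  have h0 : (0:ℝ) ∉ uIcc (y - a) (b - a) := by
    rw [Set.mem_uIcc]; push_neg; constructor <;> intro h <;> linarith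
  have hne : -(2*p+1)/p ≠ -1 := by
    intro h
    have : -(2*p+1) = -1 * p := by
      field_simp at h; linarith
    linarith
  have hii : IntervalIntegrable (fun x => (x - a) ^ (-(2*p+1)/p)) volume y b := by
    have := (intervalIntegrable_rpow (a := y - a) (b := b - a)
      (r := -(2*p+1)/p) (Or.inr h0)).comp_sub_right a
    simpa using this
  have h1 : IntegrableOn (fun x => (x - a) ^ (-(2*p+1)/p)) (Ioc y b) := by
    rw [← uIoc_of_le hyb, ← intervalIntegrable_iff]; exact hii
  have hnn : 0 ≤ᵐ[volume.restrict (Ioc y b)] fun x => (x - a) ^ (-(2*p+1)/p) :=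
    (ae_restrict_iff' measurableSet_Ioc).mpr
      (Filter.Eventually.of_forall fun x hx => Real.rpow_nonneg (by linarith [hx.1]) _)
  rw [← ofReal_integral_eq_lintegral_ofReal h1 hnn]
  apply ENNReal.ofReal_le_ofReal
  rw [← intervalIntegral.integral_of_le hyb]
  have hcs := intervalIntegral.integral_comp_sub_right (a := y) (b := b)
    (fun t => t ^ (-(2*p+1)/p)) a
  rw [hcs, integral_rpow (Or.inr ⟨hne, h0⟩)]
  have he1 : -(2*p+1)/p + 1 = -((p+1)/p) := by field_simp; ring
  rw [he1]
  have hkey : ((b - a) ^ (-((p+1)/p)) - (y - a) ^ (-((p+1)/p))) / (-((p+1)/p))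
      = (p/(p+1)) * ((y - a) ^ (-((p+1)/p)) - (b - a) ^ (-((p+1)/p))) := by
    rw [div_neg, div_eq_mul_inv, inv_div]
    ring
  rw [hkey]
  have : (b - a) ^ (-((p+1)/p)) ≥ 0 := Real.rpow_nonneg hba.le _
  have hpp : (0:ℝ) < p/(p+1) := by positivity
  nlinarith [Real.rpow_nonneg hba.le (-((p+1)/p))]


lemma conj_exp (p : ℝ) (hp : 0 < p) : ((p+1)/p).HolderConjugate (p+1) := by
  rw [Real.holderConjugate_iff]
  constructor
  · rw [lt_div_iff₀ hp]; linarith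
  · rw [inv_div]
    field_simp

lemma holder_step (p a x : ℝ) (hp : 0 < p) (hax : a < x) (f : ℝ → ℝ)
    (hfm : Measurable f) (hfpos : ∀ y ∈ Ioc a x, 0 < f y) :
    ENNReal.ofReal ((p / (p+1)) * (x - a) ^ ((p+1)/p)) ≤
      (∫⁻ y in Ioc a x, ENNReal.ofReal (f y)) ^ (p/(p+1)) *
      (∫⁻ y in Ioc a x,
          (ENNReal.ofReal (f y)) ^ (-p) * ENNReal.ofReal ((y - a) ^ ((p+1)/p)))
        ^ (1/(p+1)) := by
  classical
  set g : ℝ → ℝ≥0∞ := fun y => ENNReal.ofReal (f y) with hg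
  set A : ℝ → ℝ≥0∞ := fun y => g y ^ (p/(p+1)) with hA
  set B : ℝ → ℝ≥0∞ := fun y => g y ^ (-(p/(p+1))) * ENNReal.ofReal ((y - a) ^ (1/p)) with hB
  have hgm : Measurable g := hfm.ennreal_ofReal
  have hAm : Measurable A := hgm.pow_const _
  have hBm : Measurable B :=
    (hgm.pow_const _).mul ((measurable_id.sub_const a).pow_const _).ennreal_ofReal
  have key := ENNReal.lintegral_mul_le_Lp_mul_Lq (volume.restrict (Ioc a x))
    (conj_exp p hp) hAm.aemeasurable hBm.aemeasurable
  have e1 : ∫⁻ y in Ioc a x, (A * B) y = ∫⁻ y in Ioc a x, ENNReal.ofReal ((y - a) ^ (1/p)) := by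
    refine setLIntegral_congr_fun measurableSet_Ioc (fun y hy => ?_)
    have hfy : 0 < f y := hfpos y hy
    have hg0 : g y ≠ 0 := by simp [hg, hfy, ENNReal.ofReal_eq_zero, not_le]
    have hgt : g y ≠ ⊤ := ENNReal.ofReal_ne_top
    show A y * B y = _
    rw [hA, hB]
    simp only
    rw [← mul_assoc, ← ENNReal.rpow_add _ _ hg0 hgt]
    simp
  have e2 : ∫⁻ y in Ioc a x, A y ^ ((p+1)/p) = ∫⁻ y in Ioc a x, g y := by
    refine lintegral_congr fun y => ?_
    rw [hA]; simp only
    rw [← ENNReal.rpow_mul]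
    rw [show (p/(p+1)) * ((p+1)/p) = 1 by field_simp, ENNReal.rpow_one]
  have e3 : ∫⁻ y in Ioc a x, B y ^ (p+1)
      = ∫⁻ y in Ioc a x, g y ^ (-p) * ENNReal.ofReal ((y - a) ^ ((p+1)/p)) := by
    refine setLIntegral_congr_fun measurableSet_Ioc (fun y hy => ?_)
    have hya : (0:ℝ) ≤ y - a := by linarith [hy.1]
    rw [hB]; simp only
    rw [ENNReal.mul_rpow_of_nonneg _ _ (by linarith : (0:ℝ) ≤ p+1),
      ← ENNReal.rpow_mul,
      show (-(p/(p+1))) * (p+1) = -p by field_simp,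
      ENNReal.ofReal_rpow_of_nonneg (Real.rpow_nonneg hya _) (by linarith : (0:ℝ) ≤ p+1),
      ← Real.rpow_mul hya, show (1/p) * (p+1) = (p+1)/p by field_simp]

  rw [e1, e2, e3] at key
  rw [← lint_rpow_inv p a x hp hax]
  have h1q : 1/((p+1)/p) = p/(p+1) := by rw [one_div_div]
  rwa [h1q] at key
lemma pointwise_step (p a x : ℝ) (hp : 0 < p) (hax : a < x) (f : ℝ → ℝ)
    (hfm : Measurable f) (hfpos : ∀ y ∈ Ioc a x, 0 < f y) :
    ((ENNReal.ofReal (x - a))⁻¹ * ∫⁻ y in Ioc a x, ENNReal.ofReal (f y)) ^ (-p)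
      ≤ ENNReal.ofReal (((p+1)/p) ^ (p+1)) *
        (ENNReal.ofReal ((x - a) ^ (-(2*p+1)/p)) *
          ∫⁻ y in Ioc a x,
            (ENNReal.ofReal (f y)) ^ (-p) * ENNReal.ofReal ((y - a) ^ ((p+1)/p))) := by
  have hp1 : (0:ℝ) < p + 1 := by linarith
  have hxa : (0:ℝ) < x - a := by linarith
  set D := ∫⁻ y in Ioc a x, ENNReal.ofReal (f y) with hD
  set H := ∫⁻ y in Ioc a x,
      (ENNReal.ofReal (f y)) ^ (-p) * ENNReal.ofReal ((y - a) ^ ((p+1)/p)) with hH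
  by_cases hHtop : H = ⊤
  · rw [hHtop, ENNReal.mul_top (by
      simp [ENNReal.ofReal_eq_zero, not_le, Real.rpow_pos_of_pos hxa]),
      ENNReal.mul_top (by
      simp only [ne_eq, ENNReal.ofReal_eq_zero, not_le]
      positivity)]
    exact le_top
  by_cases hDtop : D = ⊤
  · have h1 : (ENNReal.ofReal (x - a))⁻¹ ≠ 0 := by simp
    rw [hDtop, ENNReal.mul_top h1, ENNReal.top_rpow_of_neg (by linarith)]
    exact zero_le
  have hD0 : D ≠ 0 := by
    intro h
    have hgm : Measurable fun y => ENNReal.ofReal (f y) := hfm.ennreal_ofReal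
    have h2 : ∀ᵐ y ∂volume, y ∈ Ioc a x → ENNReal.ofReal (f y) = 0 :=
      (ae_restrict_iff' measurableSet_Ioc).mp ((lintegral_eq_zero_iff hgm).mp h)
    rw [Filter.eventually_iff, mem_ae_iff] at h2
    have h3 : volume (Ioc a x) = 0 := by
      refine measure_mono_null (fun y hy => ?_) h2
      intro hmem
      exact absurd (hmem hy) (by simp [ENNReal.ofReal_eq_zero, not_le, hfpos y hy])
    rw [Real.volume_Ioc] at h3
    simp only [ENNReal.ofReal_eq_zero] at h3
    linarith
  -- main case
  set c := ENNReal.ofReal ((p / (p+1)) * (x - a) ^ ((p+1)/p)) with hc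
  have hcpos : (0:ℝ) < (p / (p+1)) * (x - a) ^ ((p+1)/p) := by positivity
  have hc0 : c ≠ 0 := by simp [hc, ENNReal.ofReal_eq_zero, not_le, hcpos]
  have hctop : c ≠ ⊤ := ENNReal.ofReal_ne_top
  have key := holder_step p a x hp hax f hfm hfpos
  rw [← hD, ← hH, ← hc] at key
  -- raise to power p+1
  have key2 : c ^ (p+1) ≤ D ^ p * H := by
    have h4 := ENNReal.rpow_le_rpow key hp1.le
    rwa [ENNReal.mul_rpow_of_nonneg _ _ hp1.le, ← ENNReal.rpow_mul, ← ENNReal.rpow_mul,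
      show (p/(p+1)) * (p+1) = p by field_simp,
      show (1/(p+1)) * (p+1) = 1 by field_simp, ENNReal.rpow_one] at h4
  have hDp0 : D ^ p ≠ 0 := by
    simp only [ne_eq, ENNReal.rpow_eq_zero_iff, not_or]
    push_neg
    exact ⟨fun h => absurd h hD0, fun h => absurd h hDtop⟩
  have hDptop : D ^ p ≠ ⊤ := ENNReal.rpow_ne_top_of_nonneg hp.le hDtop
  have hcp0 : c ^ (p+1) ≠ 0 := by
    simp only [ne_eq, ENNReal.rpow_eq_zero_iff, not_or]
    push_neg
    exact ⟨fun h => absurd h hc0, fun h => absurd h hctop⟩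
  have hcptop : c ^ (p+1) ≠ ⊤ := ENNReal.rpow_ne_top_of_nonneg hp1.le hctop
  have key3 : D ^ (-p) ≤ (c ^ (p+1))⁻¹ * H := by
    have h5 : (D ^ p)⁻¹ * c ^ (p+1) ≤ H := by
      calc (D ^ p)⁻¹ * c ^ (p+1) ≤ (D ^ p)⁻¹ * (D ^ p * H) := mul_le_mul_right key2 _
        _ = H := by rw [← mul_assoc, ENNReal.inv_mul_cancel hDp0 hDptop, one_mul]
    calc D ^ (-p) = (D ^ p)⁻¹ := by rw [ENNReal.rpow_neg]
      _ = ((D ^ p)⁻¹ * c ^ (p+1)) * (c ^ (p+1))⁻¹ := by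
          rw [mul_assoc, ENNReal.mul_inv_cancel hcp0 hcptop, mul_one]
      _ ≤ H * (c ^ (p+1))⁻¹ := mul_le_mul_left h5 _
      _ = (c ^ (p+1))⁻¹ * H := mul_comm _ _
  -- rewrite LHS
  have hlhs : ((ENNReal.ofReal (x - a))⁻¹ * D) ^ (-p)
      = ENNReal.ofReal (x - a) ^ p * D ^ (-p) := by
    have hx0 : ENNReal.ofReal (x - a) ≠ 0 := by
      simp only [ne_eq, ENNReal.ofReal_eq_zero, not_le]; exact hxa
    rw [ENNReal.mul_rpow_of_ne_top (ENNReal.inv_ne_top.mpr hx0) hDtop]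
    congr 1
    rw [ENNReal.inv_rpow, ← ENNReal.rpow_neg, neg_neg]
  rw [hlhs]
  calc ENNReal.ofReal (x - a) ^ p * D ^ (-p)
      ≤ ENNReal.ofReal (x - a) ^ p * ((c ^ (p+1))⁻¹ * H) := mul_le_mul_right key3 _
    _ = (ENNReal.ofReal (x - a) ^ p * (c ^ (p+1))⁻¹) * H := by ring1
    _ = (ENNReal.ofReal (((p+1)/p) ^ (p+1)) * ENNReal.ofReal ((x - a) ^ (-(2*p+1)/p))) * H := by
        congr 1
        rw [hc, ENNReal.ofReal_rpow_of_pos hcpos,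
          ENNReal.ofReal_rpow_of_pos hxa,
          ← ENNReal.ofReal_inv_of_pos (by positivity),
          ← ENNReal.ofReal_mul (by positivity),
          ← ENNReal.ofReal_mul (by positivity)]
        congr 1
        have h1 : ((p/(p+1) * (x-a)^((p+1)/p))^(p+1))⁻¹
            = ((p+1)/p)^(p+1) * (x-a)^(-((p+1)/p * (p+1))) := by
          rw [Real.mul_rpow (by positivity) (by positivity), mul_inv,
            ← Real.inv_rpow (by positivity), inv_div, ← Real.rpow_mul hxa.le,
            ← Real.rpow_neg hxa.le]
        rw [h1, show (x-a)^p * (((p+1)/p)^(p+1) * (x-a)^(-((p+1)/p*(p+1))))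
            = ((p+1)/p)^(p+1) * ((x-a)^p * (x-a)^(-((p+1)/p*(p+1)))) by ring1,
          ← Real.rpow_add hxa]
        congr 1
        field_simp
        ring_nf
    _ = ENNReal.ofReal (((p+1)/p) ^ (p+1)) *
        (ENNReal.ofReal ((x - a) ^ (-(2*p+1)/p)) * H) := by ring1
lemma tonelli_step (p a b : ℝ) (hp : 0 < p) (_hab : a < b) (f : ℝ → ℝ)
    (hfm : Measurable f) :
    ∫⁻ x in Ioc a b, ENNReal.ofReal ((x - a) ^ (-(2*p+1)/p)) *
        ∫⁻ y in Ioc a x,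
          (ENNReal.ofReal (f y)) ^ (-p) * ENNReal.ofReal ((y - a) ^ ((p+1)/p))
      ≤ ENNReal.ofReal (p/(p+1)) * ∫⁻ y in Ioc a b, (ENNReal.ofReal (f y)) ^ (-p) := by
  have hp1 : (0:ℝ) < p + 1 := by linarith
  set k : ℝ → ℝ≥0∞ := fun y =>
    (ENNReal.ofReal (f y)) ^ (-p) * ENNReal.ofReal ((y - a) ^ ((p+1)/p)) with hk
  set w : ℝ → ℝ≥0∞ := fun x => ENNReal.ofReal ((x - a) ^ (-(2*p+1)/p)) with hw
  have hkm : Measurable k :=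
    ((hfm.ennreal_ofReal).pow_const _).mul
      ((measurable_id.sub_const a).pow_const _).ennreal_ofReal
  have hwm : Measurable w := ((measurable_id.sub_const a).pow_const _).ennreal_ofReal
  set Φ : ℝ × ℝ → ℝ≥0∞ :=
    fun q => ({q : ℝ × ℝ | q.2 ∈ Ioc a q.1}).indicator (fun q => w q.1 * k q.2) q with hΦ
  have hset : MeasurableSet {q : ℝ × ℝ | q.2 ∈ Ioc a q.1} := by
    have : {q : ℝ × ℝ | q.2 ∈ Ioc a q.1} = {q : ℝ × ℝ | a < q.2} ∩ {q : ℝ × ℝ | q.2 ≤ q.1} := by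
      ext q; simp [Set.mem_Ioc, and_comm]
    rw [this]
    exact (measurableSet_lt measurable_const measurable_snd).inter
      (measurableSet_le measurable_snd measurable_fst)
  have hΦm : Measurable Φ :=
    ((hwm.comp measurable_fst).mul (hkm.comp measurable_snd)).indicator hset
  have step1 : ∫⁻ x in Ioc a b, w x * ∫⁻ y in Ioc a x, k y
      = ∫⁻ x in Ioc a b, ∫⁻ y in Ioc a b, Φ (x, y) := by
    refine setLIntegral_congr_fun measurableSet_Ioc
      (fun x hx => ?_)
    have h1 : ∫⁻ y in Ioc a b, Φ (x, y) = ∫⁻ y in Ioc a x, w x * k y := by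
      have : (fun y => Φ (x, y)) = (Ioc a x).indicator (fun y => w x * k y) := by
        ext y
        simp [hΦ, Set.indicator_apply]
      rw [this, lintegral_indicator measurableSet_Ioc,
        Measure.restrict_restrict measurableSet_Ioc,
        inter_eq_self_of_subset_left (Ioc_subset_Ioc_right hx.2)]
    rw [h1, lintegral_const_mul _ hkm]
  have swap : ∫⁻ x in Ioc a b, ∫⁻ y in Ioc a b, Φ (x, y)
      = ∫⁻ y in Ioc a b, ∫⁻ x in Ioc a b, Φ (x, y) := by
    exact lintegral_lintegral_swap (by
      have : Function.uncurry (fun x y => Φ (x, y)) = Φ := rfl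
      rw [this]
      exact hΦm.aemeasurable)
  have step3 : ∫⁻ y in Ioc a b, ∫⁻ x in Ioc a b, Φ (x, y)
      ≤ ∫⁻ y in Ioc a b, ENNReal.ofReal (p/(p+1)) * (ENNReal.ofReal (f y)) ^ (-p) := by
    refine lintegral_mono_ae ((ae_restrict_iff' measurableSet_Ioc).mpr
      (Filter.Eventually.of_forall fun y hy => ?_))
    have hay : a < y := hy.1
    have hyb : y ≤ b := hy.2
    have h2 : (fun x => Φ (x, y)) = (Ici y).indicator (fun x => w x * k y) := by
      ext x
      simp only [hΦ, Set.indicator_apply, Set.mem_setOf_eq, Set.mem_Ioc, Set.mem_Ici, hay,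
        true_and]
    have h3 : Ici y ∩ Ioc a b = Icc y b := by
      ext z; simp only [Set.mem_inter_iff, Set.mem_Ici, Set.mem_Ioc, Set.mem_Icc]
      constructor
      · rintro ⟨h1, _, h2⟩; exact ⟨h1, h2⟩
      · rintro ⟨h1, h2⟩; exact ⟨h1, lt_of_lt_of_le hay h1, h2⟩
    rw [h2, lintegral_indicator measurableSet_Ici,
      Measure.restrict_restrict measurableSet_Ici, h3,
      setLIntegral_congr (Ioc_ae_eq_Icc (α := ℝ) (a := y) (b := b)).symm,
      lintegral_mul_const _ hwm]
    calc (∫⁻ x in Ioc y b, w x) * k y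
        ≤ ENNReal.ofReal ((p/(p+1)) * (y - a) ^ (-((p+1)/p))) * k y :=
          mul_le_mul_left (lint_rpow_neg p a y b hp hay hyb) _
      _ = ENNReal.ofReal (p/(p+1)) * (ENNReal.ofReal (f y)) ^ (-p) := by
          rw [hk]
          simp only
          rw [show ENNReal.ofReal ((p/(p+1)) * (y - a) ^ (-((p+1)/p)))
              * ((ENNReal.ofReal (f y)) ^ (-p) * ENNReal.ofReal ((y - a) ^ ((p+1)/p)))
              = (ENNReal.ofReal ((p/(p+1)) * (y - a) ^ (-((p+1)/p)))
                  * ENNReal.ofReal ((y - a) ^ ((p+1)/p))) * (ENNReal.ofReal (f y)) ^ (-p)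
            by ring1,
            ← ENNReal.ofReal_mul (mul_nonneg (by positivity) (Real.rpow_nonneg (by linarith) _))]
          rw [show (p/(p+1)) * (y - a) ^ (-((p+1)/p)) * (y - a) ^ ((p+1)/p)
              = (p/(p+1)) * ((y - a) ^ (-((p+1)/p)) * (y - a) ^ ((p+1)/p)) by ring1,
            ← Real.rpow_add (by linarith : (0:ℝ) < y - a), neg_add_cancel, Real.rpow_zero,
            mul_one, mul_comm]
  calc ∫⁻ x in Ioc a b, w x * ∫⁻ y in Ioc a x, k y
      = ∫⁻ y in Ioc a b, ∫⁻ x in Ioc a b, Φ (x, y) := by rw [step1, swap]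
    _ ≤ ∫⁻ y in Ioc a b, ENNReal.ofReal (p/(p+1)) * (ENNReal.ofReal (f y)) ^ (-p) := step3
    _ = ENNReal.ofReal (p/(p+1)) * ∫⁻ y in Ioc a b, (ENNReal.ofReal (f y)) ^ (-p) :=
        lintegral_const_mul _ ((hfm.ennreal_ofReal).pow_const _)

end HardyAux

open HardyAux

/-- **Theorem D (Hardy-type inequality for negative exponents).**
For `p > 0`, `a < b`, and a measurable `f : [a,b] → (0,∞)`,
`∫_a^b ((1/(x-a)) ∫_a^x f)^{-p} dx ≤ ((p+1)/p)^p ∫_a^b f(x)^{-p} dx`,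
both sides interpreted in `[0,∞]`. -/
theorem hardy_negative_exponent (p a b : ℝ) (hp : 0 < p) (hab : a < b)
    (f : ℝ → ℝ) (hfm : Measurable f)
    (hfpos : ∀ x ∈ Set.Icc a b, 0 < f x) :
    (∫⁻ x in Set.Ioc a b,
        ((ENNReal.ofReal (x - a))⁻¹ * ∫⁻ y in Set.Ioc a x, ENNReal.ofReal (f y)) ^ (-p))
      ≤ ENNReal.ofReal (((p + 1) / p) ^ p) *
        ∫⁻ x in Set.Ioc a b, (ENNReal.ofReal (f x)) ^ (-p) := by
  have hp1 : (0:ℝ) < p + 1 := by linarith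
  calc (∫⁻ x in Set.Ioc a b,
        ((ENNReal.ofReal (x - a))⁻¹ * ∫⁻ y in Set.Ioc a x, ENNReal.ofReal (f y)) ^ (-p))
      ≤ ∫⁻ x in Set.Ioc a b, ENNReal.ofReal (((p+1)/p) ^ (p+1)) *
          (ENNReal.ofReal ((x - a) ^ (-(2*p+1)/p)) *
            ∫⁻ y in Ioc a x,
              (ENNReal.ofReal (f y)) ^ (-p) * ENNReal.ofReal ((y - a) ^ ((p+1)/p))) := by
        refine lintegral_mono_ae ((ae_restrict_iff' measurableSet_Ioc).mpr
          (Filter.Eventually.of_forall fun x hx => ?_))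
        exact pointwise_step p a x hp hx.1 f hfm
          (fun y hy => hfpos y ⟨hy.1.le, le_trans hy.2 hx.2⟩)
    _ = ENNReal.ofReal (((p+1)/p) ^ (p+1)) *
          ∫⁻ x in Set.Ioc a b, ENNReal.ofReal ((x - a) ^ (-(2*p+1)/p)) *
            ∫⁻ y in Ioc a x,
              (ENNReal.ofReal (f y)) ^ (-p) * ENNReal.ofReal ((y - a) ^ ((p+1)/p)) :=
        lintegral_const_mul' _ _ ENNReal.ofReal_ne_top
    _ ≤ ENNReal.ofReal (((p+1)/p) ^ (p+1)) *
          (ENNReal.ofReal (p/(p+1)) * ∫⁻ y in Ioc a b, (ENNReal.ofReal (f y)) ^ (-p)) :=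
        mul_le_mul_right (tonelli_step p a b hp hab f hfm) _
    _ = ENNReal.ofReal (((p + 1) / p) ^ p) *
          ∫⁻ x in Set.Ioc a b, (ENNReal.ofReal (f x)) ^ (-p) := by
        rw [← mul_assoc, ← ENNReal.ofReal_mul (by positivity)]
        congr 2
        have hc : (0:ℝ) < (p+1)/p := by positivity
        rw [show p + 1 = p + 1 from rfl, Real.rpow_add hc p 1, Real.rpow_one,
          mul_assoc, show (p+1)/p * (p/(p+1)) = 1 by field_simp, mul_one]
end

section
/- Let p ≥ q > 0 and let (a_n)_{n≥1} and (λ_n)_{n≥1} be sequences of positive real numbers. Set Λ_n = λ_1 + ⋯ + λ_n and A_n = λ_1 a_1 + ⋯ + λ_n a_n. Then ∑_{n=1}^∞ λ_n (A_n/Λ_n)^{-p} ≤ ((p+1)/p)^q · ∑_{n=1}^∞ λ_n (A_n/Λ_n)^{-p+q} a_n^{-q}, where both sides are allowed to be infinite. -/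
open Finset Real

-- Pointwise weighted AM-GM step
lemma copson_pointwise {p q lam x y : ℝ} (hp : 0 < p) (hq : 0 < q)
    (hlam : 0 < lam) (hx : 0 < x) (hy : 0 < y) :
    (1 + q) * (lam * x ^ (-p)) ≤ q * (p / (p + 1) * (lam * y * x ^ (-p - 1)))
      + ((p + 1) / p) ^ q * (lam * x ^ (-p + q) * y ^ (-q)) := by
  have h1q : (0:ℝ) < 1 + q := by linarith
  have hb : (0:ℝ) < (p + 1) / p := by positivity
  set P1 : ℝ := p / (p + 1) * (lam * y * x ^ (-p - 1)) with hP1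
  set P2 : ℝ := ((p + 1) / p) ^ q * (lam * x ^ (-p + q) * y ^ (-q)) with hP2
  have hP1pos : 0 < P1 := by positivity
  have hP2pos : 0 < P2 := by positivity
  have hgm := Real.geom_mean_le_arith_mean2_weighted
    (by positivity : (0:ℝ) ≤ q / (1 + q)) (by positivity : (0:ℝ) ≤ 1 / (1 + q))
    hP1pos.le hP2pos.le (by field_simp; ring)
  have hid : P1 ^ (q / (1 + q)) * P2 ^ (1 / (1 + q)) = lam * x ^ (-p) := by
    have e1 : P1 = Real.exp ((Real.log p - Real.log (p + 1)) + Real.log lam + Real.log y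
        + (-p - 1) * Real.log x) := by
      rw [Real.exp_add, Real.exp_add, Real.exp_add, Real.exp_sub,
        Real.exp_log hp, Real.exp_log (by positivity : (0:ℝ) < p + 1),
        Real.exp_log hlam, Real.exp_log hy, mul_comm (-p - 1), ← Real.rpow_def_of_pos hx]
      rw [hP1]; ring
    have e2 : P2 = Real.exp (q * (Real.log (p + 1) - Real.log p) + Real.log lam
        + (-p + q) * Real.log x + (-q) * Real.log y) := by
      rw [Real.exp_add, Real.exp_add, Real.exp_add,
        Real.exp_log hlam, mul_comm (-p + q), ← Real.rpow_def_of_pos hx,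
        mul_comm (-q), ← Real.rpow_def_of_pos hy,
        show q * (Real.log (p+1) - Real.log p) = Real.log ((p+1)/p) * q by
          rw [Real.log_div (by positivity) hp.ne']; ring,
        ← Real.rpow_def_of_pos hb]
      rw [hP2]; ring
    have e3 : lam * x ^ (-p) = Real.exp (Real.log lam + (-p) * Real.log x) := by
      rw [Real.exp_add, Real.exp_log hlam, mul_comm (-p), ← Real.rpow_def_of_pos hx]
    rw [e1, e2, e3, ← Real.exp_mul, ← Real.exp_mul, ← Real.exp_add]
    congr 1
    field_simp
    ring
  rw [hid] at hgm
  have := mul_le_mul_of_nonneg_left hgm h1q.le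
  have hrw : (1 + q) * (q / (1 + q) * P1 + 1 / (1 + q) * P2) = q * P1 + P2 := by
    field_simp
  rw [hrw] at this
  linarith [this]

-- Key telescoping step (†)
lemma copson_key_step {p L0 A0 lam al : ℝ} (hp : 0 < p) (hL0 : 0 < L0) (hA0 : 0 < A0)
    (hlam : 0 < lam) (hal : 0 < al) :
    (L0 + lam) * ((A0 + lam * al) / (L0 + lam)) ^ (-p)
      + p * lam * al * ((A0 + lam * al) / (L0 + lam)) ^ (-p - 1)
    ≤ (1 + p) * lam * ((A0 + lam * al) / (L0 + lam)) ^ (-p) + L0 * (A0 / L0) ^ (-p) := by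
  set L1 : ℝ := L0 + lam with hL1def
  set A1 : ℝ := A0 + lam * al with hA1def
  have hL1 : 0 < L1 := by positivity
  have hA1 : 0 < A1 := by positivity
  set c1 : ℝ := A1 / L1 with hc1def
  have hc1 : 0 < c1 := by positivity
  set w : ℝ := L0 * A1 / (L1 * A0) with hwdef
  have hw : 0 < w := by positivity
  have hbern : 1 + (1 + p) * (w - 1) ≤ w ^ (1 + p) := by
    have := one_add_mul_self_le_rpow_one_add (s := w - 1) (by linarith) (p := 1 + p) (by linarith)
    simpa using this
  set X : ℝ := c1 ^ (-p) with hXdef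
  set Y : ℝ := c1 ^ (-p - 1) with hYdef
  have hX : 0 < X := rpow_pos_of_pos hc1 _
  have hY : 0 < Y := rpow_pos_of_pos hc1 _
  have hXY : c1 * Y = X := by
    rw [hXdef, hYdef, ← Real.rpow_one_add' hc1.le (by intro h; linarith)]
    ring_nf
  have hXY' : A1 * Y = L1 * X := by
    have : L1 * (c1 * Y) = L1 * X := by rw [hXY]
    rw [hc1def] at this
    field_simp at this
    linarith [this]
  set M : ℝ := (A0 / A1) * (L1 * X) with hMdef
  have hM : 0 ≤ M := by positivity
  have hmul := mul_le_mul_of_nonneg_right hbern hM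
  -- E1
  have E1 : (1 + (1 + p) * (w - 1)) * M
      = L1 * X + p * lam * al * Y - (1 + p) * lam * X := by
    rw [hMdef, hwdef, hA1def, hL1def]
    have h1 : A0 + lam * al ≠ 0 := by rw [← hA1def]; positivity
    have h2 : L0 + lam ≠ 0 := by rw [← hL1def]; positivity
    field_simp
    rw [hA1def, hL1def] at hXY'
    linear_combination (-(p * lam * al)) * hXY'
  -- E2
  have E2 : w ^ (1 + p) * M = L0 * (A0 / L0) ^ (-p) := by
    have hw1p : w ^ (1 + p) = w * w ^ p := by
      rw [Real.rpow_add hw, Real.rpow_one]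
    have hwX : w ^ p * X = (A0 / L0) ^ (-p) := by
      have hX' : X = (L1 / A1) ^ p := by
        rw [hXdef, hc1def, Real.rpow_neg (by positivity), ← Real.inv_rpow (by positivity)]
        congr 1
        field_simp
      have h0 : (A0 / L0) ^ (-p) = (L0 / A0) ^ p := by
        rw [Real.rpow_neg (by positivity), ← Real.inv_rpow (by positivity)]
        congr 1
        field_simp
      rw [hX', h0, ← Real.mul_rpow (by positivity) (by positivity)]
      congr 1
      rw [hwdef]
      field_simp
    calc w ^ (1 + p) * M = (w * (A0 / A1) * L1) * (w ^ p * X) := by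
          rw [hw1p, hMdef]; ring
      _ = L0 * (A0 / L0) ^ (-p) := by
          rw [hwX, hwdef]
          have : L0 * A1 / (L1 * A0) * (A0 / A1) * L1 = L0 := by field_simp
          rw [this]
  linarith [E1 ▸ E2 ▸ hmul]

-- Telescoped inequality (Lemma A)
lemma copson_lemA (p : ℝ) (hp : 0 < p) (a l : ℕ → ℝ) (ha : ∀ n, 0 < a n) (hl : ∀ n, 0 < l n)
    (N : ℕ) :
    (∑ i ∈ range (N + 1), l i) *
        ((∑ i ∈ range (N + 1), l i * a i) / (∑ i ∈ range (N + 1), l i)) ^ (-p)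
      + p * ∑ n ∈ range (N + 1), l n * a n *
          ((∑ i ∈ range (n + 1), l i * a i) / (∑ i ∈ range (n + 1), l i)) ^ (-p - 1)
    ≤ (1 + p) * ∑ n ∈ range (N + 1), l n *
        ((∑ i ∈ range (n + 1), l i * a i) / (∑ i ∈ range (n + 1), l i)) ^ (-p) := by
  induction N with
  | zero =>
      simp only [zero_add, Finset.sum_range_one]
      have h0 : l 0 * a 0 / l 0 = a 0 := mul_div_cancel_left₀ (a 0) (hl 0).ne' 
      rw [h0]
      have hXY : a 0 * a 0 ^ (-p - 1) = a 0 ^ (-p) := by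
        nth_rewrite 1 [← Real.rpow_one (a 0)]
        rw [← Real.rpow_add (ha 0)]
        ring_nf
      have h2 : l 0 * a 0 * a 0 ^ (-p - 1) = l 0 * a 0 ^ (-p) := by
        rw [mul_assoc, hXY]
      rw [h2]
      have : (1 + p) * (l 0 * a 0 ^ (-p)) = l 0 * a 0 ^ (-p) + p * (l 0 * a 0 ^ (-p)) := by ring
      rw [this]
  | succ N IH =>
      have hL0 : 0 < ∑ i ∈ range (N + 1), l i :=
        Finset.sum_pos (fun i _ => hl i) Finset.nonempty_range_add_one
      have hA0 : 0 < ∑ i ∈ range (N + 1), l i * a i :=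
        Finset.sum_pos (fun i _ => mul_pos (hl i) (ha i)) Finset.nonempty_range_add_one
      have key := copson_key_step (p := p) hp hL0 hA0 (hl (N + 1)) (ha (N + 1))
      rw [Finset.sum_range_succ (fun n => l n * a n *
            ((∑ i ∈ range (n + 1), l i * a i) / (∑ i ∈ range (n + 1), l i)) ^ (-p - 1)) (N + 1),
          Finset.sum_range_succ (fun n => l n *
            ((∑ i ∈ range (n + 1), l i * a i) / (∑ i ∈ range (n + 1), l i)) ^ (-p)) (N + 1),
          Finset.sum_range_succ l (N + 1), Finset.sum_range_succ (fun i => l i * a i) (N + 1)]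
      linarith [key, IH]

/-- **Theorem 2.** For `p ≥ q > 0` and positive sequences `(aₙ)`, `(λₙ)`, with
`Λₙ = λ₁ + ⋯ + λₙ` and `Aₙ = λ₁a₁ + ⋯ + λₙaₙ`,
`∑ λₙ (Aₙ/Λₙ)^{-p} ≤ ((p+1)/p)^q ∑ λₙ (Aₙ/Λₙ)^{-p+q} aₙ^{-q}`,
both sides taken in `[0,∞]`. -/
theorem copson_negative_exponent (p q : ℝ) (hq : 0 < q) (hpq : q ≤ p)
    (a l : ℕ → ℝ) (ha : ∀ n, 0 < a n) (hl : ∀ n, 0 < l n) :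
    (∑' n : ℕ, ENNReal.ofReal (l n *
        ((∑ i ∈ Finset.range (n + 1), l i * a i) / (∑ i ∈ Finset.range (n + 1), l i)) ^ (-p)))
      ≤ ENNReal.ofReal (((p + 1) / p) ^ q) *
        ∑' n : ℕ, ENNReal.ofReal (l n *
          ((∑ i ∈ Finset.range (n + 1), l i * a i) / (∑ i ∈ Finset.range (n + 1), l i)) ^ (-p + q)
            * (a n) ^ (-q)) := by
  have hp : 0 < p := lt_of_lt_of_le hq hpq
  set c : ℕ → ℝ := fun n => (∑ i ∈ range (n + 1), l i * a i) / (∑ i ∈ range (n + 1), l i)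
    with hc
  have hcpos : ∀ n, 0 < c n := fun n =>
    div_pos (Finset.sum_pos (fun i _ => mul_pos (hl i) (ha i)) Finset.nonempty_range_add_one)
      (Finset.sum_pos (fun i _ => hl i) Finset.nonempty_range_add_one)
  set f : ℕ → ℝ := fun n => l n * (c n) ^ (-p) with hf
  set g : ℕ → ℝ := fun n => l n * (c n) ^ (-p + q) * (a n) ^ (-q) with hg
  have hfpos : ∀ n, 0 < f n := fun n =>
    mul_pos (hl n) (Real.rpow_pos_of_pos (hcpos n) _)
  have hgpos : ∀ n, 0 < g n := fun n =>
    mul_pos (mul_pos (hl n) (Real.rpow_pos_of_pos (hcpos n) _))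
      (Real.rpow_pos_of_pos (ha n) _)
  have hCpos : (0:ℝ) < ((p + 1) / p) ^ q := Real.rpow_pos_of_pos (by positivity) q
  -- finite-sum version
  have main : ∀ N : ℕ, ∑ n ∈ range N, f n ≤ ((p + 1) / p) ^ q * ∑ n ∈ range N, g n := by
    intro N
    have hpt : ∀ n ∈ range N, (1 + q) * f n ≤
        q * (p / (p + 1) * (l n * a n * (c n) ^ (-p - 1))) + ((p + 1) / p) ^ q * g n :=
      fun n _ => copson_pointwise hp hq (hl n) (hcpos n) (ha n)
    have hsum := Finset.sum_le_sum hpt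
    rw [← Finset.mul_sum] at hsum
    have hsplit : ∑ n ∈ range N,
        (q * (p / (p + 1) * (l n * a n * (c n) ^ (-p - 1))) + ((p + 1) / p) ^ q * g n)
        = q * (p / (p + 1)) * (∑ n ∈ range N, l n * a n * (c n) ^ (-p - 1))
          + ((p + 1) / p) ^ q * ∑ n ∈ range N, g n := by
      rw [Finset.sum_add_distrib, ← Finset.mul_sum, ← Finset.mul_sum, ← Finset.mul_sum]
      ring
    rw [hsplit] at hsum
    have hA : p * (∑ n ∈ range N, l n * a n * (c n) ^ (-p - 1))
        ≤ (1 + p) * ∑ n ∈ range N, f n := by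
      cases N with
      | zero => simp
      | succ M =>
          have := copson_lemA p hp a l ha hl M
          have hL0 : 0 < ∑ i ∈ range (M + 1), l i :=
            Finset.sum_pos (fun i _ => hl i) Finset.nonempty_range_add_one
          have hX : 0 < ((∑ i ∈ range (M + 1), l i * a i) / (∑ i ∈ range (M + 1), l i)) ^ (-p) :=
            Real.rpow_pos_of_pos (hcpos M) _
          nlinarith [this, mul_pos hL0 hX]
    -- combine
    have hstep : q * (p / (p + 1)) * (∑ n ∈ range N, l n * a n * (c n) ^ (-p - 1))
        ≤ q * ∑ n ∈ range N, f n := by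
      have h1 : p / (p + 1) * (∑ n ∈ range N, l n * a n * (c n) ^ (-p - 1))
          ≤ ∑ n ∈ range N, f n := by
        rw [div_mul_eq_mul_div, div_le_iff₀ (by positivity : (0:ℝ) < p + 1)]
        nlinarith [hA]
      nlinarith [h1, hq]
    linarith [hsum, hstep]
  -- pass to tsum in ℝ≥0∞
  rw [ENNReal.tsum_eq_iSup_sum]
  apply iSup_le
  intro s
  obtain ⟨N, hN⟩ := s.exists_nat_subset_range
  calc ∑ n ∈ s, ENNReal.ofReal (f n)
      ≤ ∑ n ∈ range N, ENNReal.ofReal (f n) :=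
        Finset.sum_le_sum_of_subset hN
    _ = ENNReal.ofReal (∑ n ∈ range N, f n) :=
        (ENNReal.ofReal_sum_of_nonneg (fun n _ => (hfpos n).le)).symm
    _ ≤ ENNReal.ofReal (((p + 1) / p) ^ q * ∑ n ∈ range N, g n) :=
        ENNReal.ofReal_le_ofReal (main N)
    _ = ENNReal.ofReal (((p + 1) / p) ^ q) * ENNReal.ofReal (∑ n ∈ range N, g n) :=
        ENNReal.ofReal_mul hCpos.le
    _ ≤ ENNReal.ofReal (((p + 1) / p) ^ q) * ∑' n : ℕ, ENNReal.ofReal (g n) := by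
        gcongr
        rw [ENNReal.ofReal_sum_of_nonneg (fun n _ => (hgpos n).le)]
        exact ENNReal.sum_le_tsum _
end

section
/- Let p ≥ q > 0, let N be a positive integer, and let a_1,…,a_N and λ_1,…,λ_N be positive real numbers. Set Λ_n = λ_1 + ⋯ + λ_n and A_n = λ_1 a_1 + ⋯ + λ_n a_n for 1 ≤ n ≤ N. Then ∑_{n=1}^N λ_n (A_n/Λ_n)^{-p} ≤ ((p+1)/p)^q · ∑_{n=1}^N λ_n (A_n/Λ_n)^{-p+q} a_n^{-q}. -/
open Finset

lemma lemC (p : ℝ) (hp : 0 < p) {x y : ℝ} (hx : 0 < x) (hy : 0 < y) :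
    (1 + p) * x ^ (-p) ≤ y ^ (-p) + p * (x ^ (-p - 1) * y) := by
  have h1p : (0:ℝ) < 1 + p := by linarith
  have hw : (1/(1+p)) + (p/(1+p)) = 1 := by field_simp
  have hgm := Real.geom_mean_le_arith_mean2_weighted
    (by positivity : (0:ℝ) ≤ 1/(1+p)) (by positivity : (0:ℝ) ≤ p/(1+p))
    (by positivity : (0:ℝ) ≤ y ^ (-p)) (by positivity : (0:ℝ) ≤ x ^ (-p-1) * y) hw
  have heq : (y ^ (-p)) ^ (1/(1+p)) * (x ^ (-p-1) * y) ^ (p/(1+p)) = x ^ (-p) := by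
    rw [Real.mul_rpow (by positivity) hy.le, ← Real.rpow_mul hy.le, ← Real.rpow_mul hx.le]
    rw [show (y:ℝ) ^ (-p * (1/(1+p))) * (x ^ ((-p-1) * (p/(1+p))) * y ^ (p/(1+p)))
        = x ^ ((-p-1) * (p/(1+p))) * (y ^ (-p * (1/(1+p))) * y ^ (p/(1+p))) from by ring,
      ← Real.rpow_add hy]
    rw [show (-p * (1/(1+p)) + p/(1+p)) = 0 from by field_simp; ring, Real.rpow_zero, mul_one]
    congr 1
    field_simp
    ring
  rw [heq] at hgm
  calc (1+p) * x ^ (-p) ≤ (1+p) * ((1/(1+p)) * y^(-p) + (p/(1+p)) * (x^(-p-1)*y)) :=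
        mul_le_mul_of_nonneg_left hgm h1p.le
    _ = y ^ (-p) + p * (x^(-p-1)*y) := by field_simp

lemma lemA0 (p q : ℝ) {x u : ℝ} (hx : 0 < x) (hu : 0 < u) (h1q : (0:ℝ) < 1 + q) :
    (u * x ^ (-p-1)) ^ (q/(1+q)) * (u ^ (-q) * x ^ (-p+q)) ^ (1/(1+q)) = x ^ (-p) := by
  rw [Real.mul_rpow hu.le (by positivity), Real.mul_rpow (by positivity) (by positivity),
    ← Real.rpow_mul hx.le, ← Real.rpow_mul hu.le, ← Real.rpow_mul hx.le]
  rw [show u ^ (q/(1+q)) * x ^ ((-p-1) * (q/(1+q))) * (u ^ (-q * (1/(1+q))) * x ^ ((-p+q) * (1/(1+q))))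
      = (u ^ (q/(1+q)) * u ^ (-q * (1/(1+q)))) * (x ^ ((-p-1) * (q/(1+q))) * x ^ ((-p+q) * (1/(1+q)))) from by ring,
    ← Real.rpow_add hu, ← Real.rpow_add hx]
  rw [show (q/(1+q) + -q * (1/(1+q))) = 0 from by field_simp; ring, Real.rpow_zero, one_mul]
  congr 1
  field_simp
  ring

lemma lemA (p q : ℝ) (hp : 0 < p) (hq : 0 < q) {x a : ℝ} (hx : 0 < x) (ha : 0 < a) :
    (1+q) * (p+1) * x ^ (-p) ≤
      p * q * (a * x ^ (-p-1)) + (p+1) * (((p+1)/p) ^ q * (x ^ (-p+q) * a ^ (-q))) := by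
  have h1q : (0:ℝ) < 1 + q := by linarith
  have h1p : (0:ℝ) < p + 1 := by linarith
  have hupos : (0:ℝ) < (p/(p+1)) * a := by positivity
  have hw : (q/(1+q)) + (1/(1+q)) = 1 := by field_simp; ring
  have hgm := Real.geom_mean_le_arith_mean2_weighted
    (by positivity : (0:ℝ) ≤ q/(1+q)) (by positivity : (0:ℝ) ≤ 1/(1+q))
    (by positivity : (0:ℝ) ≤ ((p/(p+1))*a) * x ^ (-p-1))
    (by positivity : (0:ℝ) ≤ ((p/(p+1))*a) ^ (-q) * x ^ (-p+q)) hw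
  rw [lemA0 p q hx hupos h1q] at hgm
  have huq : ((p/(p+1))*a) ^ (-q) = (p/(p+1)) ^ (-q) * a ^ (-q) :=
    Real.mul_rpow (by positivity) ha.le
  have hCt : ((p+1)/p) ^ q = (p/(p+1)) ^ (-q) := by
    rw [Real.rpow_neg (by positivity), ← Real.inv_rpow (by positivity), inv_div]
  calc (1+q) * (p+1) * x ^ (-p)
      ≤ (1+q) * (p+1) * ((q/(1+q)) * (((p/(p+1))*a) * x^(-p-1))
          + (1/(1+q)) * (((p/(p+1))*a)^(-q) * x^(-p+q))) :=
        mul_le_mul_of_nonneg_left hgm (by positivity)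
    _ = p * q * (a * x ^ (-p-1)) + (p+1) * (((p+1)/p) ^ q * (x ^ (-p+q) * a ^ (-q))) := by
        rw [huq, hCt]; field_simp

lemma lemB (p : ℝ) (hp : 0 < p) {L1 A1 lam aa : ℝ} (hL1 : 0 < L1) (hA1 : 0 < A1)
    (hlam : 0 < lam) (haa : 0 < aa) :
    (L1 + lam) * ((A1 + lam * aa) / (L1 + lam)) ^ (-p) - L1 * (A1 / L1) ^ (-p)
      ≤ (1 + p) * lam * ((A1 + lam * aa) / (L1 + lam)) ^ (-p)
        - p * (lam * (aa * ((A1 + lam * aa) / (L1 + lam)) ^ (-p - 1))) := by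
  have hLl : (0:ℝ) < L1 + lam := by linarith
  set X : ℝ := (A1 + lam * aa) / (L1 + lam) with hX
  have hx : (0:ℝ) < X := by rw [hX]; positivity
  have hβ : (0:ℝ) < A1 / L1 := by positivity
  have hC0 := lemC p hp hx hβ
  have hC' := mul_le_mul_of_nonneg_left hC0 hL1.le
  have h7p : p * (L1 * (X ^ (-p - 1) * (A1 / L1))) = p * (X ^ (-p - 1) * A1) := by
    rw [show L1 * (X ^ (-p - 1) * (A1 / L1)) = X ^ (-p - 1) * (L1 * (A1 / L1)) from by ring,
      mul_div_cancel₀ _ (ne_of_gt hL1)]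
  have hxx : X ^ (-p - 1) * X = X ^ (-p) := by
    rw [← Real.rpow_add_one (ne_of_gt hx)]; norm_num
  have hxL : (L1 + lam) * X = A1 + lam * aa := by
    rw [hX]; field_simp
  have h8p : p * (X ^ (-p - 1) * (A1 + lam * aa)) = p * ((L1 + lam) * X ^ (-p)) := by
    rw [← hxL, show X ^ (-p - 1) * ((L1 + lam) * X) = (X ^ (-p - 1) * X) * (L1 + lam)
      from by ring, hxx]
    ring
  nlinarith [hC', h7p, h8p]

set_option maxHeartbeats 1000000 in
/-- **Theorem 2, finite form (inequality (2.1)).** For `p ≥ q > 0`, `N ≥ 1` and positive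
reals `a₁,…,a_N`, `λ₁,…,λ_N`, with `Λₙ = λ₁ + ⋯ + λₙ` and `Aₙ = λ₁a₁ + ⋯ + λₙaₙ`,
`∑_{n=1}^N λₙ (Aₙ/Λₙ)^{-p} ≤ ((p+1)/p)^q ∑_{n=1}^N λₙ (Aₙ/Λₙ)^{-p+q} aₙ^{-q}`. -/
theorem copson_negative_exponent_finite (p q : ℝ) (hq : 0 < q) (hpq : q ≤ p)
    (N : ℕ) (hN : 0 < N) (a l : ℕ → ℝ)
    (ha : ∀ n < N, 0 < a n) (hl : ∀ n < N, 0 < l n) :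
    (∑ n ∈ Finset.range N, l n *
        ((∑ i ∈ Finset.range (n + 1), l i * a i) / (∑ i ∈ Finset.range (n + 1), l i)) ^ (-p))
      ≤ ((p + 1) / p) ^ q *
        ∑ n ∈ Finset.range N, l n *
          ((∑ i ∈ Finset.range (n + 1), l i * a i) / (∑ i ∈ Finset.range (n + 1), l i)) ^ (-p + q)
            * (a n) ^ (-q) := by
  have hp : 0 < p := lt_of_lt_of_le hq hpq
  have h1q : (0:ℝ) < 1 + q := by linarith
  have h1p : (0:ℝ) < p + 1 := by linarith
  set g : ℕ → ℝ := fun k =>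
    (∑ i ∈ range k, l i) * ((∑ i ∈ range k, l i * a i) / (∑ i ∈ range k, l i)) ^ (-p) with hg
  have hLpos : ∀ n < N, 0 < ∑ i ∈ range (n+1), l i := by
    intro n hn
    exact Finset.sum_pos (fun i hi => hl i (by have := mem_range.1 hi; omega))
      nonempty_range_add_one
  have hApos : ∀ n < N, 0 < ∑ i ∈ range (n+1), l i * a i := by
    intro n hn
    exact Finset.sum_pos (fun i hi => mul_pos (hl i (by have := mem_range.1 hi; omega))
      (ha i (by have := mem_range.1 hi; omega))) nonempty_range_add_one
  have key : ∀ n ∈ range N,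
      ((1+q)*(p+1)) * (l n *
        ((∑ i ∈ range (n+1), l i * a i) / (∑ i ∈ range (n+1), l i)) ^ (-p))
        + (q*(1+q)) * (g (n+1) - g n)
      ≤ ((1+q)*(p+1)*(((p+1)/p) ^ q)) * (l n *
        ((∑ i ∈ range (n+1), l i * a i) / (∑ i ∈ range (n+1), l i)) ^ (-p+q) * a n ^ (-q)) := by
    intro n hn
    rw [mem_range] at hn
    have hln := hl n hn
    have han := ha n hn
    have hxpos : 0 < (∑ i ∈ range (n+1), l i * a i) / (∑ i ∈ range (n+1), l i) :=
      div_pos (hApos n hn) (hLpos n hn)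
    have hAn := lemA p q hp hq hxpos han
    have h1 := mul_le_mul_of_nonneg_left hAn
      (by positivity : (0:ℝ) ≤ (1+q) * l n)
    have hBn : g (n+1) - g n ≤
        (1+p) * l n * ((∑ i ∈ range (n+1), l i * a i) / (∑ i ∈ range (n+1), l i)) ^ (-p)
        - p * (l n * (a n *
          ((∑ i ∈ range (n+1), l i * a i) / (∑ i ∈ range (n+1), l i)) ^ (-p-1))) := by
      rcases n with _ | m
      · simp only [show (0:ℕ)+1 = 1 from rfl]
        have hg0 : g 0 = 0 := by simp [hg]
        have hα0 : (∑ i ∈ range 1, l i * a i) / (∑ i ∈ range 1, l i) = a 0 := by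
          rw [Finset.sum_range_one, Finset.sum_range_one,
            mul_div_cancel_left₀ _ (ne_of_gt hln)]
        have hg1 : g 1 = l 0 * a 0 ^ (-p) := by
          simp only [hg]
          rw [Finset.sum_range_one, Finset.sum_range_one,
            mul_div_cancel_left₀ _ (ne_of_gt hln)]
        rw [hg0, hg1, hα0]
        have h6p : p * (l 0 * (a 0 * a 0 ^ (-p-1))) = p * (l 0 * a 0 ^ (-p)) := by
          rw [show a 0 * a 0 ^ (-p-1) = a 0 ^ (-p-1) * a 0 from by ring,
            ← Real.rpow_add_one (ne_of_gt han)]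
          norm_num
        linarith [h6p]
      · -- n = m+1
        have hm : m < N := by omega
        simp only [hg]
        rw [Finset.sum_range_succ l (m+1), Finset.sum_range_succ (fun i => l i * a i) (m+1)]
        exact lemB p hp (hLpos m hm) (hApos m hm) (hl _ hn) (ha _ hn)
    have h2 := mul_le_mul_of_nonneg_left hBn (by positivity : (0:ℝ) ≤ q*(1+q))
    linarith [h1, h2]
  have hsum := Finset.sum_le_sum key
  rw [Finset.sum_add_distrib, ← Finset.mul_sum, ← Finset.mul_sum, ← Finset.mul_sum,
    Finset.sum_range_sub g] at hsum
  have hg0 : g 0 = 0 := by simp [hg]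
  have hgN : 0 ≤ g N := by
    apply mul_nonneg (Finset.sum_nonneg fun i hi => (hl i (mem_range.1 hi)).le)
    exact Real.rpow_nonneg (div_nonneg
      (Finset.sum_nonneg fun i hi => (mul_pos (hl i (mem_range.1 hi)) (ha i (mem_range.1 hi))).le)
      (Finset.sum_nonneg fun i hi => (hl i (mem_range.1 hi)).le)) _
  rw [hg0, sub_zero] at hsum
  have hq1q : 0 ≤ (q*(1+q)) * g N := by positivity
  have h10 : ((1+q)*(p+1)) * (∑ n ∈ range N, l n *
      ((∑ i ∈ range (n+1), l i * a i) / (∑ i ∈ range (n+1), l i)) ^ (-p))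
      ≤ ((1+q)*(p+1)) * ((((p+1)/p) ^ q) * ∑ n ∈ range N, l n *
      ((∑ i ∈ range (n+1), l i * a i) / (∑ i ∈ range (n+1), l i)) ^ (-p+q) * a n ^ (-q)) := by
    rw [mul_assoc] at hsum
    linarith [hsum, hq1q]
  exact le_of_mul_le_mul_left h10 (by positivity)
end

section
/- Let p > 0 and let 0 < q_1 ≤ q_2 ≤ p. Let (a_n)_{n≥1} and (λ_n)_{n≥1} be sequences of positive real numbers, and set Λ_n = λ_1 + ⋯ + λ_n and A_n = λ_1 a_1 + ⋯ + λ_n a_n. Then ∑_{n=1}^∞ λ_n (A_n/Λ_n)^{-p+q_1} a_n^{-q_1} ≤ ((p+1)/p)^{q_2 - q_1} · ∑_{n=1}^∞ λ_n (A_n/Λ_n)^{-p+q_2} a_n^{-q_2}, where both sides are allowed to be infinite. -/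
open Finset

open MeasureTheory
open scoped ENNReal

section CopsonAux

lemma tsum_holder (f g : ℕ → ℝ≥0∞) {s t : ℝ} (hs : 0 < s) (ht : 0 < t) (hst : s + t = 1) :
    ∑' n, f n ^ s * g n ^ t ≤ (∑' n, f n) ^ s * (∑' n, g n) ^ t := by
  have hconj : (1/s).HolderConjugate (1/t) := by
    rw [Real.holderConjugate_iff]
    constructor
    · rw [lt_div_iff₀ hs]; linarith
    · rw [one_div, one_div, inv_inv, inv_inv]; exact hst
  have h := ENNReal.lintegral_mul_le_Lp_mul_Lq (Measure.count : Measure ℕ) hconj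
      (f := fun n => f n ^ s) (g := fun n => g n ^ t)
      (measurable_of_countable _).aemeasurable (measurable_of_countable _).aemeasurable
  simp only [Pi.mul_apply, lintegral_count] at h
  have e1 : ∀ (x : ℝ≥0∞) (u : ℝ), u ≠ 0 → (x ^ u) ^ (1/u) = x := by
    intro x u hu
    rw [← ENNReal.rpow_mul, mul_one_div, div_self hu, ENNReal.rpow_one]
  calc ∑' n, f n ^ s * g n ^ t ≤ _ := h
  _ = (∑' n, f n) ^ s * (∑' n, g n) ^ t := by
      rw [one_div_one_div, one_div_one_div]
      congr 1
      · congr 1; apply tsum_congr; intro n; exact e1 _ _ hs.ne'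
      · congr 1; apply tsum_congr; intro n; exact e1 _ _ ht.ne'

lemma copson_abstract {p q₁ q₂ : ℝ} (hq₁ : 0 < q₁) (hq₁₂ : q₁ ≤ q₂) (hq₂p : q₂ ≤ p) (hp : 0 < p)
    (W P : ℕ → ℝ≥0∞) (hW0 : ∀ n, W n ≠ 0) (hWt : ∀ n, W n ≠ ⊤)
    (hP0 : ∀ n, P n ≠ 0) (hPt : ∀ n, P n ≠ ⊤)
    (hkey : ∀ N : ℕ, ∑ n ∈ Finset.range N, W n * P n
      ≤ ENNReal.ofReal ((p+1)/p) * ∑ n ∈ Finset.range N, W n) :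
    ∑' n, W n * P n ^ (-q₁)
      ≤ ENNReal.ofReal (((p+1)/p) ^ (q₂ - q₁)) * ∑' n, W n * P n ^ (-q₂) := by
  have hq₂ : 0 < q₂ := hq₁.trans_le hq₁₂
  have hq₂ne : q₂ ≠ 0 := hq₂.ne'
  set c : ℝ := (p+1)/p with hc_def
  have hc0 : 0 < c := by positivity
  set C : ℝ≥0∞ := ENNReal.ofReal c with hC_def
  have hC0 : C ≠ 0 := by simp [hC_def, ENNReal.ofReal_eq_zero, not_le, hc0]
  have hCt : C ≠ ⊤ := ENNReal.ofReal_ne_top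
  have hPq : ∀ n (q : ℝ), P n ^ q ≠ ⊤ := by
    intro n q h
    rcases ENNReal.rpow_eq_top_iff.mp h with ⟨h1, _⟩ | ⟨h1, _⟩
    exacts [hP0 n h1, hPt n h1]
  -- θ for the zeroth Hölder
  set θ : ℝ := q₂ / (q₂ + 1) with hθ_def
  have hθpos : 0 < θ := by positivity
  have h1θ : 1 - θ = 1 / (q₂ + 1) := by
    rw [hθ_def]; field_simp; ring
  have h1θpos : 0 < 1 - θ := by rw [h1θ]; positivity
  -- Lemma B truncated: ∑_{<N} W ≤ C^q₂ * ∑_{<N} W * P^{-q₂}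
  have lemB : ∀ N : ℕ, ∑ n ∈ Finset.range N, W n
      ≤ C ^ q₂ * ∑ n ∈ Finset.range N, W n * P n ^ (-q₂) := by
    intro N
    set X : ℝ≥0∞ := ∑ n ∈ Finset.range N, W n with hX_def
    set Y : ℝ≥0∞ := ∑ n ∈ Finset.range N, W n * P n ^ (-q₂) with hY_def
    by_cases hX0 : X = 0
    · rw [hX0]; exact zero_le
    have hXt : X ≠ ⊤ := by
      rw [hX_def, ← lt_top_iff_ne_top, ENNReal.sum_lt_top]
      exact fun n _ => (hWt n).lt_top
    have hYt : Y ≠ ⊤ := by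
      rw [hY_def, ← lt_top_iff_ne_top, ENNReal.sum_lt_top]
      exact fun n _ => (ENNReal.mul_ne_top (hWt n) (hPq n _)).lt_top
    -- Hölder with truncation
    set f : ℕ → ℝ≥0∞ := fun n => if n ∈ Finset.range N then W n * P n else 0 with hf_def
    set g : ℕ → ℝ≥0∞ := fun n => if n ∈ Finset.range N then W n * P n ^ (-q₂) else 0 with hg_def
    have hfg : ∀ n, f n ^ θ * g n ^ (1-θ) = (if n ∈ Finset.range N then W n else 0) := by
      intro n
      by_cases h : n ∈ Finset.range N
      · show (if n ∈ Finset.range N then W n * P n else 0) ^ θ *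
          (if n ∈ Finset.range N then W n * P n ^ (-q₂) else 0) ^ (1-θ) = _
        rw [if_pos h, if_pos h, if_pos h,
          ENNReal.mul_rpow_of_ne_top (hWt n) (hPt n),
          ENNReal.mul_rpow_of_ne_top (hWt n) (hPq n _), ← ENNReal.rpow_mul,
          mul_assoc, mul_comm (P n ^ θ), mul_assoc, ← mul_assoc,
          ← ENNReal.rpow_add _ _ (hW0 n) (hWt n), ← ENNReal.rpow_add _ _ (hP0 n) (hPt n)]
        have e1 : θ + (1 - θ) = 1 := by ring
        have e2 : -q₂ * (1 - θ) + θ = 0 := by rw [h1θ, hθ_def]; field_simp; ring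
        rw [e1, e2, ENNReal.rpow_one, ENNReal.rpow_zero, mul_one]
      · show (if n ∈ Finset.range N then W n * P n else 0) ^ θ *
          (if n ∈ Finset.range N then W n * P n ^ (-q₂) else 0) ^ (1-θ) = _
        rw [if_neg h, if_neg h, ENNReal.zero_rpow_of_pos hθpos, zero_mul, if_neg h]
    have hH := tsum_holder f g hθpos h1θpos (by ring)
    have hsf : ∑' n, f n = ∑ n ∈ Finset.range N, W n * P n := by
      rw [tsum_eq_sum (s := Finset.range N) (fun b hb => if_neg hb)]
      exact Finset.sum_congr rfl fun n hn => if_pos hn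
    have hsg : ∑' n, g n = Y := by
      rw [tsum_eq_sum (s := Finset.range N) (fun b hb => if_neg hb)]
      exact Finset.sum_congr rfl fun n hn => if_pos hn
    have hsfg : ∑' n, f n ^ θ * g n ^ (1-θ) = X := by
      rw [tsum_congr hfg, tsum_eq_sum (s := Finset.range N) (fun b hb => if_neg hb)]
      exact Finset.sum_congr rfl fun n hn => if_pos hn
    rw [hsfg, hsf, hsg] at hH
    have hH2 : X ≤ (C * X) ^ θ * Y ^ (1-θ) := by
      refine hH.trans ?_
      gcongr
      exact hkey N
    have hH3 : X ≤ C ^ θ * X ^ θ * Y ^ (1-θ) := by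
      rwa [ENNReal.mul_rpow_of_ne_top hCt hXt] at hH2
    have hXθ0 : X ^ (-θ) ≠ ⊤ := by
      intro h
      rcases ENNReal.rpow_eq_top_iff.mp h with ⟨h1, _⟩ | ⟨h1, _⟩
      exacts [hX0 h1, hXt h1]
    have hcomb : X ^ (1-θ) = X * X ^ (-θ) := by
      rw [show (1:ℝ)-θ = 1 + -θ by ring, ENNReal.rpow_add _ _ hX0 hXt, ENNReal.rpow_one]
    have hzero : X ^ θ * X ^ (-θ) = 1 := by
      rw [← ENNReal.rpow_add _ _ hX0 hXt, add_neg_cancel, ENNReal.rpow_zero]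
    have hstep : X ^ (1-θ) ≤ C ^ θ * Y ^ (1-θ) := by
      calc X ^ (1-θ) = X * X ^ (-θ) := hcomb
      _ ≤ C ^ θ * X ^ θ * Y ^ (1-θ) * X ^ (-θ) := mul_le_mul_left hH3 _
      _ = C ^ θ * Y ^ (1-θ) * (X ^ θ * X ^ (-θ)) := by ring
      _ = C ^ θ * Y ^ (1-θ) := by rw [hzero, mul_one]
    have hfin := ENNReal.rpow_le_rpow hstep (by positivity : (0:ℝ) ≤ q₂ + 1)
    rw [ENNReal.mul_rpow_of_ne_top
        (ENNReal.rpow_ne_top_of_nonneg hθpos.le hCt)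
        (ENNReal.rpow_ne_top_of_nonneg h1θpos.le hYt),
        ← ENNReal.rpow_mul, ← ENNReal.rpow_mul, ← ENNReal.rpow_mul] at hfin
    have e3 : (1 - θ) * (q₂ + 1) = 1 := by rw [h1θ]; field_simp
    have e4 : θ * (q₂ + 1) = q₂ := by rw [hθ_def]; field_simp
    rwa [e3, e4, ENNReal.rpow_one, ENNReal.rpow_one] at hfin
  -- Lemma B, full sums
  have lemB' : ∑' n, W n ≤ C ^ q₂ * ∑' n, W n * P n ^ (-q₂) := by
    rw [ENNReal.tsum_eq_iSup_sum]
    apply iSup_le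
    intro F
    obtain ⟨N, hFN⟩ : ∃ N, F ⊆ Finset.range N :=
      ⟨(F.sup id) + 1, fun i hi =>
        Finset.mem_range.mpr (Nat.lt_succ_of_le (Finset.le_sup (f := id) hi))⟩
    calc ∑ n ∈ F, W n ≤ ∑ n ∈ Finset.range N, W n :=
          Finset.sum_le_sum_of_subset hFN
    _ ≤ C ^ q₂ * ∑ n ∈ Finset.range N, W n * P n ^ (-q₂) := lemB N
    _ ≤ C ^ q₂ * ∑' n, W n * P n ^ (-q₂) :=
          mul_le_mul_right (ENNReal.sum_le_tsum _) _
  -- final step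
  have hCq : ENNReal.ofReal (c ^ (q₂ - q₁)) = C ^ (q₂ - q₁) :=
    (ENNReal.ofReal_rpow_of_pos hc0).symm
  rcases eq_or_lt_of_le hq₁₂ with rfl | hlt
  · rw [sub_self, Real.rpow_zero, ENNReal.ofReal_one, one_mul]
  · set θ' : ℝ := q₁ / q₂ with hθ'_def
    have hθ'pos : 0 < θ' := by positivity
    have hθ'lt : θ' < 1 := by rw [hθ'_def, div_lt_one hq₂]; exact hlt
    have h1θ' : 0 < 1 - θ' := by linarith
    set Y : ℝ≥0∞ := ∑' n, W n * P n ^ (-q₂) with hY_def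
    have hY0 : Y ≠ 0 := by
      have hterm0 : W 0 * P 0 ^ (-q₂) ≠ 0 := by
        refine mul_ne_zero (hW0 0) fun h => ?_
        rcases ENNReal.rpow_eq_zero_iff.mp h with ⟨h1, _⟩ | ⟨h1, _⟩
        exacts [hP0 0 h1, hPt 0 h1]
      intro h
      exact hterm0 (le_antisymm (h ▸ ENNReal.le_tsum 0) zero_le)
    rw [hCq]
    by_cases hYt : Y = ⊤
    · rw [hYt, ENNReal.mul_top]
      · exact le_top
      · intro h
        rcases ENNReal.rpow_eq_zero_iff.mp h with ⟨h1, _⟩ | ⟨h1, _⟩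
        exacts [hC0 h1, hCt h1]
    have hfact : ∀ n, W n * P n ^ (-q₁) = (W n) ^ (1 - θ') * (W n * P n ^ (-q₂)) ^ θ' := by
      intro n
      rw [ENNReal.mul_rpow_of_ne_top (hWt n) (hPq n _), ← ENNReal.rpow_mul,
        ← mul_assoc, ← ENNReal.rpow_add _ _ (hW0 n) (hWt n)]
      have e5 : (1 - θ') + θ' = 1 := by ring
      have e6 : -q₂ * θ' = -q₁ := by rw [hθ'_def]; field_simp
      rw [e5, e6, ENNReal.rpow_one]
    calc ∑' n, W n * P n ^ (-q₁)
        = ∑' n, (W n) ^ (1-θ') * (W n * P n ^ (-q₂)) ^ θ' := tsum_congr hfact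
      _ ≤ (∑' n, W n) ^ (1-θ') * Y ^ θ' := tsum_holder _ _ h1θ' hθ'pos (by ring)
      _ ≤ (C ^ q₂ * Y) ^ (1-θ') * Y ^ θ' :=
          mul_le_mul_left (ENNReal.rpow_le_rpow lemB' h1θ'.le) _
      _ = C ^ (q₂ * (1-θ')) * (Y ^ (1-θ') * Y ^ θ') := by
          rw [ENNReal.mul_rpow_of_ne_top (ENNReal.rpow_ne_top_of_nonneg hq₂.le hCt) hYt,
            ← ENNReal.rpow_mul, mul_assoc]
      _ = C ^ (q₂ - q₁) * Y := by
          rw [← ENNReal.rpow_add _ _ hY0 hYt]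
          congr 1
          · congr 1; rw [hθ'_def]; field_simp
          · rw [show (1-θ')+θ' = (1:ℝ) by ring, ENNReal.rpow_one]

lemma tangent_aux {p s y : ℝ} (hp : 0 < p) (hs : 0 < s) (hy : 0 ≤ y) :
    s ^ (p+1) + (p+1) * s ^ p * (y - s) ≤ y ^ (p+1) := by
  have hb := one_add_mul_self_le_rpow_one_add (s := y/s - 1) (p := p+1)
      (by have : 0 ≤ y / s := div_nonneg hy hs.le; linarith) (by linarith)
  rw [add_sub_cancel] at hb
  have hsp : (0:ℝ) < s ^ (p+1) := Real.rpow_pos_of_pos hs _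
  have h2 : (1 + (p+1)*(y/s-1)) * s^(p+1) ≤ (y/s)^(p+1) * s^(p+1) :=
    mul_le_mul_of_nonneg_right hb hsp.le
  rw [Real.div_rpow hy hs.le, div_mul_cancel₀ _ hsp.ne'] at h2
  have hsp1 : s^(p+1) = s^p * s := Real.rpow_add_one hs.ne' p
  have hexp : (1 + (p+1)*(y/s-1)) * s^(p+1) = s^(p+1) + (p+1)*s^p*(y-s) := by
    rw [hsp1]; field_simp
  linarith [hexp ▸ h2]

lemma step_aux {p lam aa S' T' : ℝ} (hp : 0 < p) (hlam : 0 < lam) (haa : 0 < aa)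
    (hS' : 0 < S') (hT' : 0 < T') :
    (S' + lam) * ((S' + lam)/(T' + lam*aa)) ^ p
        + p * (lam * aa * ((S' + lam)/(T' + lam*aa)) ^ (p+1))
      ≤ S' * (S'/T') ^ p + (p+1) * (lam * ((S' + lam)/(T' + lam*aa)) ^ p) := by
  have hT : (0:ℝ) < T' + lam*aa := by positivity
  have hS : (0:ℝ) < S' + lam := by positivity
  set s := (S' + lam)/(T' + lam*aa) with hs_def
  set s' := S'/T' with hs'_def
  have hs : 0 < s := div_pos hS hT
  have hs' : 0 < s' := div_pos hS' hT'
  have tang := tangent_aux hp hs hs'.le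
  have hsT : s * (T' + lam*aa) = S' + lam := div_mul_cancel₀ _ hT.ne'
  have hs'T : s' * T' = S' := div_mul_cancel₀ _ hT'.ne'
  have key : (S' + lam) * s ^ p + p * (lam * aa * s ^ (p+1))
      = T' * (s^(p+1) + (p+1) * s^p * (s' - s)) + (p+1) * (lam * s^p) := by
    rw [Real.rpow_add_one hs.ne' p]
    linear_combination (p * (s^p)) * hsT - ((p+1) * (s^p)) * hs'T
  have fin : T' * (s^(p+1) + (p+1) * s^p * (s' - s)) ≤ T' * s'^(p+1) :=
    mul_le_mul_of_nonneg_left tang hT'.le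
  have last : T' * s'^(p+1) = S' * s'^p := by
    rw [Real.rpow_add_one hs'.ne' p, hs'_def]; field_simp
  linarith


end CopsonAux

/-- **Theorem 4.** For `0 < q₁ ≤ q₂ ≤ p` and positive sequences `(aₙ)`, `(λₙ)`,
with `Λₙ = λ₁ + ⋯ + λₙ` and `Aₙ = λ₁a₁ + ⋯ + λₙaₙ`,
`∑ λₙ (Aₙ/Λₙ)^{-p+q₁} aₙ^{-q₁} ≤ ((p+1)/p)^{q₂-q₁} ∑ λₙ (Aₙ/Λₙ)^{-p+q₂} aₙ^{-q₂}`,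
both sides taken in `[0,∞]`. -/
theorem copson_negative_exponent_two_exponents (p q₁ q₂ : ℝ)
    (hq₁ : 0 < q₁) (hq₁₂ : q₁ ≤ q₂) (hq₂p : q₂ ≤ p)
    (a l : ℕ → ℝ) (ha : ∀ n, 0 < a n) (hl : ∀ n, 0 < l n) :
    (∑' n : ℕ, ENNReal.ofReal (l n *
        ((∑ i ∈ Finset.range (n + 1), l i * a i) / (∑ i ∈ Finset.range (n + 1), l i)) ^ (-p + q₁)
          * (a n) ^ (-q₁)))
      ≤ ENNReal.ofReal (((p + 1) / p) ^ (q₂ - q₁)) *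
        ∑' n : ℕ, ENNReal.ofReal (l n *
          ((∑ i ∈ Finset.range (n + 1), l i * a i) / (∑ i ∈ Finset.range (n + 1), l i)) ^ (-p + q₂)
            * (a n) ^ (-q₂)) := by
  have hp : 0 < p := lt_of_lt_of_le (lt_of_lt_of_le hq₁ hq₁₂) hq₂p
  set S : ℕ → ℝ := fun n => ∑ i ∈ Finset.range (n+1), l i with hS_def
  set T : ℕ → ℝ := fun n => ∑ i ∈ Finset.range (n+1), l i * a i with hT_def
  have hS : ∀ n, 0 < S n := fun n =>
    Finset.sum_pos (fun i _ => hl i) Finset.nonempty_range_add_one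
  have hT : ∀ n, 0 < T n := fun n =>
    Finset.sum_pos (fun i _ => mul_pos (hl i) (ha i)) Finset.nonempty_range_add_one
  set σ : ℕ → ℝ := fun n => S n / T n with hσ_def
  have hσ : ∀ n, 0 < σ n := fun n => div_pos (hS n) (hT n)
  set L : ℕ → ℝ := fun n => l n * σ n ^ p with hL_def
  set M : ℕ → ℝ := fun n => l n * a n * σ n ^ (p+1) with hM_def
  set B : ℕ → ℝ := fun n => S n * σ n ^ p with hB_def
  have hLpos : ∀ n, 0 < L n := fun n => mul_pos (hl n) (Real.rpow_pos_of_pos (hσ n) p)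
  have hMpos : ∀ n, 0 < M n :=
    fun n => mul_pos (mul_pos (hl n) (ha n)) (Real.rpow_pos_of_pos (hσ n) _)
  have haux : ∀ n, L n * (a n * σ n) = M n := by
    intro n
    show (l n * σ n ^ p) * (a n * σ n) = l n * a n * σ n ^ (p+1)
    rw [Real.rpow_add_one (hσ n).ne' p]; ring
  set W : ℕ → ℝ≥0∞ := fun n => ENNReal.ofReal (L n) with hW_def
  set P : ℕ → ℝ≥0∞ := fun n => ENNReal.ofReal (a n * σ n) with hP_def
  have haσ : ∀ n, 0 < a n * σ n := fun n => mul_pos (ha n) (hσ n)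
  have hW0 : ∀ n, W n ≠ 0 := fun n => (ENNReal.ofReal_pos.mpr (hLpos n)).ne'
  have hWt : ∀ n, W n ≠ ⊤ := fun n => ENNReal.ofReal_ne_top
  have hP0 : ∀ n, P n ≠ 0 := fun n => (ENNReal.ofReal_pos.mpr (haσ n)).ne'
  have hPt : ∀ n, P n ≠ ⊤ := fun n => ENNReal.ofReal_ne_top
  -- the term identity
  have hofq : ∀ (q : ℝ) (n : ℕ),
      ENNReal.ofReal (l n * (T n / S n) ^ (-p + q) * a n ^ (-q)) = W n * P n ^ (-q) := by
    intro q n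
    have hterm : l n * (T n / S n) ^ (-p + q) * a n ^ (-q) = L n * ((a n * σ n) ^ (-q)) := by
      have h1 : T n / S n = (σ n)⁻¹ := by
        show T n / S n = (S n / T n)⁻¹
        rw [inv_div]
      rw [h1, Real.inv_rpow (hσ n).le, ← Real.rpow_neg (hσ n).le,
        show -(-p + q) = p + -q by ring, Real.rpow_add (hσ n),
        Real.mul_rpow (ha n).le (hσ n).le]
      show l n * (σ n ^ p * σ n ^ (-q)) * a n ^ (-q) = l n * σ n ^ p * (a n ^ (-q) * σ n ^ (-q))
      ring
    rw [hterm, ENNReal.ofReal_mul (hLpos n).le, ENNReal.ofReal_rpow_of_pos (haσ n)]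
  -- base case facts
  have hS0 : S 0 = l 0 := by simp [hS_def]
  have hT0 : T 0 = l 0 * a 0 := by simp [hT_def]
  have haσ0 : a 0 * σ 0 = 1 := by
    show a 0 * (S 0 / T 0) = 1
    rw [hS0, hT0]
    have h1 : l 0 ≠ 0 := (hl 0).ne'
    have h2 : a 0 ≠ 0 := (ha 0).ne'
    field_simp
  have hM0 : M 0 = L 0 := by
    have := haux 0
    rw [haσ0, mul_one] at this
    exact this.symm
  have hB0 : B 0 = L 0 := by
    show S 0 * σ 0 ^ p = l 0 * σ 0 ^ p
    rw [hS0]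
  -- telescoping induction
  have hind : ∀ N : ℕ, p * ∑ n ∈ Finset.range (N+1), M n + B N
      ≤ (p+1) * ∑ n ∈ Finset.range (N+1), L n := by
    intro N
    induction N with
    | zero =>
      rw [Finset.sum_range_one, Finset.sum_range_one, hM0, hB0]
      have : (p+1) * L 0 = p * L 0 + L 0 := by ring
      linarith
    | succ n ih =>
      rw [Finset.sum_range_succ M (n+1), Finset.sum_range_succ L (n+1)]
      have e1 : S (n+1) = S n + l (n+1) := Finset.sum_range_succ _ _
      have e2 : T (n+1) = T n + l (n+1) * a (n+1) := Finset.sum_range_succ _ _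
      have h := step_aux (p := p) hp (hl (n+1)) (ha (n+1)) (hS n) (hT n)
      rw [← e1, ← e2] at h
      have hstep' : B (n+1) + p * M (n+1) ≤ B n + (p+1) * L (n+1) := h
      linarith
  have hreal : ∀ N : ℕ, ∑ n ∈ Finset.range N, M n
      ≤ (p+1)/p * ∑ n ∈ Finset.range N, L n := by
    intro N
    cases N with
    | zero => simp
    | succ n =>
      have h := hind n
      have hBpos : 0 < B n := mul_pos (hS n) (Real.rpow_pos_of_pos (hσ n) p)
      rw [div_mul_eq_mul_div, le_div_iff₀ hp]
      linarith
  have hkey : ∀ N : ℕ, ∑ n ∈ Finset.range N, W n * P n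
      ≤ ENNReal.ofReal ((p+1)/p) * ∑ n ∈ Finset.range N, W n := by
    intro N
    have h1 : ∑ n ∈ Finset.range N, W n * P n
        = ENNReal.ofReal (∑ n ∈ Finset.range N, M n) := by
      rw [ENNReal.ofReal_sum_of_nonneg (fun n _ => (hMpos n).le)]
      refine Finset.sum_congr rfl fun n _ => ?_
      rw [← haux n, ENNReal.ofReal_mul (hLpos n).le]
    have h2 : ∑ n ∈ Finset.range N, W n
        = ENNReal.ofReal (∑ n ∈ Finset.range N, L n) := by
      rw [ENNReal.ofReal_sum_of_nonneg (fun n _ => (hLpos n).le)]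
    rw [h1, h2, ← ENNReal.ofReal_mul (by positivity)]
    exact ENNReal.ofReal_le_ofReal (hreal N)
  have habs := copson_abstract hq₁ hq₁₂ hq₂p hp W P hW0 hWt hP0 hPt hkey
  calc (∑' n : ℕ, ENNReal.ofReal (l n *
        ((∑ i ∈ Finset.range (n + 1), l i * a i) / (∑ i ∈ Finset.range (n + 1), l i)) ^ (-p + q₁)
          * (a n) ^ (-q₁)))
      = ∑' n, W n * P n ^ (-q₁) := tsum_congr fun n => hofq q₁ n
    _ ≤ ENNReal.ofReal (((p + 1) / p) ^ (q₂ - q₁)) * ∑' n, W n * P n ^ (-q₂) := habs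
    _ = _ := by
        congr 1
        exact (tsum_congr fun n => hofq q₂ n).symm
end

section
/- Let p ≥ q > 0 and let (a_n)_{n≥1} be a sequence of positive real numbers. Then ∑_{n=1}^∞ ((1/n) ∑_{k=1}^n a_k)^{-p} ≤ ((p+1)/p)^q · ∑_{n=1}^∞ ((1/n) ∑_{k=1}^n a_k)^{-p+q} a_n^{-q}, where both sides are allowed to be infinite. -/
open Finset

private lemma amgm2 (p : ℝ) (hp : 0 < p) (y₁ y₂ : ℝ) (h1 : 0 ≤ y₁) (h2 : 0 ≤ y₂) :
    y₁ ^ p * y₂ ≤ ((p * y₁ + y₂) / (p + 1)) ^ (p + 1) := by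
  have hp1 : (0:ℝ) < p + 1 := by linarith
  have hw : p / (p + 1) + 1 / (p + 1) = 1 := by field_simp
  have hg := Real.geom_mean_le_arith_mean2_weighted (by positivity) (by positivity) h1 h2 hw
  have hpow := Real.rpow_le_rpow (by positivity) hg hp1.le
  calc y₁ ^ p * y₂ = (y₁ ^ (p / (p + 1)) * y₂ ^ (1 / (p + 1))) ^ (p + 1) := by
        rw [Real.mul_rpow (by positivity) (by positivity), ← Real.rpow_mul h1,
          ← Real.rpow_mul h2, div_mul_cancel₀ _ hp1.ne', div_mul_cancel₀ _ hp1.ne',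
          Real.rpow_one]
    _ ≤ (p / (p + 1) * y₁ + 1 / (p + 1) * y₂) ^ (p + 1) := hpow
    _ = ((p * y₁ + y₂) / (p + 1)) ^ (p + 1) := by congr 1; field_simp

private lemma keycore (p q : ℝ) (hq : 0 < q) (hp : 0 < p)
    (P b S x : ℝ) (hb : 0 < b) (hP0 : 0 ≤ P) (hSdef : S = P + b)
    (hx1 : 1 ≤ x) (hPx : 0 < P ∨ (P = 0 ∧ x = 1)) :
    ((x⁻¹ * S) ^ (-p))
      + (q / (p + 1)) * ((x ^ (p + 1) * S ^ (-p)) - ((x - 1) ^ (p + 1) * P ^ (-p)))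
      ≤ ((p + 1) / p) ^ q * ((x⁻¹ * S) ^ (-p + q) * b ^ (-q)) := by
  have hp1 : (0:ℝ) < p + 1 := by linarith
  have hS : 0 < S := by rw [hSdef]; linarith
  have hx : 0 < x := by linarith
  have hA : 0 < x⁻¹ * S := by positivity
  obtain ⟨l, hldef⟩ : ∃ l : ℝ, l = (p + 1) / p := ⟨_, rfl⟩
  have hl : 0 < l := by rw [hldef]; positivity
  obtain ⟨T, hTdef⟩ : ∃ T : ℝ, T = l * (x⁻¹ * S) / b := ⟨_, rfl⟩
  have hT : 0 < T := by rw [hTdef]; positivity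
  obtain ⟨u, hudef⟩ : ∃ u : ℝ, u = x * b / S := ⟨_, rfl⟩
  have hu : 0 < u := by rw [hudef]; positivity
  -- RHS = A^(-p) * T^q
  have h1 : l ^ q * ((x⁻¹ * S) ^ (-p + q) * b ^ (-q)) = (x⁻¹ * S) ^ (-p) * T ^ q := by
    rw [Real.rpow_add hA, hTdef, Real.div_rpow (by positivity) hb.le,
      Real.mul_rpow hl.le hA.le, Real.rpow_neg hb.le]
    field_simp
  -- T^q ≥ 1 + q log T
  have h2 : 1 + q * Real.log T ≤ T ^ q := by
    rw [Real.rpow_def_of_pos hT]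
    have := Real.add_one_le_exp (Real.log T * q)
    linarith [this]
  have hAx : (x⁻¹ * S) ^ (-p) = x ^ p * S ^ (-p) := by
    rw [Real.mul_rpow (by positivity) hS.le, Real.inv_rpow hx.le, Real.rpow_neg hx.le, inv_inv]
  have hTu : T = l / u := by
    rw [hTdef, hudef]; field_simp
  have hlog : 1 - u / l ≤ Real.log T := by
    have h := Real.log_le_sub_one_of_pos (show 0 < u / l by positivity)
    have hlogT : Real.log T = - Real.log (u / l) := by
      rw [hTu, ← Real.log_inv]; congr 1; field_simp
    rw [hlogT]; linarith
  -- main claim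
  have hclaim : (x + p * u - (p + 1)) * (x ^ p * S ^ (-p)) ≤ (x - 1) ^ (p + 1) * P ^ (-p) := by
    rcases hPx with hP | ⟨hP, hxone⟩
    · have hxu : x - u = x * P / S := by
        rw [hudef, hSdef]; field_simp; ring
      have hxu0 : 0 < x - u := by rw [hxu]; positivity
      rcases le_or_gt (x + p * u - (p + 1)) 0 with hy2 | hy2
      · have hr : 0 ≤ (x - 1) ^ (p + 1) * P ^ (-p) := by
          have : (0:ℝ) ≤ x - 1 := by linarith
          positivity
        have hm : 0 < x ^ p * S ^ (-p) :=
          mul_pos (Real.rpow_pos_of_pos hx p) (Real.rpow_pos_of_pos hS (-p))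
        nlinarith [hm, hr]
      · have hamgm := amgm2 p hp (x - u) (x + p * u - (p + 1)) hxu0.le hy2.le
        have hmean : (p * (x - u) + (x + p * u - (p + 1))) / (p + 1) = x - 1 := by
          field_simp; ring
        rw [hmean] at hamgm
        have hkey0 : x ^ p * S ^ (-p) = (x - u) ^ p * P ^ (-p) := by
          rw [hxu, Real.div_rpow (by positivity) hS.le, Real.mul_rpow hx.le hP.le,
            Real.rpow_neg hS.le, Real.rpow_neg hP.le]
          field_simp
        calc (x + p * u - (p + 1)) * (x ^ p * S ^ (-p))
            = (x - u) ^ p * (x + p * u - (p + 1)) * P ^ (-p) := by rw [hkey0]; ring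
          _ ≤ (x - 1) ^ (p + 1) * P ^ (-p) :=
              mul_le_mul_of_nonneg_right hamgm (Real.rpow_nonneg hP0 (-p))
    · -- P = 0, x = 1
      have hu1 : u = 1 := by
        rw [hudef, hSdef, hP, hxone]; field_simp; ring
      have hPp : P ^ (-p) = 0 := by
        rw [hP]; exact Real.zero_rpow (by linarith)
      rw [hu1, hxone, hPp, mul_zero]
      have hL0 : ((1:ℝ) + p * 1 - (p + 1)) * ((1:ℝ) ^ p * S ^ (-p)) = 0 := by ring
      exact le_of_eq hL0
  -- combine
  have hxp1 : x ^ (p + 1) = x * x ^ p := by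
    rw [Real.rpow_add hx, Real.rpow_one]; ring
  have h4 : x ^ (p + 1) * S ^ (-p) - (x - 1) ^ (p + 1) * P ^ (-p)
      ≤ (p + 1) * (x ^ p * S ^ (-p)) * Real.log T := by
    have hstep : x ^ (p + 1) * S ^ (-p) - (x - 1) ^ (p + 1) * P ^ (-p)
        ≤ ((p + 1) - p * u) * (x ^ p * S ^ (-p)) := by
      have hrw : x ^ (p + 1) * S ^ (-p) = x * (x ^ p * S ^ (-p)) := by rw [hxp1]; ring
      rw [hrw]
      have hexpand : (x + p * u - (p + 1)) * (x ^ p * S ^ (-p))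
          = x * (x ^ p * S ^ (-p)) - ((p + 1) - p * u) * (x ^ p * S ^ (-p)) := by ring
      linarith [hclaim, hexpand.ge, hexpand.le]
    have hlu : (p + 1) * (1 - u / l) = (p + 1) - p * u := by
      rw [hldef]; field_simp
    have hml := mul_le_mul_of_nonneg_left hlog
      (by positivity : (0:ℝ) ≤ (p + 1) * (x ^ p * S ^ (-p)))
    have e1 : (p + 1) * (x ^ p * S ^ (-p)) * (1 - u / l)
        = ((p + 1) * (1 - u / l)) * (x ^ p * S ^ (-p)) := by ring
    rw [e1, hlu] at hml
    linarith
  rw [← hldef, h1]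
  have hfin : (x⁻¹ * S) ^ (-p) * (1 + q * Real.log T) ≤ (x⁻¹ * S) ^ (-p) * T ^ q :=
    mul_le_mul_of_nonneg_left h2 (Real.rpow_nonneg hA.le (-p))
  have h5 : (q / (p + 1)) * (x ^ (p + 1) * S ^ (-p) - (x - 1) ^ (p + 1) * P ^ (-p))
      ≤ (x⁻¹ * S) ^ (-p) * (q * Real.log T) := by
    rw [hAx]
    have hmm := mul_le_mul_of_nonneg_left h4 (by positivity : (0:ℝ) ≤ q / (p + 1))
    calc (q / (p + 1)) * (x ^ (p + 1) * S ^ (-p) - (x - 1) ^ (p + 1) * P ^ (-p))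
        ≤ (q / (p + 1)) * ((p + 1) * (x ^ p * S ^ (-p)) * Real.log T) := hmm
      _ = (q / (p + 1) * (p + 1)) * (x ^ p * S ^ (-p) * Real.log T) := by ring
      _ = x ^ p * S ^ (-p) * (q * Real.log T) := by
          rw [div_mul_cancel₀ q hp1.ne']; ring
  have hexp : (x⁻¹ * S) ^ (-p) * (1 + q * Real.log T)
      = (x⁻¹ * S) ^ (-p) + (x⁻¹ * S) ^ (-p) * (q * Real.log T) := by ring
  linarith [hfin, h5, hexp.le, hexp.ge]

private lemma keylem (p q : ℝ) (hq : 0 < q) (hp : 0 < p)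
    (a : ℕ → ℝ) (ha : ∀ n, 0 < a n) (n : ℕ) :
    ((((n : ℝ) + 1)⁻¹ * ∑ k ∈ Finset.range (n + 1), a k) ^ (-p))
      + (q / (p + 1)) * ((((n : ℝ) + 1) ^ (p + 1) * (∑ k ∈ Finset.range (n + 1), a k) ^ (-p))
          - ((n : ℝ) ^ (p + 1) * (∑ k ∈ Finset.range n, a k) ^ (-p)))
      ≤ ((p + 1) / p) ^ q *
        ((((n : ℝ) + 1)⁻¹ * ∑ k ∈ Finset.range (n + 1), a k) ^ (-p + q) * (a n) ^ (-q)) := by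
  have h := keycore p q hq hp (∑ k ∈ Finset.range n, a k) (a n)
    (∑ k ∈ Finset.range (n + 1), a k) ((n : ℝ) + 1) (ha n)
    (Finset.sum_nonneg fun i _ => (ha i).le) (Finset.sum_range_succ a n)
    (by have := Nat.cast_nonneg (α := ℝ) n; linarith)
    (by
      rcases Nat.eq_zero_or_pos n with hn | hn
      · right; subst hn; simp
      · left; exact Finset.sum_pos (fun i _ => ha i) (Finset.nonempty_range_iff.mpr (by omega)))
  have hx1 : ((n : ℝ) + 1) - 1 = (n : ℝ) := by ring
  rw [hx1] at h
  exact h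

/-- **Corollary 2.1.** For `p ≥ q > 0` and a positive sequence `(aₙ)`,
`∑ₙ ((1/n) ∑_{k=1}^n a_k)^{-p} ≤ ((p+1)/p)^q ∑ₙ ((1/n) ∑_{k=1}^n a_k)^{-p+q} aₙ^{-q}`,
both sides taken in `[0,∞]`. -/
theorem hardy_negative_exponent_series (p q : ℝ) (hq : 0 < q) (hpq : q ≤ p)
    (a : ℕ → ℝ) (ha : ∀ n, 0 < a n) :
    (∑' n : ℕ, ENNReal.ofReal
        ((((n : ℝ) + 1)⁻¹ * ∑ k ∈ Finset.range (n + 1), a k) ^ (-p)))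
      ≤ ENNReal.ofReal (((p + 1) / p) ^ q) *
        ∑' n : ℕ, ENNReal.ofReal
          ((((n : ℝ) + 1)⁻¹ * ∑ k ∈ Finset.range (n + 1), a k) ^ (-p + q) * (a n) ^ (-q)) := by
  have hp : 0 < p := lt_of_lt_of_le hq hpq
  have hp1 : (0:ℝ) < p + 1 := by linarith
  -- partial sums inequality
  have hpartial : ∀ M : ℕ,
      ∑ n ∈ Finset.range M, (((n : ℝ) + 1)⁻¹ * ∑ k ∈ Finset.range (n + 1), a k) ^ (-p)
        ≤ ((p + 1) / p) ^ q * ∑ n ∈ Finset.range M,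
            ((((n : ℝ) + 1)⁻¹ * ∑ k ∈ Finset.range (n + 1), a k) ^ (-p + q) * (a n) ^ (-q)) := by
    intro M
    have hsum : ∑ n ∈ Finset.range M,
        ((((n : ℝ) + 1)⁻¹ * ∑ k ∈ Finset.range (n + 1), a k) ^ (-p)
          + (q / (p + 1)) * ((((n : ℝ) + 1) ^ (p + 1) * (∑ k ∈ Finset.range (n + 1), a k) ^ (-p))
              - ((n : ℝ) ^ (p + 1) * (∑ k ∈ Finset.range n, a k) ^ (-p))))
        ≤ ∑ n ∈ Finset.range M, ((p + 1) / p) ^ q *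
            ((((n : ℝ) + 1)⁻¹ * ∑ k ∈ Finset.range (n + 1), a k) ^ (-p + q) * (a n) ^ (-q)) :=
      Finset.sum_le_sum fun n _ => keylem p q hq hp a ha n
    have htel : ∑ n ∈ Finset.range M,
        ((((n : ℝ) + 1) ^ (p + 1) * (∑ k ∈ Finset.range (n + 1), a k) ^ (-p))
          - ((n : ℝ) ^ (p + 1) * (∑ k ∈ Finset.range n, a k) ^ (-p)))
        = (M : ℝ) ^ (p + 1) * (∑ k ∈ Finset.range M, a k) ^ (-p)
          - (0 : ℝ) ^ (p + 1) * (∑ k ∈ Finset.range 0, a k) ^ (-p) := by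
      have := Finset.sum_range_sub
        (f := fun k : ℕ => (k : ℝ) ^ (p + 1) * (∑ i ∈ Finset.range k, a i) ^ (-p)) M
      simpa using this
    have hzero : (0 : ℝ) ^ (p + 1) * (∑ k ∈ Finset.range 0, a k) ^ (-p) = 0 := by
      rw [Real.zero_rpow hp1.ne']; ring
    have hgM : 0 ≤ (M : ℝ) ^ (p + 1) * (∑ k ∈ Finset.range M, a k) ^ (-p) := by
      have h1 : (0:ℝ) ≤ (M : ℝ) := Nat.cast_nonneg M
      have h2 : (0:ℝ) ≤ ∑ k ∈ Finset.range M, a k :=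
        Finset.sum_nonneg fun i _ => (ha i).le
      positivity
    rw [Finset.sum_add_distrib, ← Finset.mul_sum, htel, hzero] at hsum
    have hmu : 0 ≤ q / (p + 1) := by positivity
    rw [← Finset.mul_sum] at hsum
    nlinarith [mul_nonneg hmu hgM]
  -- move to ENNReal
  rw [ENNReal.tsum_eq_iSup_nat]
  apply iSup_le
  intro M
  have hpos : ∀ n : ℕ, 0 < ∑ k ∈ Finset.range (n + 1), a k := fun n =>
    Finset.sum_pos (fun i _ => ha i) ⟨0, Finset.mem_range.mpr (Nat.succ_pos n)⟩
  have hLnn : ∀ n ∈ Finset.range M,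
      0 ≤ (((n : ℝ) + 1)⁻¹ * ∑ k ∈ Finset.range (n + 1), a k) ^ (-p) := fun n _ =>
    Real.rpow_nonneg (by have := hpos n; positivity) _
  have hRnn : ∀ n : ℕ,
      0 ≤ (((n : ℝ) + 1)⁻¹ * ∑ k ∈ Finset.range (n + 1), a k) ^ (-p + q) * (a n) ^ (-q) :=
    fun n => mul_nonneg (Real.rpow_nonneg (by have := hpos n; positivity) _)
      (Real.rpow_nonneg (ha n).le _)
  calc ∑ n ∈ Finset.range M, ENNReal.ofReal
        ((((n : ℝ) + 1)⁻¹ * ∑ k ∈ Finset.range (n + 1), a k) ^ (-p))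
      = ENNReal.ofReal (∑ n ∈ Finset.range M,
          (((n : ℝ) + 1)⁻¹ * ∑ k ∈ Finset.range (n + 1), a k) ^ (-p)) :=
        (ENNReal.ofReal_sum_of_nonneg hLnn).symm
    _ ≤ ENNReal.ofReal (((p + 1) / p) ^ q * ∑ n ∈ Finset.range M,
          ((((n : ℝ) + 1)⁻¹ * ∑ k ∈ Finset.range (n + 1), a k) ^ (-p + q) * (a n) ^ (-q))) :=
        ENNReal.ofReal_le_ofReal (hpartial M)
    _ = ENNReal.ofReal (((p + 1) / p) ^ q) * ENNReal.ofReal (∑ n ∈ Finset.range M,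
          ((((n : ℝ) + 1)⁻¹ * ∑ k ∈ Finset.range (n + 1), a k) ^ (-p + q) * (a n) ^ (-q))) := by
        rw [ENNReal.ofReal_mul (by positivity)]
    _ = ENNReal.ofReal (((p + 1) / p) ^ q) * ∑ n ∈ Finset.range M, ENNReal.ofReal
          ((((n : ℝ) + 1)⁻¹ * ∑ k ∈ Finset.range (n + 1), a k) ^ (-p + q) * (a n) ^ (-q)) := by
        rw [ENNReal.ofReal_sum_of_nonneg (fun n _ => hRnn n)]
    _ ≤ ENNReal.ofReal (((p + 1) / p) ^ q) *
          ∑' n : ℕ, ENNReal.ofReal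
            ((((n : ℝ) + 1)⁻¹ * ∑ k ∈ Finset.range (n + 1), a k) ^ (-p + q) * (a n) ^ (-q)) := by
        gcongr
        exact ENNReal.sum_le_tsum _
end

section
/- Let p > 0, let N be a positive integer, and let a_1,…,a_N and λ_1,…,λ_N be positive real numbers. Set Λ_n = λ_1 + ⋯ + λ_n and A_n = λ_1 a_1 + ⋯ + λ_n a_n. Then ∑_{n=1}^N λ_n a_n (A_n/Λ_n)^{-p-1} ≤ ((p+1)/p) · ∑_{n=1}^N λ_n (A_n/Λ_n)^{-p}. -/
open Finset

lemma gm_aux (p : ℝ) (hp : 0 < p) (u v : ℝ) (hu : 0 < u) (hv : 0 < v) :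
    (p + 1) * u ≤ u ^ (p + 1) * v ^ (-p) + p * v := by
  have hp1 : (0:ℝ) < p + 1 := by linarith
  have h := Real.geom_mean_le_arith_mean2_weighted
    (w₁ := 1/(p+1)) (w₂ := p/(p+1)) (p₁ := u ^ (p+1) * v ^ (-p)) (p₂ := v)
    (by positivity) (by positivity)
    (by positivity) hv.le (by field_simp; ring)
  have heq : (u ^ (p+1) * v ^ (-p)) ^ (1/(p+1)) * v ^ (p/(p+1)) = u := by
    rw [Real.mul_rpow (by positivity) (by positivity),
      ← Real.rpow_mul hu.le, ← Real.rpow_mul hv.le, mul_assoc,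
      ← Real.rpow_add hv, mul_one_div, div_self hp1.ne']
    have : -p * (1 / (p + 1)) + p / (p + 1) = 0 := by field_simp; ring
    rw [this, Real.rpow_zero, mul_one, Real.rpow_one]
  rw [heq] at h
  have := mul_le_mul_of_nonneg_left h hp1.le
  calc (p+1)*u ≤ (p+1) * (1/(p+1) * (u ^ (p+1) * v ^ (-p)) + p/(p+1) * v) := this
    _ = u ^ (p+1) * v ^ (-p) + p * v := by field_simp

lemma key_aux (p : ℝ) (hp : 0 < p) (L' A' lam aa : ℝ) (hL' : 0 < L') (hA' : 0 < A')
    (hlam : 0 < lam) (haa : 0 < aa) :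
    p * (lam * aa) * ((A' + lam * aa) / (L' + lam)) ^ (-p - 1)
      + (L' + lam) * ((A' + lam * aa) / (L' + lam)) ^ (-p)
    ≤ (p + 1) * lam * ((A' + lam * aa) / (L' + lam)) ^ (-p) + L' * (A' / L') ^ (-p) := by
  set L : ℝ := L' + lam with hL
  set B : ℝ := A' + lam * aa with hB
  have hLpos : 0 < L := by positivity
  have hBpos : 0 < B := by positivity
  have h := gm_aux p hp (L'/L) (A'/B) (by positivity) (by positivity)
  -- rewrite rpow of quotients
  have ediv : ∀ X Y q : ℝ, 0 < X → 0 < Y → (X / Y) ^ (-q) = Y ^ q / X ^ q := by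
    intro X Y q hX hY
    rw [Real.rpow_neg (by positivity), Real.div_rpow hX.le hY.le, inv_div]
  have e1 : (B / L) ^ (-p) = L ^ p / B ^ p := ediv B L p hBpos hLpos
  have e2 : (B / L) ^ (-p - 1) = L ^ (p+1) / B ^ (p+1) := by
    have : (-p - 1 : ℝ) = -(p+1) := by ring
    rw [this, ediv B L (p+1) hBpos hLpos]
  have e3 : (A' / L') ^ (-p) = L' ^ p / A' ^ p := ediv A' L' p hA' hL'
  have e4 : (L' / L) ^ (p + 1) = L' ^ (p+1) / L ^ (p+1) := Real.div_rpow hL'.le hLpos.le (p+1)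
  have e5 : (A' / B) ^ (-p) = B ^ p / A' ^ p := ediv A' B p hA' hBpos
  rw [e4, e5] at h
  rw [e1, e2, e3]
  have f1 : L ^ (p+1) = L ^ p * L := by
    rw [Real.rpow_add hLpos, Real.rpow_one]
  have f2 : B ^ (p+1) = B ^ p * B := by
    rw [Real.rpow_add hBpos, Real.rpow_one]
  have f3 : L' ^ (p+1) = L' ^ p * L' := by
    rw [Real.rpow_add hL', Real.rpow_one]
  set x : ℝ := L ^ p with hx
  set y : ℝ := B ^ p with hy
  set z : ℝ := L' ^ p with hz
  set w : ℝ := A' ^ p with hw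
  have hxp : 0 < x := Real.rpow_pos_of_pos hLpos p
  have hyp : 0 < y := Real.rpow_pos_of_pos hBpos p
  have hzp : 0 < z := Real.rpow_pos_of_pos hL' p
  have hwp : 0 < w := Real.rpow_pos_of_pos hA' p
  rw [f1, f2, f3] at *
  -- h : (p+1)*(L'/L) ≤ z*L'/(x*L) * (y/w) + p*(A'/B)
  -- goal : p*(lam*aa)*(x*L/(y*B)) + L*(x/y) ≤ (p+1)*lam*(x/y) + L'*(z/w)
  have h2 := mul_le_mul_of_nonneg_left h (by positivity : (0:ℝ) ≤ x * L / y)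
  have h3 : (p+1) * L' * (x/y) ≤ L' * (z/w) + p * A' * (x * L / (y * B)) := by
    have lhs : x * L / y * ((p+1) * (L'/L)) = (p+1) * L' * (x/y) := by
      field_simp
    have rhs : x * L / y * (z * L' / (x * L) * (y / w) + p * (A'/B))
        = L' * (z/w) + p * A' * (x * L / (y * B)) := by
      field_simp
    rw [lhs, rhs] at h2
    exact h2
  have hkey : p * (lam * aa) * (x * L / (y * B)) + p * A' * (x * L / (y * B))
      = p * (x * L / y) := by
    rw [hB]; field_simp; ring
  have hsplit : (p+1) * lam * (x/y) + (p+1) * L' * (x/y) = p * (x * L / y) + L * (x/y) := by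
    rw [hL]; field_simp; ring
  linarith [h3, hkey, hsplit]

lemma copson_aux (p : ℝ) (hp : 0 < p) (a l : ℕ → ℝ) (ha : ∀ n, 0 < a n)
    (hl : ∀ n, 0 < l n) : ∀ N : ℕ,
    p * (∑ n ∈ Finset.range (N + 1), l n * a n *
        ((∑ i ∈ Finset.range (n + 1), l i * a i) / (∑ i ∈ Finset.range (n + 1), l i)) ^ (-p - 1))
      + (∑ i ∈ Finset.range (N + 1), l i) *
        ((∑ i ∈ Finset.range (N + 1), l i * a i) / (∑ i ∈ Finset.range (N + 1), l i)) ^ (-p)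
    ≤ (p + 1) * ∑ n ∈ Finset.range (N + 1), l n *
        ((∑ i ∈ Finset.range (n + 1), l i * a i) / (∑ i ∈ Finset.range (n + 1), l i)) ^ (-p) := by
  have hS : ∀ n : ℕ, 0 < ∑ i ∈ Finset.range (n + 1), l i * a i := fun n =>
    Finset.sum_pos (fun i _ => mul_pos (hl i) (ha i)) (by simp)
  have hT : ∀ n : ℕ, 0 < ∑ i ∈ Finset.range (n + 1), l i := fun n =>
    Finset.sum_pos (fun i _ => hl i) (by simp)
  intro N
  induction N with
  | zero =>
    simp only [Finset.sum_range_one, zero_add]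
    have h0 : (l 0 * a 0) / l 0 = a 0 := by
      rw [mul_comm, mul_div_assoc, div_self (hl 0).ne', mul_one]
    rw [h0]
    have e : a 0 ^ (-p) = a 0 ^ (-p - 1) * a 0 := by
      rw [← Real.rpow_add_one (ha 0).ne']
      ring_nf
    rw [e]
    ring_nf
    linarith
  | succ N ih =>
    rw [Finset.sum_range_succ (fun n => l n * a n *
        ((∑ i ∈ Finset.range (n + 1), l i * a i) / (∑ i ∈ Finset.range (n + 1), l i)) ^ (-p - 1)),
      Finset.sum_range_succ (fun n => l n *
        ((∑ i ∈ Finset.range (n + 1), l i * a i) / (∑ i ∈ Finset.range (n + 1), l i)) ^ (-p))]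
    have hSs : ∑ i ∈ Finset.range (N + 1 + 1), l i * a i
        = (∑ i ∈ Finset.range (N + 1), l i * a i) + l (N + 1) * a (N + 1) :=
      Finset.sum_range_succ _ _
    have hTs : ∑ i ∈ Finset.range (N + 1 + 1), l i
        = (∑ i ∈ Finset.range (N + 1), l i) + l (N + 1) :=
      Finset.sum_range_succ _ _
    rw [hSs, hTs]
    have hkey := key_aux p hp (∑ i ∈ Finset.range (N + 1), l i)
      (∑ i ∈ Finset.range (N + 1), l i * a i) (l (N + 1)) (a (N + 1))
      (hT N) (hS N) (hl (N + 1)) (ha (N + 1))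
    linarith

/-- **Lemma 2.1.** For `p > 0`, `N ≥ 1` and positive reals `a₁,…,a_N`, `λ₁,…,λ_N`,
with `Λₙ = λ₁ + ⋯ + λₙ` and `Aₙ = λ₁a₁ + ⋯ + λₙaₙ`,
`∑_{n=1}^N λₙ aₙ (Aₙ/Λₙ)^{-p-1} ≤ ((p+1)/p) ∑_{n=1}^N λₙ (Aₙ/Λₙ)^{-p}`. -/
theorem copson_lemma (p : ℝ) (hp : 0 < p) (N : ℕ) (hN : 0 < N)
    (a l : ℕ → ℝ) (ha : ∀ n < N, 0 < a n) (hl : ∀ n < N, 0 < l n) :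
    (∑ n ∈ Finset.range N, l n * a n *
        ((∑ i ∈ Finset.range (n + 1), l i * a i) / (∑ i ∈ Finset.range (n + 1), l i)) ^ (-p - 1))
      ≤ ((p + 1) / p) *
        ∑ n ∈ Finset.range N, l n *
          ((∑ i ∈ Finset.range (n + 1), l i * a i) / (∑ i ∈ Finset.range (n + 1), l i)) ^ (-p) := by
  obtain ⟨M, rfl⟩ := Nat.exists_eq_succ_of_ne_zero hN.ne'
  set a' : ℕ → ℝ := fun n => if n < M + 1 then a n else 1 with ha'def
  set l' : ℕ → ℝ := fun n => if n < M + 1 then l n else 1 with hl'def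
  have ha' : ∀ n, 0 < a' n := by
    intro n; simp only [ha'def]
    split
    · exact ha n (by assumption)
    · norm_num
  have hl' : ∀ n, 0 < l' n := by
    intro n; simp only [hl'def]
    split
    · exact hl n (by assumption)
    · norm_num
  have haux := copson_aux p hp a' l' ha' hl' M
  have inner_eq : ∀ n ∈ Finset.range (M + 1),
      (∑ i ∈ Finset.range (n + 1), l' i * a' i) = (∑ i ∈ Finset.range (n + 1), l i * a i)
      ∧ (∑ i ∈ Finset.range (n + 1), l' i) = (∑ i ∈ Finset.range (n + 1), l i) := by
    intro n hn
    rw [Finset.mem_range] at hn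
    constructor <;>
    · refine Finset.sum_congr rfl fun i hi => ?_
      rw [Finset.mem_range] at hi
      have hiM : i < M + 1 := by omega
      simp [ha'def, hl'def, hiM, (by omega : i ≤ M)]
  have e1 : (∑ n ∈ Finset.range (M + 1), l' n * a' n *
        ((∑ i ∈ Finset.range (n + 1), l' i * a' i) / (∑ i ∈ Finset.range (n + 1), l' i)) ^ (-p - 1))
      = ∑ n ∈ Finset.range (M + 1), l n * a n *
        ((∑ i ∈ Finset.range (n + 1), l i * a i) / (∑ i ∈ Finset.range (n + 1), l i)) ^ (-p - 1) := by
    refine Finset.sum_congr rfl fun n hn => ?_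
    obtain ⟨hA, hL⟩ := inner_eq n hn
    rw [Finset.mem_range] at hn
    rw [hA, hL]
    simp only [ha'def, hl'def]
    rw [if_pos hn, if_pos hn]
  have e2 : (∑ n ∈ Finset.range (M + 1), l' n *
        ((∑ i ∈ Finset.range (n + 1), l' i * a' i) / (∑ i ∈ Finset.range (n + 1), l' i)) ^ (-p))
      = ∑ n ∈ Finset.range (M + 1), l n *
        ((∑ i ∈ Finset.range (n + 1), l i * a i) / (∑ i ∈ Finset.range (n + 1), l i)) ^ (-p) := by
    refine Finset.sum_congr rfl fun n hn => ?_
    obtain ⟨hA, hL⟩ := inner_eq n hn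
    rw [Finset.mem_range] at hn
    rw [hA, hL]
    simp only [hl'def]
    rw [if_pos hn]
  rw [e1, e2] at haux
  have hpos : 0 < (∑ i ∈ Finset.range (M + 1), l' i) *
      ((∑ i ∈ Finset.range (M + 1), l' i * a' i) / (∑ i ∈ Finset.range (M + 1), l' i)) ^ (-p) := by
    have h1 : 0 < ∑ i ∈ Finset.range (M + 1), l' i :=
      Finset.sum_pos (fun i _ => hl' i) (by simp)
    have h2 : 0 < ∑ i ∈ Finset.range (M + 1), l' i * a' i :=
      Finset.sum_pos (fun i _ => mul_pos (hl' i) (ha' i)) (by simp)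
    positivity
  rw [div_mul_eq_mul_div, le_div_iff₀ hp]
  nlinarith [haux, hpos]
end

section
/- Let p > 0, let N be a positive integer, and let a_1,…,a_N and λ_1,…,λ_N be positive real numbers. Set Λ_n = λ_1 + ⋯ + λ_n and A_n = λ_1 a_1 + ⋯ + λ_n a_n. Then ∑_{n=1}^N λ_n (A_n/Λ_n)^{-p} − (p/(p+1)) ∑_{n=1}^N λ_n a_n (A_n/Λ_n)^{-p-1} ≥ (Λ_N/(p+1)) · (A_N/Λ_N)^{-p}. -/
open Finset

private lemma tangent_ineq (p : ℝ) (hp : 0 < p) {x y : ℝ} (hx : 0 < x) (hy : 0 < y) :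
    (p + 1) * y ^ (-p) ≤ x ^ (-p) + p * (x * y ^ (-p - 1)) := by
  have hp1 : (0:ℝ) < p + 1 := by linarith
  set t := x / y with ht
  have htp : 0 < t := div_pos hx hy
  have key : (p + 1) ≤ t ^ (-p) + p * t := by
    have w1 : (0:ℝ) ≤ 1 / (p + 1) := by positivity
    have w2 : (0:ℝ) ≤ p / (p + 1) := by positivity
    have hw : 1 / (p + 1) + p / (p + 1) = 1 := by field_simp; ring
    have hgm := Real.geom_mean_le_arith_mean2_weighted w1 w2
      (Real.rpow_pos_of_pos htp (-p)).le htp.le hw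
    have hprod : (t ^ (-p)) ^ (1 / (p + 1)) * t ^ (p / (p + 1)) = 1 := by
      rw [← Real.rpow_mul htp.le, ← Real.rpow_add htp,
        show (-p) * (1 / (p + 1)) + p / (p + 1) = 0 by (field_simp; ring), Real.rpow_zero]
    rw [hprod] at hgm
    have h2 : (p + 1) * (1 / (p + 1) * t ^ (-p) + p / (p + 1) * t)
        = t ^ (-p) + p * t := by field_simp
    nlinarith [mul_le_mul_of_nonneg_left hgm hp1.le]
  have hxy : x ^ (-p) = y ^ (-p) * t ^ (-p) := by
    rw [ht, Real.div_rpow hx.le hy.le]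
    field_simp
  have hy1 : y ^ (-p - 1) = y ^ (-p) * y⁻¹ := by
    rw [show -p - 1 = -p + (-1) by ring, Real.rpow_add hy, Real.rpow_neg_one]
  have hxy2 : x * y ^ (-p - 1) = t * y ^ (-p) := by
    rw [hy1, ht]
    field_simp
  have hscale := mul_le_mul_of_nonneg_left key (Real.rpow_pos_of_pos hy (-p)).le
  rw [hxy, hxy2]
  nlinarith [hscale]

private lemma step_ineq (p : ℝ) (hp : 0 < p) {L A lam aa : ℝ} (hL : 0 < L) (hA : 0 < A)
    (hlam : 0 < lam) (haa : 0 < aa) :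
    (L + lam) / (p + 1) * ((A + lam * aa) / (L + lam)) ^ (-p)
      - L / (p + 1) * (A / L) ^ (-p)
      ≤ lam * ((A + lam * aa) / (L + lam)) ^ (-p)
        - p / (p + 1) * (lam * aa * ((A + lam * aa) / (L + lam)) ^ (-p - 1)) := by
  have hp1 : (0:ℝ) < p + 1 := by linarith
  set α₀ : ℝ := A / L with hα₀
  set α₁ : ℝ := (A + lam * aa) / (L + lam) with hα₁
  have hα₀p : 0 < α₀ := div_pos hA hL
  have hα₁p : 0 < α₁ := div_pos (by positivity) (by positivity)
  set X : ℝ := α₁ ^ (-p) with hX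
  set Y : ℝ := α₁ ^ (-p - 1) with hYdef
  set Z : ℝ := α₀ ^ (-p) with hZ
  have hY : α₁ * Y = X := by
    rw [hX, hYdef, ← Real.rpow_one_add' (le_of_lt hα₁p) (by intro h; nlinarith),
      show 1 + (-p - 1) = -p by ring]
  have hA' : lam * aa = (L + lam) * α₁ - L * α₀ := by
    rw [hα₀, hα₁]
    field_simp
    ring
  have htan : (p + 1) * X ≤ Z + p * (α₀ * Y) := tangent_ineq p hp hα₀p hα₁p
  have e_eq : lam * X - p / (p + 1) * (lam * aa * Y)
      - ((L + lam) / (p + 1) * X - L / (p + 1) * Z)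
      = (L / (p + 1)) * (Z + p * (α₀ * Y) - (p + 1) * X) := by
    have h1 : lam * aa * Y = (L + lam) * X - L * (α₀ * Y) := by
      rw [hA']
      linear_combination (L + lam) * hY
    rw [h1]
    field_simp
    ring
  nlinarith [mul_le_mul_of_nonneg_left (sub_nonneg.mpr htan)
    (le_of_lt (div_pos hL hp1))]


/-- **Inequality (2.8).** For `p > 0`, `N ≥ 1` and positive reals `a₁,…,a_N`, `λ₁,…,λ_N`,
with `Λₙ = λ₁ + ⋯ + λₙ` and `Aₙ = λ₁a₁ + ⋯ + λₙaₙ`,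
`∑ λₙ (Aₙ/Λₙ)^{-p} − (p/(p+1)) ∑ λₙ aₙ (Aₙ/Λₙ)^{-p-1} ≥ (Λ_N/(p+1)) (A_N/Λ_N)^{-p}`. -/
theorem copson_lemma_strong (p : ℝ) (hp : 0 < p) (N : ℕ) (hN : 0 < N)
    (a l : ℕ → ℝ) (ha : ∀ n < N, 0 < a n) (hl : ∀ n < N, 0 < l n) :
    (∑ n ∈ Finset.range N, l n *
        ((∑ i ∈ Finset.range (n + 1), l i * a i) / (∑ i ∈ Finset.range (n + 1), l i)) ^ (-p))
      - (p / (p + 1)) *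
        ∑ n ∈ Finset.range N, l n * a n *
          ((∑ i ∈ Finset.range (n + 1), l i * a i) / (∑ i ∈ Finset.range (n + 1), l i)) ^ (-p - 1)
      ≥ ((∑ i ∈ Finset.range N, l i) / (p + 1)) *
          ((∑ i ∈ Finset.range N, l i * a i) / (∑ i ∈ Finset.range N, l i)) ^ (-p) := by
  have hp1 : (0:ℝ) < p + 1 := by linarith
  induction N with
  | zero => exact absurd hN (lt_irrefl 0)
  | succ N ih =>
    rcases Nat.eq_zero_or_pos N with rfl | hN'
    · -- base case N = 1
      simp only [Finset.sum_range_one, Finset.sum_range_succ, Finset.sum_range_zero, zero_add]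
      have ha0 : 0 < a 0 := ha 0 (by norm_num)
      have hl0 : 0 < l 0 := hl 0 (by norm_num)
      have hq : l 0 * a 0 / l 0 = a 0 := by field_simp
      rw [hq]
      have h1 : a 0 * a 0 ^ (-p - 1) = a 0 ^ (-p) := by
        rw [← Real.rpow_one_add' ha0.le (by intro h; nlinarith),
          show 1 + (-p - 1) = -p by ring]
      have hX : 0 < a 0 ^ (-p) := Real.rpow_pos_of_pos ha0 _
      have : l 0 * a 0 * a 0 ^ (-p - 1) = l 0 * a 0 ^ (-p) := by
        rw [mul_assoc, h1]
      rw [this]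
      rw [ge_iff_le]
      have : l 0 / (p + 1) * a 0 ^ (-p) = l 0 * a 0 ^ (-p) - p / (p + 1) * (l 0 * a 0 ^ (-p)) := by
        field_simp; ring
      rw [this]
    · -- inductive step
      have ha' : ∀ n < N, 0 < a n := fun n hn => ha n (hn.trans (Nat.lt_succ_self N))
      have hl' : ∀ n < N, 0 < l n := fun n hn => hl n (hn.trans (Nat.lt_succ_self N))
      have IH := ih hN' ha' hl'
      have haN : 0 < a N := ha N (Nat.lt_succ_self N)
      have hlN : 0 < l N := hl N (Nat.lt_succ_self N)
      have hLpos : 0 < ∑ i ∈ Finset.range N, l i :=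
        Finset.sum_pos (fun i hi => hl' i (Finset.mem_range.mp hi)) (by
          exact Finset.nonempty_range_iff.mpr (Nat.pos_iff_ne_zero.mp hN'))
      have hApos : 0 < ∑ i ∈ Finset.range N, l i * a i :=
        Finset.sum_pos (fun i hi => mul_pos (hl' i (Finset.mem_range.mp hi))
          (ha' i (Finset.mem_range.mp hi))) (by
          exact Finset.nonempty_range_iff.mpr (Nat.pos_iff_ne_zero.mp hN'))
      rw [Finset.sum_range_succ, Finset.sum_range_succ (fun n => l n * a n * _),
        Finset.sum_range_succ (f := l), Finset.sum_range_succ (f := fun i => l i * a i)]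
      have hstep := step_ineq p hp hLpos hApos hlN haN
      rw [ge_iff_le]
      have := IH
      -- combine
      set S1 := ∑ n ∈ Finset.range N, l n *
        ((∑ i ∈ Finset.range (n + 1), l i * a i) / (∑ i ∈ Finset.range (n + 1), l i)) ^ (-p)
      set S2 := ∑ n ∈ Finset.range N, l n * a n *
        ((∑ i ∈ Finset.range (n + 1), l i * a i) / (∑ i ∈ Finset.range (n + 1), l i)) ^ (-p - 1)
      set L := ∑ i ∈ Finset.range N, l i
      set A := ∑ i ∈ Finset.range N, l i * a i
      have hstep' := hstep
      rw [mul_left_comm] at hstep'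
      nlinarith [hstep, IH]
end

section
/- Let p > 0, let ε ∈ (0,1], let N be a positive integer, and let a_1,…,a_N and λ_1,…,λ_N be positive real numbers. Set Λ_n = λ_1 + ⋯ + λ_n and A_n = λ_1 a_1 + ⋯ + λ_n a_n. Then ∑_{n=1}^N λ_n a_n^ε (A_n/Λ_n)^{-p-ε} ≤ ((p+1)/p)^ε · ∑_{n=1}^N λ_n (A_n/Λ_n)^{-p}. -/
open Finset

lemma young_aux {p L B lam A : ℝ} (hp : 0 < p) (hL : 0 < L) (hB : 0 < B)
    (hlam : 0 < lam) (hA : 0 < A) :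
    (p+1) * (L * (lam^p * A^(-p))) ≤ L^(p+1) * B^(-p) + p * (B * (lam^(p+1) * A^(-p-1))) := by
  set t : ℝ := L * A / (lam * B) with ht
  have htpos : 0 < t := by positivity
  have hbern : (p+1) * t - p ≤ t^(p+1) := by
    have h := one_add_mul_self_le_rpow_one_add (s := t - 1) (by linarith) (p := p+1) (by linarith)
    have h2 : (1:ℝ) + (t-1) = t := by ring
    rw [h2] at h; linarith
  -- divide Bernoulli by t : (p+1) - p/t ≤ t^p, i.e. (p+1) ≤ t^p + p * t⁻¹
  have hmain : (p+1) ≤ t^p + p * t⁻¹ := by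
    have h3 : t^(p+1) = t^p * t := by
      rw [Real.rpow_add htpos, Real.rpow_one]
    have h4 : ((p+1) * t - p) * t⁻¹ ≤ t^(p+1) * t⁻¹ :=
      mul_le_mul_of_nonneg_right hbern (by positivity)
    rw [h3, mul_assoc, mul_inv_cancel₀ htpos.ne', mul_one] at h4
    have h5 : ((p+1) * t - p) * t⁻¹ = (p+1) - p * t⁻¹ := by
      field_simp
    rw [h5] at h4; linarith
  have hX : (0:ℝ) < L * (lam^p * A^(-p)) := by positivity
  have := mul_le_mul_of_nonneg_right hmain hX.le
  have e1 : t^p * (L * (lam^p * A^(-p))) = L^(p+1) * B^(-p) := by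
    rw [ht, Real.div_rpow (by positivity) (by positivity),
      Real.mul_rpow hL.le hA.le, Real.mul_rpow hlam.le hB.le,
      Real.rpow_add hL, Real.rpow_one, Real.rpow_neg hA.le, Real.rpow_neg hB.le]
    have hAp : (0:ℝ) < A^p := Real.rpow_pos_of_pos hA p
    have hlamp : (0:ℝ) < lam^p := Real.rpow_pos_of_pos hlam p
    field_simp
  have e2 : t⁻¹ * (L * (lam^p * A^(-p))) = B * (lam^(p+1) * A^(-p-1)) := by
    rw [ht, Real.rpow_add hlam, Real.rpow_one]
    have : A^(-p-1) = A^(-p) * A⁻¹ := by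
      rw [← Real.rpow_neg_one A, ← Real.rpow_add hA]; ring_nf
    rw [this]
    field_simp
  calc (p+1) * (L * (lam^p * A^(-p))) ≤ (t^p + p * t⁻¹) * (L * (lam^p * A^(-p))) := this
    _ = t^p * (L * (lam^p * A^(-p))) + p * (t⁻¹ * (L * (lam^p * A^(-p)))) := by ring
    _ = L^(p+1) * B^(-p) + p * (B * (lam^(p+1) * A^(-p-1))) := by rw [e1, e2]

lemma key_lemma (p : ℝ) (hp : 0 < p) (N : ℕ) (a l : ℕ → ℝ)
    (ha : ∀ n < N, 0 < a n) (hl : ∀ n < N, 0 < l n) :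
    (∑ n ∈ range N, l n * a n *
        ((∑ i ∈ range (n + 1), l i * a i) / (∑ i ∈ range (n + 1), l i)) ^ (-p - 1))
      ≤ (p + 1) / p *
        ∑ n ∈ range N, l n *
          ((∑ i ∈ range (n + 1), l i * a i) / (∑ i ∈ range (n + 1), l i)) ^ (-p) := by
  set Lam : ℕ → ℝ := fun n => ∑ i ∈ range n, l i with hLam
  set A : ℕ → ℝ := fun n => ∑ i ∈ range n, l i * a i with hA
  have hLpos : ∀ n ≤ N, 0 < n → 0 < Lam n := fun n hn h0 =>
    Finset.sum_pos (fun i hi => hl i (lt_of_lt_of_le (mem_range.1 hi) hn)) (by simpa using h0.ne')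
  have hApos : ∀ n ≤ N, 0 < n → 0 < A n := fun n hn h0 =>
    Finset.sum_pos (fun i hi => mul_pos (hl i (lt_of_lt_of_le (mem_range.1 hi) hn))
      (ha i (lt_of_lt_of_le (mem_range.1 hi) hn))) (by simpa using h0.ne')
  set F : ℕ → ℝ := fun n => Lam n ^ (p+1) * A n ^ (-p) with hF
  have hterm : ∀ n < N,
      p * (l n * a n * (A (n+1) / Lam (n+1)) ^ (-p-1)) + (F (n+1) - F n)
        ≤ (p+1) * (l n * (A (n+1) / Lam (n+1)) ^ (-p)) := by
    intro n hn
    have hLn1 : 0 < Lam (n+1) := hLpos (n+1) hn (Nat.succ_pos n)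
    have hAn1 : 0 < A (n+1) := hApos (n+1) hn (Nat.succ_pos n)
    have hln : 0 < l n := hl n hn
    have han : 0 < a n := ha n hn
    have hdiv1 : (A (n+1) / Lam (n+1)) ^ (-p-1) = Lam (n+1) ^ (p+1) * A (n+1) ^ (-p-1) := by
      rw [Real.div_rpow hAn1.le hLn1.le, div_eq_mul_inv, ← Real.rpow_neg hLn1.le,
        show -(-p-1:ℝ) = p+1 from by ring, mul_comm]
    have hdiv2 : (A (n+1) / Lam (n+1)) ^ (-p) = Lam (n+1) ^ p * A (n+1) ^ (-p) := by
      rw [Real.div_rpow hAn1.le hLn1.le, div_eq_mul_inv, ← Real.rpow_neg hLn1.le,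
        show -(-p:ℝ) = p from by ring, mul_comm]
    have hAs : A (n+1) = A n + l n * a n := by simp [hA, Finset.sum_range_succ]
    have hLs : Lam (n+1) = Lam n + l n := by simp [hLam, Finset.sum_range_succ]
    have hAA : A (n+1) * A (n+1) ^ (-p-1) = A (n+1) ^ (-p) := by
      nth_rewrite 1 [← Real.rpow_one (A (n+1))]
      rw [← Real.rpow_add hAn1, show (1:ℝ) + (-p-1) = -p from by ring]
    have hLL : Lam (n+1) * Lam (n+1) ^ p = Lam (n+1) ^ (p+1) := by
      nth_rewrite 1 [← Real.rpow_one (Lam (n+1))]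
      rw [← Real.rpow_add hLn1, show (1:ℝ) + p = p+1 from by ring]
    rw [hdiv1, hdiv2]
    simp only [hF]
    rcases Nat.eq_zero_or_pos n with rfl | hn0
    · -- first term : equality
      have hF0 : Lam 0 ^ (p+1) * A 0 ^ (-p) = 0 := by
        simp [hA, hLam, Real.zero_rpow (show p + 1 ≠ 0 by linarith)]
      rw [show (0:ℕ)+1 = 1 from rfl] at *
      have q1 : p * Lam 1 ^(p+1) * (A 1 * A 1 ^ (-p-1)) = p * Lam 1^(p+1) * A 1^(-p) := by
        rw [hAA]
      have q2 : (p+1) * (Lam 1 * Lam 1 ^ p) * A 1 ^(-p) = (p+1) * Lam 1^(p+1) * A 1^(-p) := by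
        rw [hLL]
      have hA00 : A 0 = 0 := by simp [hA]
      have hL00 : Lam 0 = 0 := by simp [hLam]
      rw [hF0]
      rw [show l 0 * a 0 = A 1 - A 0 from by linarith, show l 0 = Lam 1 - Lam 0 from by linarith,
        hA00, hL00]
      linarith [q1, q2]
    · have hLn : 0 < Lam n := hLpos n (le_of_lt hn) hn0
      have hAn : 0 < A n := hApos n (le_of_lt hn) hn0
      have hyoung := young_aux (p := p) (L := Lam n) (B := A n) (lam := Lam (n+1))
        (A := A (n+1)) hp hLn hAn hLn1 hAn1
      have q1 : p * Lam (n+1) ^(p+1) * (A (n+1) * A (n+1) ^ (-p-1))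
          = p * Lam (n+1)^(p+1) * A (n+1)^(-p) := by rw [hAA]
      have q2 : (p+1) * (Lam (n+1) * Lam (n+1) ^ p) * A (n+1) ^(-p)
          = (p+1) * Lam (n+1)^(p+1) * A (n+1)^(-p) := by rw [hLL]
      rw [show l n * a n = A (n+1) - A n from by linarith,
        show l n = Lam (n+1) - Lam n from by linarith]
      nlinarith [hyoung, q1, q2]
  have hsum := Finset.sum_le_sum (fun n hn => hterm n (mem_range.1 hn))
  rw [Finset.sum_add_distrib, Finset.sum_range_sub F N] at hsum
  have hF0 : F 0 = 0 := by
    simp [hF, hA, hLam, Real.zero_rpow (show p + 1 ≠ 0 by linarith)]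
  have hFN : 0 ≤ F N := by
    apply mul_nonneg (Real.rpow_nonneg ?_ _) (Real.rpow_nonneg ?_ _)
    · exact Finset.sum_nonneg fun i hi => (hl i (mem_range.1 hi)).le
    · exact Finset.sum_nonneg fun i hi =>
        (mul_pos (hl i (mem_range.1 hi)) (ha i (mem_range.1 hi))).le
  rw [hF0, sub_zero, ← Finset.mul_sum, ← Finset.mul_sum] at hsum
  rw [div_mul_eq_mul_div, le_div_iff₀ hp]
  simp only [hA, hLam] at hsum
  linarith [hsum, hFN]

/-- **Inequality (2.7).** For `p > 0`, `ε ∈ (0,1]`, `N ≥ 1` and positive reals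
`a₁,…,a_N`, `λ₁,…,λ_N`, with `Λₙ = λ₁ + ⋯ + λₙ` and `Aₙ = λ₁a₁ + ⋯ + λₙaₙ`,
`∑ λₙ aₙ^ε (Aₙ/Λₙ)^{-p-ε} ≤ ((p+1)/p)^ε ∑ λₙ (Aₙ/Λₙ)^{-p}`. -/
theorem copson_lemma_eps (p ε : ℝ) (hp : 0 < p) (hε : ε ∈ Set.Ioc (0 : ℝ) 1)
    (N : ℕ) (hN : 0 < N) (a l : ℕ → ℝ)
    (ha : ∀ n < N, 0 < a n) (hl : ∀ n < N, 0 < l n) :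
    (∑ n ∈ Finset.range N, l n * (a n) ^ ε *
        ((∑ i ∈ Finset.range (n + 1), l i * a i) / (∑ i ∈ Finset.range (n + 1), l i)) ^ (-p - ε))
      ≤ ((p + 1) / p) ^ ε *
        ∑ n ∈ Finset.range N, l n *
          ((∑ i ∈ Finset.range (n + 1), l i * a i) / (∑ i ∈ Finset.range (n + 1), l i)) ^ (-p) := by
  obtain ⟨hε0, hε1⟩ := hε
  set C : ℝ := (p+1)/p with hC
  have hCpos : 0 < C := by positivity
  set t : ℕ → ℝ := fun n =>
    (∑ i ∈ Finset.range (n + 1), l i * a i) / (∑ i ∈ Finset.range (n + 1), l i) with htdef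
  have htpos : ∀ n < N, 0 < t n := by
    intro n hn
    have h1 : 0 < ∑ i ∈ range (n+1), l i * a i :=
      Finset.sum_pos (fun i hi => mul_pos (hl i (lt_of_lt_of_le (mem_range.1 hi) hn))
        (ha i (lt_of_lt_of_le (mem_range.1 hi) hn))) (by simp)
    have h2 : 0 < ∑ i ∈ range (n+1), l i :=
      Finset.sum_pos (fun i hi => hl i (lt_of_lt_of_le (mem_range.1 hi) hn)) (by simp)
    exact div_pos h1 h2
  have hterm : ∀ n < N,
      l n * (a n) ^ ε * t n ^ (-p - ε)
        ≤ C ^ ε * (ε / C * (l n * a n * t n ^ (-p-1)) + (1-ε) * (l n * t n ^ (-p))) := by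
    intro n hn
    have htn := htpos n hn
    have han := ha n hn
    have hln := hl n hn
    have hgeom := Real.geom_mean_le_arith_mean2_weighted (w₁ := ε) (w₂ := 1-ε)
      (p₁ := a n * t n ^ (-p-1) / C) (p₂ := t n ^ (-p))
      hε0.le (by linarith) (by positivity) (by positivity) (by ring)
    have heq : (a n * t n ^ (-p-1) / C) ^ ε * (t n ^ (-p)) ^ (1-ε)
        = (a n) ^ ε * t n ^ (-p - ε) / C ^ ε := by
      rw [Real.div_rpow (by positivity) hCpos.le, Real.mul_rpow han.le (by positivity),
        ← Real.rpow_mul htn.le, ← Real.rpow_mul htn.le,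
        show (-p - ε : ℝ) = (-p-1)*ε + (-p)*(1-ε) from by ring, Real.rpow_add htn]
      ring
    rw [heq] at hgeom
    have h2 := mul_le_mul_of_nonneg_left hgeom (by positivity : (0:ℝ) ≤ l n * C ^ ε)
    calc l n * (a n) ^ ε * t n ^ (-p - ε)
        = l n * C ^ ε * ((a n) ^ ε * t n ^ (-p - ε) / C ^ ε) := by
          field_simp
      _ ≤ l n * C ^ ε * (ε * (a n * t n ^ (-p-1) / C) + (1-ε) * t n ^ (-p)) := h2
      _ = C ^ ε * (ε / C * (l n * a n * t n ^ (-p-1)) + (1-ε) * (l n * t n ^ (-p))) := by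
          field_simp
  have hsum := Finset.sum_le_sum (fun n hn => hterm n (mem_range.1 hn))
  have hkey := key_lemma p hp N a l ha hl
  set S0 : ℝ := ∑ n ∈ range N, l n * t n ^ (-p) with hS0
  set S1 : ℝ := ∑ n ∈ range N, l n * a n * t n ^ (-p-1) with hS1
  have hkey' : S1 ≤ C * S0 := hkey
  have hsum' : (∑ n ∈ range N, l n * (a n) ^ ε * t n ^ (-p - ε))
      ≤ C ^ ε * (ε / C * S1 + (1-ε) * S0) := by
    calc (∑ n ∈ range N, l n * (a n) ^ ε * t n ^ (-p - ε))
        ≤ ∑ n ∈ range N, C ^ ε * (ε / C * (l n * a n * t n ^ (-p-1)) + (1-ε) * (l n * t n ^ (-p))) := hsum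
      _ = C ^ ε * (ε / C * S1 + (1-ε) * S0) := by
          rw [← Finset.mul_sum, Finset.sum_add_distrib, ← Finset.mul_sum, ← Finset.mul_sum]
  have hfin : C ^ ε * (ε / C * S1 + (1-ε) * S0) ≤ C ^ ε * S0 := by
    have h1 : ε / C * S1 ≤ ε / C * (C * S0) :=
      mul_le_mul_of_nonneg_left hkey' (by positivity)
    have h2 : ε / C * (C * S0) + (1-ε) * S0 = S0 := by
      field_simp
      ring
    nlinarith [Real.rpow_pos_of_pos hCpos ε]
  calc _ ≤ C ^ ε * (ε / C * S1 + (1-ε) * S0) := hsum'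
    _ ≤ C ^ ε * S0 := hfin
end

section
/- Let q > 1, M ≥ 1, and let f : [0,1) → (0,∞) be monotone and satisfy the A_q condition with constant M on every interval of the form (0,t) and every interval of the form (t,1), for t ∈ (0,1). Then there exists a constant M'' depending only on M and q such that f satisfies the A_q condition with constant M'' on every subinterval (a,b) ⊆ [0,1). -/
open MeasureTheory Set
open intervalIntegral Filter Topology


namespace MuckAux

/-- Algebra: unscale an A_q-type product inequality. -/
lemma unscale {t A B M r : ℝ} (ht : 0 < t) (hB : 0 ≤ B)
    (h : ((1/t)*A)*((1/t)*B)^r ≤ M) : A * B^r ≤ t * t^r * M := by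
  have h1 : ((1/t)*B)^r = (1/t)^r * B^r := Real.mul_rpow (by positivity) hB
  have h3 : t * (1/t) = 1 := by field_simp
  have h2 : t^r * (1/t)^r = 1 := by
    rw [← Real.mul_rpow ht.le (by positivity), h3, Real.one_rpow]
  have htr : (0:ℝ) < t^r := Real.rpow_pos_of_pos ht r
  calc A * B^r = (t*(1/t)) * (t^r*(1/t)^r) * (A*B^r) := by rw [h3, h2]; ring
    _ = (t*t^r) * (((1/t)*A)*((1/t)^r*B^r)) := by ring
    _ ≤ (t*t^r) * M := by
        apply mul_le_mul_of_nonneg_left _ (by positivity)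
        rw [← h1]; exact h
    _ = t * t^r * M := by ring

lemma assemble {L AI BI X Y K r : ℝ} (hr : 0 ≤ r)
    (hAI : 0 ≤ AI) (hBI : 0 ≤ BI) (hL : 0 < L)
    (hA : (1/L)*AI ≤ X) (hB : (1/L)*BI ≤ Y) (hXY : X * Y^r ≤ K) :
    ((1/L)*AI)*((1/L)*BI)^r ≤ K := by
  have h0B : (0:ℝ) ≤ (1/L)*BI := by positivity
  have h0A : (0:ℝ) ≤ (1/L)*AI := by positivity
  have h1 : ((1/L)*BI)^r ≤ Y^r := Real.rpow_le_rpow h0B hB hr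
  calc ((1/L)*AI)*((1/L)*BI)^r ≤ X * Y^r := by
        apply mul_le_mul hA h1 (Real.rpow_nonneg h0B r) (le_trans h0A hA)
    _ ≤ K := hXY

lemma chain {A B T dA dB X Y M r : ℝ} (hr : 0 < r) (hdA : 0 < dA) (hdB : 0 < dB)
    (hX : 0 ≤ X) (hY : 0 ≤ Y) (hM : 0 ≤ M) (hT : 0 ≤ T)
    (hA : dA * X ≤ A) (hB : dB * Y ≤ B) (h : A * B^r ≤ T*T^r*M) :
    X * Y^r ≤ (T/dA)*((T/dB)^r)*M := by
  have hB0 : 0 ≤ B := le_trans (by positivity) hB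
  have hA' : X ≤ A/dA := (le_div_iff₀ hdA).mpr (by linarith)
  have hB' : Y ≤ B/dB := (le_div_iff₀ hdB).mpr (by linarith)
  have hBr : Y^r ≤ (B/dB)^r := Real.rpow_le_rpow hY hB' hr.le
  have step : X*Y^r ≤ (A/dA)*((B/dB)^r) :=
    mul_le_mul hA' hBr (Real.rpow_nonneg hY r) (le_trans hX hA')
  have e1 : (A/dA)*((B/dB)^r) = (A*B^r)/(dA*dB^r) := by
    rw [Real.div_rpow hB0 hdB.le]; ring
  have hden : (0:ℝ) < dA*dB^r := by positivity
  have step2 : (A*B^r)/(dA*dB^r) ≤ (T*T^r*M)/(dA*dB^r) := by gcongr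
  have e2 : (T*T^r*M)/(dA*dB^r) = (T/dA)*((T/dB)^r)*M := by
    rw [Real.div_rpow hT hdB.le]; ring
  calc X*Y^r ≤ (A/dA)*((B/dB)^r) := step
    _ = (A*B^r)/(dA*dB^r) := e1
    _ ≤ (T*T^r*M)/(dA*dB^r) := step2
    _ = (T/dA)*((T/dB)^r)*M := e2

lemma const_le {c1 c2 M q r : ℝ} (hr : 0 < r) (hqr : q = 1 + r) (hM : 0 ≤ M)
    (h1 : 0 ≤ c1) (h1' : c1 ≤ 8) (h2 : 0 ≤ c2) (h2' : c2 ≤ 4) :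
    c1*(c2^r)*M ≤ 2*4^q*M := by
  have e : (4:ℝ)^q = 4*4^r := by rw [hqr, Real.rpow_add (by norm_num), Real.rpow_one]
  have h3 : c2^r ≤ (4:ℝ)^r := Real.rpow_le_rpow h2 h2' hr.le
  have h4 : 0 ≤ c2^r := Real.rpow_nonneg h2 r
  have h5 : c1*c2^r ≤ 8*(4:ℝ)^r := mul_le_mul h1' h3 h4 (by norm_num)
  calc c1*(c2^r)*M ≤ 8*(4:ℝ)^r*M := mul_le_mul_of_nonneg_right h5 hM
    _ = 2*4^q*M := by rw [e]; ring

/-- Monotone convergence: bounded partial integrals give integrability on `Ioo 0 1`. -/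
lemma integrableOn_of_partial {h : ℝ → ℝ} (hm : Measurable h)
    (h0 : ∀ x ∈ Ioo (0:ℝ) 1, 0 ≤ h x) {C : ℝ}
    (hb : ∀ t ∈ Ioo (0:ℝ) 1, IntegrableOn h (Ioc 0 t) ∧ (∫ x in Ioc (0:ℝ) t, h x) ≤ C) :
    IntegrableOn h (Ioo 0 1) := by
  set S : ℕ → Set ℝ := fun n => Ioc (0:ℝ) (1 - 1/(n+2)) with hS
  have htn : ∀ n : ℕ, (1 - 1/((n:ℝ)+2)) ∈ Ioo (0:ℝ) 1 := by
    intro n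
    constructor
    · have h1 : 1/((n:ℝ)+2) ≤ 1/2 := by
        apply one_div_le_one_div_of_le <;> [norm_num; push_cast]
        linarith [Nat.cast_nonneg (α := ℝ) n]
      linarith
    · have h1 : 0 < 1/((n:ℝ)+2) := by positivity
      linarith
  have hSsub : ∀ n, S n ⊆ Ioo (0:ℝ) 1 := by
    intro n x hx
    exact ⟨hx.1, lt_of_le_of_lt hx.2 (htn n).2⟩
  have hUnion : Ioo (0:ℝ) 1 = ⋃ n, S n := by
    ext x
    simp only [mem_iUnion, hS, mem_Ioc, mem_Ioo]
    constructor
    · rintro ⟨hx0, hx1⟩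
      obtain ⟨n, hn⟩ := exists_nat_one_div_lt (by linarith : (0:ℝ) < 1 - x)
      refine ⟨n, hx0, ?_⟩
      have : 1/((n:ℝ)+2) ≤ 1/((n:ℝ)+1) := by
        apply one_div_le_one_div_of_le <;> [positivity; linarith]
      push_cast at hn ⊢
      linarith
    · rintro ⟨n, hx0, hx2⟩
      exact ⟨hx0, lt_of_le_of_lt hx2 (htn n).2⟩
  have hdir : Directed (· ⊆ ·) S := by
    apply Monotone.directed_le
    intro m n hmn
    apply Ioc_subset_Ioc le_rfl
    have : 1/((n:ℝ)+2) ≤ 1/((m:ℝ)+2) := by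
      apply one_div_le_one_div_of_le
      · positivity
      · push_cast; linarith [(Nat.cast_le (α := ℝ)).mpr hmn]
    linarith
  set ν : Measure ℝ := volume.withDensity (fun x => ENNReal.ofReal (h x)) with hν
  have hmeasofReal : Measurable fun x => ENNReal.ofReal (h x) := hm.ennreal_ofReal
  have hνS : ∀ n, ν (S n) ≤ ENNReal.ofReal C := by
    intro n
    have ht := htn n
    obtain ⟨hint, hle⟩ := hb _ ht
    rw [hν, withDensity_apply _ measurableSet_Ioc]
    have hnn : 0 ≤ᵐ[volume.restrict (S n)] h := by
      filter_upwards [ae_restrict_mem (measurableSet_Ioc)] with x hx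
      exact h0 x (hSsub n hx)
    rw [← ofReal_integral_eq_lintegral_ofReal hint hnn]
    exact ENNReal.ofReal_le_ofReal hle
  have hνIoo : ν (Ioo 0 1) ≤ ENNReal.ofReal C := by
    rw [hUnion, hdir.measure_iUnion]
    exact iSup_le hνS
  refine ⟨hm.aestronglyMeasurable, ?_⟩
  rw [hasFiniteIntegral_iff_norm]
  have heq : ∫⁻ x in Ioo (0:ℝ) 1, ENNReal.ofReal ‖h x‖ = ν (Ioo 0 1) := by
    rw [hν, withDensity_apply _ measurableSet_Ioo]
    apply setLIntegral_congr_fun measurableSet_Ioo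
    exact fun x hx => by simp only [Real.norm_of_nonneg (h0 x hx)]
  rw [heq]
  exact lt_of_le_of_lt hνIoo ENNReal.ofReal_lt_top

/-- Core lemma: increasing case on `Ioo 0 1`, with integrability supplied. -/
lemma core (q M : ℝ) (hq : 1 < q) (hM : 1 ≤ M) (f : ℝ → ℝ)
    (hmeas : Measurable f)
    (hpos : ∀ x ∈ Ioo (0:ℝ) 1, 0 < f x)
    (hmono : MonotoneOn f (Ioo 0 1))
    (hintf : IntegrableOn f (Ioo 0 1))
    (hintg : IntegrableOn (fun y => f y ^ (-(1/(q-1)))) (Ioo 0 1))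
    (hyp : ∀ t ∈ Ioo (0:ℝ) 1,
      ((1/t) * ∫ y in (0:ℝ)..t, f y) *
          ((1/t) * ∫ y in (0:ℝ)..t, f y ^ (-(1/(q-1)))) ^ (q-1) ≤ M ∧
      ((1/(1-t)) * ∫ y in t..(1:ℝ), f y) *
          ((1/(1-t)) * ∫ y in t..(1:ℝ), f y ^ (-(1/(q-1)))) ^ (q-1) ≤ M) :
    ∀ a b : ℝ, 0 ≤ a → a < b → b ≤ 1 →
      ((1/(b-a)) * ∫ y in a..b, f y) *
          ((1/(b-a)) * ∫ y in a..b, f y ^ (-(1/(q-1)))) ^ (q-1) ≤ 2 * 4 ^ q * M := by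
  have hr : 0 < q - 1 := by linarith
  set r : ℝ := q - 1 with hrdef
  set g : ℝ → ℝ := fun y => f y ^ (-(1/(q-1))) with hgdef
  have hgmeas : Measurable g := by fun_prop
  have hgpos : ∀ x ∈ Ioo (0:ℝ) 1, 0 < g x := fun x hx =>
    Real.rpow_pos_of_pos (hpos x hx) _
  have hganti : ∀ x ∈ Ioo (0:ℝ) 1, ∀ y ∈ Ioo (0:ℝ) 1, x ≤ y → g y ≤ g x := by
    intro x hx y hy hxy
    have hfx := hpos x hx
    simp only [hgdef]
    rw [Real.rpow_neg (hfx.trans_le (hmono hx hy hxy)).le, Real.rpow_neg hfx.le]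
    exact inv_anti₀ (Real.rpow_pos_of_pos hfx _)
      (Real.rpow_le_rpow hfx.le (hmono hx hy hxy) (by positivity))
  -- interval integrability
  have hIf : ∀ u v : ℝ, 0 ≤ u → u ≤ v → v ≤ 1 → IntervalIntegrable f volume u v := by
    intro u v hu h hv
    exact (intervalIntegrable_iff_integrableOn_Ioo_of_le h).mpr
      (hintf.mono_set (Ioo_subset_Ioo hu hv))
  have hIg : ∀ u v : ℝ, 0 ≤ u → u ≤ v → v ≤ 1 → IntervalIntegrable g volume u v := by
    intro u v hu h hv
    exact (intervalIntegrable_iff_integrableOn_Ioo_of_le h).mpr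
      (hintg.mono_set (Ioo_subset_Ioo hu hv))
  -- nonnegativity of integrals
  have hconst : ∀ (c u v : ℝ), u ≤ v → ∫ _ in Ioo u v, c = (v - u) * c := by
    intro c u v huv
    rw [setIntegral_const, Real.volume_real_Ioo_of_le (by linarith), smul_eq_mul]
  have hnnf : ∀ u v : ℝ, 0 ≤ u → u ≤ v → v ≤ 1 → 0 ≤ ∫ y in u..v, f y := by
    intro u v hu h hv
    rw [integral_of_le h, integral_Ioc_eq_integral_Ioo]
    exact setIntegral_nonneg measurableSet_Ioo
      (fun x hx => (hpos x (Ioo_subset_Ioo hu hv hx)).le)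
  have hnng : ∀ u v : ℝ, 0 ≤ u → u ≤ v → v ≤ 1 → 0 ≤ ∫ y in u..v, g y := by
    intro u v hu h hv
    rw [integral_of_le h, integral_Ioc_eq_integral_Ioo]
    exact setIntegral_nonneg measurableSet_Ioo
      (fun x hx => (hgpos x (Ioo_subset_Ioo hu hv hx)).le)
  -- monotone subset comparison of integrals
  have hsubf : ∀ u v u' v' : ℝ, 0 ≤ u' → u' ≤ u → u ≤ v → v ≤ v' → v' ≤ 1 →
      (∫ y in u..v, f y) ≤ ∫ y in u'..v', f y := by
    intro u v u' v' h1 h2 h3 h4 h5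
    rw [integral_of_le h3, integral_of_le (by linarith), integral_Ioc_eq_integral_Ioo,
      integral_Ioc_eq_integral_Ioo]
    apply setIntegral_mono_set
      (hintf.mono_set (Ioo_subset_Ioo h1 h5))
      ?_ (HasSubset.Subset.eventuallyLE (Ioo_subset_Ioo h2 h4))
    filter_upwards [ae_restrict_mem measurableSet_Ioo] with x hx
    exact (hpos x (Ioo_subset_Ioo h1 h5 hx)).le
  have hsubg : ∀ u v u' v' : ℝ, 0 ≤ u' → u' ≤ u → u ≤ v → v ≤ v' → v' ≤ 1 →
      (∫ y in u..v, g y) ≤ ∫ y in u'..v', g y := by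
    intro u v u' v' h1 h2 h3 h4 h5
    rw [integral_of_le h3, integral_of_le (by linarith), integral_Ioc_eq_integral_Ioo,
      integral_Ioc_eq_integral_Ioo]
    apply setIntegral_mono_set
      (hintg.mono_set (Ioo_subset_Ioo h1 h5))
      ?_ (HasSubset.Subset.eventuallyLE (Ioo_subset_Ioo h2 h4))
    filter_upwards [ae_restrict_mem measurableSet_Ioo] with x hx
    exact (hgpos x (Ioo_subset_Ioo h1 h5 hx)).le
  -- pointwise vs averages
  have K1 : ∀ u v : ℝ, 0 ≤ u → u < v → v < 1 → (∫ y in u..v, f y) ≤ (v-u) * f v := by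
    intro u v hu huv hv
    rw [integral_of_le huv.le, integral_Ioc_eq_integral_Ioo, ← hconst (f v) u v huv.le]
    apply setIntegral_mono_on (hintf.mono_set (Ioo_subset_Ioo hu hv.le))
      (by simp [integrableOn_const, Real.volume_Ioo]) measurableSet_Ioo
    intro x hx
    exact hmono (Ioo_subset_Ioo hu hv.le hx) ⟨hu.trans_lt huv, hv⟩ hx.2.le
  have K2 : ∀ u v : ℝ, 0 < u → u < v → v ≤ 1 → (v-u) * f u ≤ ∫ y in u..v, f y := by
    intro u v hu huv hv
    rw [integral_of_le huv.le, integral_Ioc_eq_integral_Ioo, ← hconst (f u) u v huv.le]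
    apply setIntegral_mono_on (by simp [integrableOn_const, Real.volume_Ioo])
      (hintf.mono_set (Ioo_subset_Ioo hu.le hv)) measurableSet_Ioo
    intro x hx
    exact hmono ⟨hu, lt_of_lt_of_le huv hv⟩ (Ioo_subset_Ioo hu.le hv hx) hx.1.le
  have K3 : ∀ u v : ℝ, 0 < u → u < v → v ≤ 1 → (∫ y in u..v, g y) ≤ (v-u) * g u := by
    intro u v hu huv hv
    rw [integral_of_le huv.le, integral_Ioc_eq_integral_Ioo, ← hconst (g u) u v huv.le]
    apply setIntegral_mono_on (hintg.mono_set (Ioo_subset_Ioo hu.le hv))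
      (by simp [integrableOn_const, Real.volume_Ioo]) measurableSet_Ioo
    intro x hx
    exact hganti u ⟨hu, lt_of_lt_of_le huv hv⟩ x (Ioo_subset_Ioo hu.le hv hx) hx.1.le
  have K4 : ∀ u v : ℝ, 0 ≤ u → u < v → v < 1 → (v-u) * g v ≤ ∫ y in u..v, g y := by
    intro u v hu huv hv
    rw [integral_of_le huv.le, integral_Ioc_eq_integral_Ioo, ← hconst (g v) u v huv.le]
    apply setIntegral_mono_on (by simp [integrableOn_const, Real.volume_Ioo])
      (hintg.mono_set (Ioo_subset_Ioo hu hv.le)) measurableSet_Ioo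
    intro x hx
    exact hganti x (Ioo_subset_Ioo hu hv.le hx) v ⟨hu.trans_lt huv, hv⟩ hx.2.le
  have hqr : q = 1 + r := by rw [hrdef]; ring
  have hM0 : (0:ℝ) ≤ M := le_trans zero_le_one hM
  have hyp1 : ∀ t, t ∈ Ioo (0:ℝ) 1 →
      (∫ y in (0:ℝ)..t, f y) * (∫ y in (0:ℝ)..t, g y)^r ≤ t * t^r * M := by
    intro t ht
    exact unscale ht.1 (hnng 0 t le_rfl ht.1.le ht.2.le) (hyp t ht).1
  have hyp2 : ∀ t, t ∈ Ioo (0:ℝ) 1 →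
      (∫ y in t..(1:ℝ), f y) * (∫ y in t..(1:ℝ), g y)^r ≤ (1-t) * (1-t)^r * M := by
    intro t ht
    exact unscale (by linarith [ht.2] : (0:ℝ) < 1 - t)
      (hnng t 1 ht.1.le ht.2.le le_rfl) (hyp t ht).2
  -- Step 1 : the case b < 1
  have step1 : ∀ a b : ℝ, 0 ≤ a → a < b → b < 1 →
      ((1/(b-a)) * ∫ y in a..b, f y) * ((1/(b-a)) * ∫ y in a..b, g y)^r ≤ 2*4^q*M := by
    intro a b ha hab hb1
    have hL : 0 < b - a := by linarith
    have hb0 : 0 < b := lt_of_le_of_lt ha hab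
    have hAI : 0 ≤ ∫ y in a..b, f y := hnnf a b ha hab.le hb1.le
    have hBI : 0 ≤ ∫ y in a..b, g y := hnng a b ha hab.le hb1.le
    by_cases hcA : 2*a ≤ b
    · -- Case A : compare with (0, b)
      have hmem : b ∈ Ioo (0:ℝ) 1 := ⟨hb0, hb1⟩
      have hhyp := (hyp b hmem).1
      have hAb : 0 ≤ ∫ y in (0:ℝ)..b, f y := hnnf 0 b le_rfl hb0.le hb1.le
      have hBb : 0 ≤ ∫ y in (0:ℝ)..b, g y := hnng 0 b le_rfl hb0.le hb1.le
      have hdiv : (1:ℝ)/(b-a) ≤ 2/b := (div_le_div_iff₀ hL hb0).mpr (by linarith)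
      apply assemble hr.le hAI hBI hL
        (X := (2/b) * ∫ y in (0:ℝ)..b, f y) (Y := (2/b) * ∫ y in (0:ℝ)..b, g y)
      · exact mul_le_mul hdiv (hsubf a b 0 b le_rfl ha hab.le le_rfl hb1.le) hAI (by positivity)
      · exact mul_le_mul hdiv (hsubg a b 0 b le_rfl ha hab.le le_rfl hb1.le) hBI (by positivity)
      · have hBb' : (0:ℝ) ≤ (1/b) * ∫ y in (0:ℝ)..b, g y := by positivity
        have e1 : ((2:ℝ)/b * ∫ y in (0:ℝ)..b, g y)^r
            = 2^r * ((1/b * ∫ y in (0:ℝ)..b, g y))^r := by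
          rw [← Real.mul_rpow (by norm_num) hBb']
          congr 1
          ring
        have e2 : ((2:ℝ)/b * ∫ y in (0:ℝ)..b, f y) * ((2/b * ∫ y in (0:ℝ)..b, g y))^r
            = (2*2^r) * (((1/b) * ∫ y in (0:ℝ)..b, f y) * ((1/b * ∫ y in (0:ℝ)..b, g y))^r) := by
          rw [e1]; ring
        rw [e2]
        have h2r : (0:ℝ) < 2^r := Real.rpow_pos_of_pos (by norm_num) r
        calc (2*2^r) * (((1/b) * ∫ y in (0:ℝ)..b, f y) * ((1/b * ∫ y in (0:ℝ)..b, g y))^r)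
            ≤ (2*2^r)*M := mul_le_mul_of_nonneg_left hhyp (by positivity)
          _ = 2*(2^r)*M := by ring
          _ ≤ 2*4^q*M := const_le hr hqr hM0 (by norm_num) (by norm_num) (by norm_num) (by norm_num)
    · have ha0 : 0 < a := by nlinarith
      by_cases hcB : 1 + a ≤ 2*b
      · -- Case B : compare with (a, 1)
        have hmem : a ∈ Ioo (0:ℝ) 1 := ⟨ha0, lt_trans hab hb1⟩
        have hhyp := (hyp a hmem).2
        have h1a : 0 < 1 - a := by linarith [hmem.2]
        have hAb : 0 ≤ ∫ y in a..(1:ℝ), f y := hnnf a 1 ha hmem.2.le le_rfl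
        have hBb : 0 ≤ ∫ y in a..(1:ℝ), g y := hnng a 1 ha hmem.2.le le_rfl
        have hdiv : (1:ℝ)/(b-a) ≤ 2/(1-a) := (div_le_div_iff₀ hL h1a).mpr (by linarith)
        apply assemble hr.le hAI hBI hL
          (X := (2/(1-a)) * ∫ y in a..(1:ℝ), f y) (Y := (2/(1-a)) * ∫ y in a..(1:ℝ), g y)
        · exact mul_le_mul hdiv (hsubf a b a 1 ha le_rfl hab.le hb1.le le_rfl) hAI (by positivity)
        · exact mul_le_mul hdiv (hsubg a b a 1 ha le_rfl hab.le hb1.le le_rfl) hBI (by positivity)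
        · have hBb' : (0:ℝ) ≤ (1/(1-a)) * ∫ y in a..(1:ℝ), g y := by positivity
          have e1 : ((2:ℝ)/(1-a) * ∫ y in a..(1:ℝ), g y)^r
              = 2^r * ((1/(1-a) * ∫ y in a..(1:ℝ), g y))^r := by
            rw [← Real.mul_rpow (by norm_num) hBb']
            congr 1
            ring
          have e2 : ((2:ℝ)/(1-a) * ∫ y in a..(1:ℝ), f y) * ((2/(1-a) * ∫ y in a..(1:ℝ), g y))^r
              = (2*2^r) * (((1/(1-a)) * ∫ y in a..(1:ℝ), f y)
                  * ((1/(1-a) * ∫ y in a..(1:ℝ), g y))^r) := by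
            rw [e1]; ring
          rw [e2]
          have h2r : (0:ℝ) < 2^r := Real.rpow_pos_of_pos (by norm_num) r
          calc (2*2^r) * (((1/(1-a)) * ∫ y in a..(1:ℝ), f y)
                  * ((1/(1-a) * ∫ y in a..(1:ℝ), g y))^r)
              ≤ (2*2^r)*M := mul_le_mul_of_nonneg_left hhyp (by positivity)
            _ = 2*(2^r)*M := by ring
            _ ≤ 2*4^q*M := const_le hr hqr hM0 (by norm_num) (by norm_num) (by norm_num) (by norm_num)
      · -- Case C : middle intervals, compare with pointwise values
        have hbmem : b ∈ Ioo (0:ℝ) 1 := ⟨hb0, hb1⟩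
        have hamem : a ∈ Ioo (0:ℝ) 1 := ⟨ha0, lt_trans hab hb1⟩
        have hfb : 0 < f b := hpos b hbmem
        have hga : 0 < g a := hgpos a hamem
        apply assemble hr.le hAI hBI hL (X := f b) (Y := g a)
        · have k1 := K1 a b ha hab hb1
          calc (1/(b-a)) * ∫ y in a..b, f y ≤ (1/(b-a)) * ((b-a) * f b) :=
              mul_le_mul_of_nonneg_left k1 (by positivity)
            _ = f b := by field_simp
        · have k3 := K3 a b ha0 hab hb1.le
          calc (1/(b-a)) * ∫ y in a..b, g y ≤ (1/(b-a)) * ((b-a) * g a) :=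
              mul_le_mul_of_nonneg_left k3 (by positivity)
            _ = g a := by field_simp
        · by_cases hab1 : a + b ≤ 1
          · -- C1 : use the interval (0, b + a/2)
            have ht : (b + a/2) ∈ Ioo (0:ℝ) 1 := ⟨by linarith, by linarith⟩
            have hA : (a/2) * f b ≤ ∫ y in (0:ℝ)..(b + a/2), f y := by
              have k2 := K2 b (b + a/2) hb0 (by linarith) ht.2.le
              have e : (b + a/2 - b) = a/2 := by ring
              rw [e] at k2
              exact k2.trans (hsubf b (b + a/2) 0 (b + a/2) le_rfl hb0.le
                (by linarith) le_rfl ht.2.le)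
            have hB : a * g a ≤ ∫ y in (0:ℝ)..(b + a/2), g y := by
              have k4 := K4 0 a le_rfl ha0 hamem.2
              have e : (a - 0) = a := by ring
              rw [e] at k4
              exact k4.trans (hsubg 0 a 0 (b + a/2) le_rfl le_rfl ha
                (by linarith) ht.2.le)
            have hch := chain hr (by positivity : (0:ℝ) < a/2) ha0 hfb.le hga.le hM0
              (by linarith : (0:ℝ) ≤ b + a/2) hA hB (hyp1 (b + a/2) ht)
            refine hch.trans (const_le hr hqr hM0 (by positivity) ?_ (by positivity) ?_)
            · rw [div_le_iff₀ (by positivity : (0:ℝ) < a/2)]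
              linarith
            · rw [div_le_iff₀ ha0]
              linarith
          · -- C2 : use the interval (a + b - 1, 1)
            have hs : (a + b - 1) ∈ Ioo (0:ℝ) 1 := ⟨by linarith, by linarith⟩
            have h1b : 0 < 1 - b := by linarith
            have hA : (1-b) * f b ≤ ∫ y in (a+b-1)..(1:ℝ), f y := by
              have k2 := K2 b 1 hb0 hb1 le_rfl
              exact k2.trans (hsubf b 1 (a+b-1) 1 hs.1.le (by linarith) hb1.le
                le_rfl le_rfl)
            have hB : (1-b) * g a ≤ ∫ y in (a+b-1)..(1:ℝ), g y := by
              have k4 := K4 (a+b-1) a hs.1.le (by linarith) hamem.2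
              have e : (a - (a+b-1)) = 1 - b := by ring
              rw [e] at k4
              exact k4.trans (hsubg (a+b-1) a (a+b-1) 1 hs.1.le le_rfl
                (by linarith) hamem.2.le le_rfl)
            have hh := hyp2 (a+b-1) hs
            have e2 : (1 - (a+b-1)) = 2 - a - b := by ring
            rw [e2] at hh
            have hch := chain hr h1b h1b hfb.le hga.le hM0
              (by linarith : (0:ℝ) ≤ 2 - a - b) hA hB hh
            refine hch.trans (const_le hr hqr hM0 (div_nonneg (by linarith) h1b.le) ?_
              (div_nonneg (by linarith) h1b.le) ?_)
            · rw [div_le_iff₀ h1b]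
              linarith
            · rw [div_le_iff₀ h1b]
              linarith
  -- Step 2 : extend to b = 1 by continuity
  intro a b ha hab hb1
  rcases lt_or_eq_of_le hb1 with hb | hb
  · exact step1 a b ha hab hb
  · subst hb
    have ha1 : a < 1 := hab
    have hlne : (nhdsWithin (1:ℝ) (Ioo a 1)).NeBot := by
      apply mem_closure_iff_nhdsWithin_neBot.mp
      rw [closure_Ioo ha1.ne]
      exact ⟨ha1.le, le_rfl⟩
    have hIf1 : IntervalIntegrable f volume a 1 := hIf a 1 ha ha1.le le_rfl
    have hIg1 : IntervalIntegrable g volume a 1 := hIg a 1 ha ha1.le le_rfl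
    have hcf : ContinuousOn (fun t => ∫ y in a..t, f y) (Icc a 1) := by
      have h := intervalIntegral.continuousOn_primitive_interval' hIf1
        (by rw [uIcc_of_le ha1.le]; exact ⟨le_rfl, ha1.le⟩)
      rwa [uIcc_of_le ha1.le] at h
    have hcg : ContinuousOn (fun t => ∫ y in a..t, g y) (Icc a 1) := by
      have h := intervalIntegral.continuousOn_primitive_interval' hIg1
        (by rw [uIcc_of_le ha1.le]; exact ⟨le_rfl, ha1.le⟩)
      rwa [uIcc_of_le ha1.le] at h
    have tf : Filter.Tendsto (fun t => ∫ y in a..t, f y)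
        (nhdsWithin (1:ℝ) (Ioo a 1)) (𝓝 (∫ y in a..(1:ℝ), f y)) :=
      (hcf 1 ⟨ha1.le, le_rfl⟩).mono_left (nhdsWithin_mono _ Ioo_subset_Icc_self)
    have tg : Filter.Tendsto (fun t => ∫ y in a..t, g y)
        (nhdsWithin (1:ℝ) (Ioo a 1)) (𝓝 (∫ y in a..(1:ℝ), g y)) :=
      (hcg 1 ⟨ha1.le, le_rfl⟩).mono_left (nhdsWithin_mono _ Ioo_subset_Icc_self)
    have tinv : Filter.Tendsto (fun t : ℝ => 1/(t-a))
        (nhdsWithin (1:ℝ) (Ioo a 1)) (𝓝 (1/(1-a))) := by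
      apply Filter.Tendsto.mono_left _ nhdsWithin_le_nhds
      exact (continuousAt_const.div ((continuous_id.sub continuous_const).continuousAt)
        (sub_ne_zero.mpr ha1.ne')).tendsto
    have t1 := tinv.mul tf
    have t2 := (tinv.mul tg).rpow_const (Or.inr hr.le)
    have final := t1.mul t2
    apply le_of_tendsto final
    filter_upwards [self_mem_nhdsWithin] with t ht
    exact step1 a t ha ht.1 ht.2

lemma rpow_base_anti {u v e : ℝ} (hu : 0 < u) (huv : u ≤ v) (he : 0 ≤ e) :
    v ^ (-e) ≤ u ^ (-e) := by
  rw [Real.rpow_neg (hu.trans_le huv).le, Real.rpow_neg hu.le]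
  exact inv_anti₀ (Real.rpow_pos_of_pos hu e) (Real.rpow_le_rpow hu.le huv he)

/-- Lower bound for an integral over `Ioo u v` by the value at one end. -/
lemma lower_const {h : ℝ → ℝ} {c u v : ℝ} (huv : u ≤ v)
    (hint : IntegrableOn h (Ioo u v))
    (hc : ∀ x ∈ Ioo u v, c ≤ h x) :
    (v - u) * c ≤ ∫ x in Ioo u v, h x := by
  have e : ∫ _ in Ioo u v, c = (v - u) * c := by
    rw [setIntegral_const, Real.volume_real_Ioo_of_le (by linarith), smul_eq_mul]
  rw [← e]
  exact setIntegral_mono_on (by simp [integrableOn_const, Real.volume_Ioo]) hint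
    measurableSet_Ioo hc

/-- Derivation of the integrability of `f` near `1` (increasing case) resp. of
`g` near `1` (decreasing case), from the `A_q` hypotheses: the partial
integrals `∫_0^t h` are bounded as soon as the partial integrals of the
companion function are bounded below. -/
lemma partial_bound {h : ℝ → ℝ}
    (hmeas : Measurable h)
    (hhnn : ∀ x ∈ Ioo (0:ℝ) 1, 0 ≤ h x)
    (hper : ∀ t ∈ Ioo (0:ℝ) 1, IntegrableOn h (Ioc 0 t))
    {c : ℝ}
    (hbound : ∀ t ∈ Ico (1/2 : ℝ) 1, (∫ x in Ioc (0:ℝ) t, h x) ≤ c) :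
    IntegrableOn h (Ioo 0 1) := by
  apply integrableOn_of_partial hmeas hhnn (C := c)
  intro t ht
  refine ⟨hper t ht, ?_⟩
  set t' := max t (1/2) with ht'
  have ht'mem : t' ∈ Ico (1/2:ℝ) 1 := ⟨le_max_right _ _, max_lt ht.2 (by norm_num)⟩
  have hmono : (∫ x in Ioc (0:ℝ) t, h x) ≤ ∫ x in Ioc (0:ℝ) t', h x := by
    apply setIntegral_mono_set (hper t' ⟨lt_of_lt_of_le ht.1 (le_max_left _ _), ht'mem.2⟩)
    · filter_upwards [ae_restrict_mem measurableSet_Ioc] with x hx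
      exact hhnn x ⟨hx.1, lt_of_le_of_lt hx.2 ht'mem.2⟩
    · exact HasSubset.Subset.eventuallyLE (Ioc_subset_Ioc le_rfl (le_max_left _ _))
  exact hmono.trans (hbound t' ht'mem)

lemma app_mono (q M : ℝ) (hq : 1 < q) (hM : 1 ≤ M) (f : ℝ → ℝ)
    (hmeas : Measurable f)
    (hpos : ∀ x ∈ Ico (0:ℝ) 1, 0 < f x)
    (hmono : MonotoneOn f (Ico 0 1))
    (hyp : ∀ t ∈ Ioo (0:ℝ) 1,
      ((1/t) * ∫ y in (0:ℝ)..t, f y) *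
          ((1/t) * ∫ y in (0:ℝ)..t, f y ^ (-(1/(q-1)))) ^ (q-1) ≤ M ∧
      ((1/(1-t)) * ∫ y in t..(1:ℝ), f y) *
          ((1/(1-t)) * ∫ y in t..(1:ℝ), f y ^ (-(1/(q-1)))) ^ (q-1) ≤ M) :
    ∀ a b : ℝ, 0 ≤ a → a < b → b ≤ 1 →
      ((1/(b-a)) * ∫ y in a..b, f y) *
          ((1/(b-a)) * ∫ y in a..b, f y ^ (-(1/(q-1)))) ^ (q-1) ≤ 2 * 4 ^ q * M := by
  have hr : 0 < q - 1 := by linarith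
  have he : (0:ℝ) ≤ 1/(q-1) := by positivity
  set g : ℝ → ℝ := fun y => f y ^ (-(1/(q-1))) with hgdef
  have hgmeas : Measurable g := by fun_prop
  have hf0 : 0 < f 0 := hpos 0 ⟨le_rfl, one_pos⟩
  have hgbd : ∀ x ∈ Ioo (0:ℝ) 1, g x ≤ f 0 ^ (-(1/(q-1))) := by
    intro x hx
    exact rpow_base_anti hf0 (hmono ⟨le_rfl, one_pos⟩ ⟨hx.1.le, hx.2⟩ hx.1.le) he
  have hgnn : ∀ x ∈ Ioo (0:ℝ) 1, 0 ≤ g x :=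
    fun x hx => Real.rpow_nonneg (hpos x ⟨hx.1.le, hx.2⟩).le _
  have hintg : IntegrableOn g (Ioo 0 1) := by
    apply Measure.integrableOn_of_bounded (M := f 0 ^ (-(1/(q-1))))
    · rw [Real.volume_Ioo]; exact ENNReal.ofReal_ne_top
    · exact hgmeas.aestronglyMeasurable
    · filter_upwards [ae_restrict_mem measurableSet_Ioo] with x hx
      rw [Real.norm_of_nonneg (hgnn x hx)]
      exact hgbd x hx
  have hghalf : 0 < g (1/2 : ℝ) := Real.rpow_pos_of_pos (hpos _ (by norm_num)) _
  have hintf : IntegrableOn f (Ioo 0 1) := by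
    apply partial_bound hmeas (fun x hx => (hpos x ⟨hx.1.le, hx.2⟩).le)
      (c := M / ((1/2) * g (1/2:ℝ))^(q-1))
    · intro t ht
      have h1 : MonotoneOn f (uIcc 0 t) := by
        rw [uIcc_of_le ht.1.le]
        exact hmono.mono (fun x hx => ⟨hx.1, lt_of_le_of_lt hx.2 ht.2⟩)
      exact (intervalIntegrable_iff_integrableOn_Ioc_of_le ht.1.le).mp h1.intervalIntegrable
    · intro t ht
      have ht0 : 0 < t := lt_of_lt_of_le (by norm_num) ht.1
      have htI : t ∈ Ioo (0:ℝ) 1 := ⟨ht0, ht.2⟩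
      have hB0 : 0 ≤ ∫ y in (0:ℝ)..t, g y := by
        rw [integral_of_le ht0.le, integral_Ioc_eq_integral_Ioo]
        exact setIntegral_nonneg measurableSet_Ioo
          (fun x hx => hgnn x ⟨hx.1, hx.2.trans htI.2⟩)
      have hAB := unscale ht0 hB0 (hyp t htI).1
      have htt : t * t^(q-1) ≤ 1 := by
        have h1 : t^(q-1) ≤ 1 := Real.rpow_le_one ht0.le htI.2.le hr.le
        nlinarith [Real.rpow_nonneg ht0.le (q-1), htI.2]
      have hABM : (∫ y in (0:ℝ)..t, f y) * (∫ y in (0:ℝ)..t, g y)^(q-1) ≤ M := by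
        calc (∫ y in (0:ℝ)..t, f y) * (∫ y in (0:ℝ)..t, g y)^(q-1)
            ≤ t * t^(q-1) * M := hAB
          _ ≤ 1 * M := by nlinarith [le_trans zero_le_one hM]
          _ = M := one_mul M
      have hglow : (1/2 : ℝ) * g (1/2) ≤ ∫ y in (0:ℝ)..t, g y := by
        have h1 : ((1/2:ℝ) - 0) * g (1/2) ≤ ∫ x in Ioo (0:ℝ) (1/2), g x := by
          apply lower_const (by norm_num)
            (hintg.mono_set (Ioo_subset_Ioo le_rfl (by norm_num)))
          intro x hx
          have hx1 : x ∈ Ico (0:ℝ) 1 := ⟨hx.1.le, hx.2.trans (by norm_num)⟩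
          exact rpow_base_anti (hpos x hx1) (hmono hx1 (by norm_num) hx.2.le) he
        rw [integral_of_le ht0.le, integral_Ioc_eq_integral_Ioo]
        have h2 : (∫ x in Ioo (0:ℝ) (1/2), g x) ≤ ∫ x in Ioo (0:ℝ) t, g x := by
          apply setIntegral_mono_set (hintg.mono_set (Ioo_subset_Ioo le_rfl htI.2.le))
          · filter_upwards [ae_restrict_mem measurableSet_Ioo] with x hx
            exact hgnn x ⟨hx.1, hx.2.trans htI.2⟩
          · exact HasSubset.Subset.eventuallyLE (Ioo_subset_Ioo le_rfl ht.1)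
        linarith [h1, h2]
      have hc0 : (0:ℝ) < ((1/2) * g (1/2:ℝ))^(q-1) := Real.rpow_pos_of_pos (by positivity) _
      have hAnn : 0 ≤ ∫ y in (0:ℝ)..t, f y := by
        rw [integral_of_le ht0.le, integral_Ioc_eq_integral_Ioo]
        exact setIntegral_nonneg measurableSet_Ioo
          (fun x hx => (hpos x ⟨hx.1.le, hx.2.trans htI.2⟩).le)
      have hpow : ((1/2:ℝ) * g (1/2))^(q-1) ≤ (∫ y in (0:ℝ)..t, g y)^(q-1) :=
        Real.rpow_le_rpow (by positivity) hglow hr.le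
      have hfin : (∫ y in (0:ℝ)..t, f y) ≤ M / ((1/2) * g (1/2:ℝ))^(q-1) := by
        rw [le_div_iff₀ hc0]
        calc (∫ y in (0:ℝ)..t, f y) * ((1/2)*g (1/2:ℝ))^(q-1)
            ≤ (∫ y in (0:ℝ)..t, f y) * (∫ y in (0:ℝ)..t, g y)^(q-1) :=
              mul_le_mul_of_nonneg_left hpow hAnn
          _ ≤ M := hABM
      rwa [integral_of_le ht0.le] at hfin
  exact core q M hq hM f hmeas (fun x hx => hpos x ⟨hx.1.le, hx.2⟩)
    (hmono.mono (fun x hx => ⟨hx.1.le, hx.2⟩)) hintf hintg hyp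

lemma app_anti (q M : ℝ) (hq : 1 < q) (hM : 1 ≤ M) (f : ℝ → ℝ)
    (hmeas : Measurable f)
    (hpos : ∀ x ∈ Ico (0:ℝ) 1, 0 < f x)
    (hanti : AntitoneOn f (Ico 0 1))
    (hyp : ∀ t ∈ Ioo (0:ℝ) 1,
      ((1/t) * ∫ y in (0:ℝ)..t, f y) *
          ((1/t) * ∫ y in (0:ℝ)..t, f y ^ (-(1/(q-1)))) ^ (q-1) ≤ M ∧
      ((1/(1-t)) * ∫ y in t..(1:ℝ), f y) *
          ((1/(1-t)) * ∫ y in t..(1:ℝ), f y ^ (-(1/(q-1)))) ^ (q-1) ≤ M) :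
    ∀ a b : ℝ, 0 ≤ a → a < b → b ≤ 1 →
      ((1/(b-a)) * ∫ y in a..b, f y) *
          ((1/(b-a)) * ∫ y in a..b, f y ^ (-(1/(q-1)))) ^ (q-1) ≤ 2 * 4 ^ q * M := by
  have hr : 0 < q - 1 := by linarith
  have he : (0:ℝ) ≤ 1/(q-1) := by positivity
  set g : ℝ → ℝ := fun y => f y ^ (-(1/(q-1))) with hgdef
  have hgmeas : Measurable g := by fun_prop
  have hfnn : ∀ x ∈ Ioo (0:ℝ) 1, 0 ≤ f x := fun x hx => (hpos x ⟨hx.1.le, hx.2⟩).le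
  have hgmono : ∀ x ∈ Ico (0:ℝ) 1, ∀ y ∈ Ico (0:ℝ) 1, x ≤ y → g x ≤ g y := by
    intro x hx y hy hxy
    exact rpow_base_anti (hpos y hy) (hanti hx hy hxy) he
  have hintf : IntegrableOn f (Ioo 0 1) := by
    apply Measure.integrableOn_of_bounded (M := f 0)
    · rw [Real.volume_Ioo]; exact ENNReal.ofReal_ne_top
    · exact hmeas.aestronglyMeasurable
    · filter_upwards [ae_restrict_mem measurableSet_Ioo] with x hx
      rw [Real.norm_of_nonneg (hfnn x hx)]
      exact hanti ⟨le_rfl, one_pos⟩ ⟨hx.1.le, hx.2⟩ hx.1.le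
  have hfhalf : 0 < f (1/2 : ℝ) := hpos _ (by norm_num)
  have hgnn : ∀ x ∈ Ioo (0:ℝ) 1, 0 ≤ g x := fun x hx => Real.rpow_nonneg (hfnn x hx) _
  have hintg : IntegrableOn g (Ioo 0 1) := by
    apply partial_bound hgmeas hgnn (c := (M / ((1/2) * f (1/2:ℝ)))^(1/(q-1)))
    · intro t ht
      have h1 : MonotoneOn g (uIcc 0 t) := by
        rw [uIcc_of_le ht.1.le]
        intro x hx y hy hxy
        exact hgmono x ⟨hx.1, lt_of_le_of_lt hx.2 ht.2⟩ y ⟨hy.1, lt_of_le_of_lt hy.2 ht.2⟩ hxy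
      exact (intervalIntegrable_iff_integrableOn_Ioc_of_le ht.1.le).mp h1.intervalIntegrable
    · intro t ht
      have ht0 : 0 < t := lt_of_lt_of_le (by norm_num) ht.1
      have htI : t ∈ Ioo (0:ℝ) 1 := ⟨ht0, ht.2⟩
      have hB0 : 0 ≤ ∫ y in (0:ℝ)..t, g y := by
        rw [integral_of_le ht0.le, integral_Ioc_eq_integral_Ioo]
        exact setIntegral_nonneg measurableSet_Ioo
          (fun x hx => hgnn x ⟨hx.1, hx.2.trans htI.2⟩)
      have hAB := unscale ht0 hB0 (hyp t htI).1
      have htt : t * t^(q-1) ≤ 1 := by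
        have h1 : t^(q-1) ≤ 1 := Real.rpow_le_one ht0.le htI.2.le hr.le
        nlinarith [Real.rpow_nonneg ht0.le (q-1), htI.2]
      have hABM : (∫ y in (0:ℝ)..t, f y) * (∫ y in (0:ℝ)..t, g y)^(q-1) ≤ M := by
        calc (∫ y in (0:ℝ)..t, f y) * (∫ y in (0:ℝ)..t, g y)^(q-1)
            ≤ t * t^(q-1) * M := hAB
          _ ≤ 1 * M := by nlinarith [le_trans zero_le_one hM]
          _ = M := one_mul M
      have hflow : (1/2 : ℝ) * f (1/2) ≤ ∫ y in (0:ℝ)..t, f y := by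
        have h1 : ((1/2:ℝ) - 0) * f (1/2) ≤ ∫ x in Ioo (0:ℝ) (1/2), f x := by
          apply lower_const (by norm_num)
            (hintf.mono_set (Ioo_subset_Ioo le_rfl (by norm_num)))
          intro x hx
          have hx1 : x ∈ Ico (0:ℝ) 1 := ⟨hx.1.le, hx.2.trans (by norm_num)⟩
          exact hanti hx1 (by norm_num) hx.2.le
        rw [integral_of_le ht0.le, integral_Ioc_eq_integral_Ioo]
        have h2 : (∫ x in Ioo (0:ℝ) (1/2), f x) ≤ ∫ x in Ioo (0:ℝ) t, f x := by
          apply setIntegral_mono_set (hintf.mono_set (Ioo_subset_Ioo le_rfl htI.2.le))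
          · filter_upwards [ae_restrict_mem measurableSet_Ioo] with x hx
            exact hfnn x ⟨hx.1, hx.2.trans htI.2⟩
          · exact HasSubset.Subset.eventuallyLE (Ioo_subset_Ioo le_rfl ht.1)
        linarith [h1, h2]
      have hchalf : (0:ℝ) < (1/2) * f (1/2:ℝ) := by positivity
      have hBr : (∫ y in (0:ℝ)..t, g y)^(q-1) ≤ M / ((1/2)*f (1/2:ℝ)) := by
        rw [le_div_iff₀ hchalf]
        have h2 : ((1/2:ℝ)*f (1/2)) * (∫ y in (0:ℝ)..t, g y)^(q-1)
            ≤ (∫ y in (0:ℝ)..t, f y) * (∫ y in (0:ℝ)..t, g y)^(q-1) :=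
          mul_le_mul_of_nonneg_right hflow (Real.rpow_nonneg hB0 _)
        calc (∫ y in (0:ℝ)..t, g y)^(q-1) * ((1/2:ℝ)*f (1/2))
            = ((1/2:ℝ)*f (1/2)) * (∫ y in (0:ℝ)..t, g y)^(q-1) := mul_comm _ _
          _ ≤ (∫ y in (0:ℝ)..t, f y) * (∫ y in (0:ℝ)..t, g y)^(q-1) := h2
          _ ≤ M := hABM
      have hBfin : (∫ y in (0:ℝ)..t, g y) ≤ (M/((1/2)*f (1/2:ℝ)))^(1/(q-1)) := by
        have e : ((∫ y in (0:ℝ)..t, g y)^(q-1))^(1/(q-1)) = ∫ y in (0:ℝ)..t, g y := by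
          rw [← Real.rpow_mul hB0, mul_one_div, div_self hr.ne', Real.rpow_one]
        calc (∫ y in (0:ℝ)..t, g y) = ((∫ y in (0:ℝ)..t, g y)^(q-1))^(1/(q-1)) := e.symm
          _ ≤ (M/((1/2)*f (1/2:ℝ)))^(1/(q-1)) :=
            Real.rpow_le_rpow (Real.rpow_nonneg hB0 _) hBr he
      rwa [integral_of_le ht0.le] at hBfin
  -- reflection
  have hfeq : ∀ u v : ℝ, (∫ y in u..v, f (1-y)) = ∫ y in (1-v)..(1-u), f y := by
    intro u v
    exact integral_comp_sub_left f 1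
  have hgeq : ∀ u v : ℝ, (∫ y in u..v, g (1-y)) = ∫ y in (1-v)..(1-u), g y := by
    intro u v
    exact integral_comp_sub_left g 1
  have hmeasF : Measurable (fun x => f (1-x)) :=
    hmeas.comp (measurable_const.sub measurable_id)
  have hposF : ∀ x ∈ Ioo (0:ℝ) 1, 0 < f (1-x) := by
    intro x hx
    exact hpos _ ⟨by linarith [hx.2], by linarith [hx.1]⟩
  have hmonoF : MonotoneOn (fun x => f (1-x)) (Ioo 0 1) := by
    intro x hx y hy hxy
    exact hanti ⟨by linarith [hy.2], by linarith [hy.1]⟩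
      ⟨by linarith [hx.2], by linarith [hx.1]⟩ (by linarith)
  have hiff : ∀ h : ℝ → ℝ, IntegrableOn h (Ioo 0 1) →
      IntegrableOn (fun x => h (1-x)) (Ioo (0:ℝ) 1) := by
    intro h hint
    have h1 : IntervalIntegrable h volume 0 1 :=
      (intervalIntegrable_iff_integrableOn_Ioo_of_le zero_le_one).mpr hint
    have h2 := (h1.comp_sub_left 1).symm
    have e1 : (1:ℝ) - 0 = 1 := by norm_num
    have e2 : (1:ℝ) - 1 = 0 := by norm_num
    rw [e1, e2] at h2
    exact (intervalIntegrable_iff_integrableOn_Ioo_of_le zero_le_one).mp h2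
  have hintF : IntegrableOn (fun x => f (1-x)) (Ioo (0:ℝ) 1) := hiff f hintf
  have hintG : IntegrableOn (fun x => g (1-x)) (Ioo (0:ℝ) 1) := hiff g hintg
  have hypF : ∀ t ∈ Ioo (0:ℝ) 1,
      ((1/t) * ∫ y in (0:ℝ)..t, f (1-y)) *
          ((1/t) * ∫ y in (0:ℝ)..t, g (1-y)) ^ (q-1) ≤ M ∧
      ((1/(1-t)) * ∫ y in t..(1:ℝ), f (1-y)) *
          ((1/(1-t)) * ∫ y in t..(1:ℝ), g (1-y)) ^ (q-1) ≤ M := by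
    intro t ht
    have hs : (1-t) ∈ Ioo (0:ℝ) 1 := ⟨by linarith [ht.2], by linarith [ht.1]⟩
    constructor
    · have h2 := (hyp (1-t) hs).2
      have e0 : (1:ℝ) - (1-t) = t := by ring
      rw [e0] at h2
      have eA : (∫ y in (0:ℝ)..t, f (1-y)) = ∫ y in (1-t)..(1:ℝ), f y := by
        rw [hfeq 0 t]
        norm_num
      have eB : (∫ y in (0:ℝ)..t, g (1-y)) = ∫ y in (1-t)..(1:ℝ), g y := by
        rw [hgeq 0 t]
        norm_num
      rw [eA, eB]
      exact h2
    · have h1 := (hyp (1-t) hs).1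
      have eA : (∫ y in t..(1:ℝ), f (1-y)) = ∫ y in (0:ℝ)..(1-t), f y := by
        rw [hfeq t 1]
        norm_num
      have eB : (∫ y in t..(1:ℝ), g (1-y)) = ∫ y in (0:ℝ)..(1-t), g y := by
        rw [hgeq t 1]
        norm_num
      rw [eA, eB]
      exact h1
  intro a b ha hab hb1
  have H := core q M hq hM (fun x => f (1-x)) hmeasF hposF hmonoF hintF hintG hypF
    (1-b) (1-a) (by linarith) (by linarith) (by linarith)
  have eL : (1:ℝ) - a - (1 - b) = b - a := by ring
  have eA : (∫ y in (1-b)..(1-a), f (1-y)) = ∫ y in a..b, f y := by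
    rw [hfeq (1-b) (1-a)]
    congr 1 <;> ring
  have eB : (∫ y in (1-b)..(1-a), g (1-y)) = ∫ y in a..b, g y := by
    rw [hgeq (1-b) (1-a)]
    congr 1 <;> ring
  rw [eL, eA, eB] at H
  exact H

end MuckAux


/-- **Theorem F.** Let `q > 1` and `M ≥ 1`. There is a constant `M''`, depending only
on `M` and `q`, such that every monotone `f : [0,1) → (0,∞)` satisfying the `A_q`
condition with constant `M` on every interval `(0,t)` and every interval `(t,1)`,
`t ∈ (0,1)`, satisfies the `A_q` condition with constant `M''` on every subinterval
`(a,b) ⊆ [0,1)`. -/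
theorem muckenhoupt_Aq_from_endpoints (q M : ℝ) (hq : 1 < q) (hM : 1 ≤ M) :
    ∃ M'' : ℝ, 0 < M'' ∧ ∀ f : ℝ → ℝ, Measurable f →
      (∀ x ∈ Set.Ico (0 : ℝ) 1, 0 < f x) →
      (MonotoneOn f (Set.Ico 0 1) ∨ AntitoneOn f (Set.Ico 0 1)) →
      (∀ t ∈ Set.Ioo (0 : ℝ) 1,
        ((1 / t) * ∫ y in (0 : ℝ)..t, f y) *
            ((1 / t) * ∫ y in (0 : ℝ)..t, f y ^ (-(1 / (q - 1)))) ^ (q - 1) ≤ M ∧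
        ((1 / (1 - t)) * ∫ y in t..(1 : ℝ), f y) *
            ((1 / (1 - t)) * ∫ y in t..(1 : ℝ), f y ^ (-(1 / (q - 1)))) ^ (q - 1) ≤ M) →
      ∀ a b : ℝ, 0 ≤ a → a < b → b ≤ 1 →
        ((1 / (b - a)) * ∫ y in a..b, f y) *
          ((1 / (b - a)) * ∫ y in a..b, f y ^ (-(1 / (q - 1)))) ^ (q - 1) ≤ M'' := by
  have hM0 : (0:ℝ) < M := lt_of_lt_of_le one_pos hM
  refine ⟨2 * 4 ^ q * M, by positivity, ?_⟩
  intro f hmeas hpos hmono hyp a b ha hab hb1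
  rcases hmono with hm | hm
  · exact MuckAux.app_mono q M hq hM f hmeas hpos hm hyp a b ha hab hb1
  · exact MuckAux.app_anti q M hq hM f hmeas hpos hm hyp a b ha hab hb1
end

section
/- Let p ≥ q > 0 and let d ∈ (0, 1/p). For the function f(x) = x^d on [0,1], ∫_0^1 ((1/x) ∫_0^x f(y) dy)^{-p} dx = (d+1)^q · ∫_0^1 ((1/x) ∫_0^x f(y) dy)^{-p+q} f(x)^{-q} dx, and both integrals are finite. Consequently, since (d+1)^q → ((p+1)/p)^q as d → (1/p)^−, the constant ((p+1)/p)^q in the inequality ∫_0^1 ((1/x) ∫_0^x f)^{-p} dx ≤ ((p+1)/p)^q ∫_0^1 ((1/x) ∫_0^x f)^{-p+q} f^{-q} dx cannot be replaced by any smaller constant. -/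
open MeasureTheory Set intervalIntegral

lemma hardy_base_eq {d x : ℝ} (hd0 : 0 < d) (hx : 0 < x) :
    (1 / x) * ∫ y in (0 : ℝ)..x, y ^ d = x ^ d / (d + 1) := by
  have hd1 : d + 1 ≠ 0 := by linarith
  rw [integral_rpow (Or.inl (by linarith : (-1:ℝ) < d))]
  rw [Real.zero_rpow hd1, Real.rpow_add_one hx.ne' d]
  field_simp
  ring

lemma hardy_eqOn1 {p q d : ℝ} (hq : 0 < q) (hpq : q ≤ p) (hd0 : 0 < d) :
    EqOn (fun x : ℝ => ((1 / x) * ∫ y in (0 : ℝ)..x, y ^ d) ^ (-p))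
      (fun x : ℝ => (d + 1) ^ p * x ^ (d * (-p))) (Icc 0 1) := by
  have hp : 0 < p := lt_of_lt_of_le hq hpq
  have hd1 : (0:ℝ) < d + 1 := by linarith
  have hdm : d * (-p) ≠ 0 := by
    rw [mul_neg]; exact neg_ne_zero.mpr (mul_pos hd0 hp).ne'
  intro x hx
  rcases eq_or_lt_of_le hx.1 with h0 | h0
  · simp only [← h0, div_zero, zero_mul]
    rw [Real.zero_rpow (neg_ne_zero.mpr hp.ne'), Real.zero_rpow hdm, mul_zero]
  · simp only
    rw [hardy_base_eq hd0 h0, Real.div_rpow (Real.rpow_nonneg h0.le d) hd1.le,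
      ← Real.rpow_mul h0.le, Real.rpow_neg hd1.le, div_eq_mul_inv, inv_inv, mul_comm]

lemma hardy_eqOn2 {p q d : ℝ} (hq : 0 < q) (hpq : q ≤ p) (hd0 : 0 < d) :
    EqOn (fun x : ℝ => ((1 / x) * ∫ y in (0 : ℝ)..x, y ^ d) ^ (-p + q) * (x ^ d) ^ (-q))
      (fun x : ℝ => (d + 1) ^ (p - q) * x ^ (d * (-p))) (Icc 0 1) := by
  have hp : 0 < p := lt_of_lt_of_le hq hpq
  have hd1 : (0:ℝ) < d + 1 := by linarith
  have hdm : d * (-p) ≠ 0 := by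
    rw [mul_neg]; exact neg_ne_zero.mpr (mul_pos hd0 hp).ne'
  intro x hx
  rcases eq_or_lt_of_le hx.1 with h0 | h0
  · simp only [← h0]
    rw [Real.zero_rpow hd0.ne', Real.zero_rpow (neg_ne_zero.mpr hq.ne'),
      Real.zero_rpow hdm]
    simp
  · simp only
    rw [hardy_base_eq hd0 h0, Real.div_rpow (Real.rpow_nonneg h0.le d) hd1.le,
      ← Real.rpow_mul h0.le, ← Real.rpow_mul h0.le, div_mul_eq_mul_div,
      ← Real.rpow_add h0,
      show d * (-p + q) + d * (-q) = d * (-p) by ring,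
      show (-p + q : ℝ) = -(p - q) by ring,
      Real.rpow_neg hd1.le, div_eq_mul_inv, inv_inv, mul_comm]

lemma hardy_aux (p q d : ℝ) (hq : 0 < q) (hpq : q ≤ p) (hd : d ∈ Set.Ioo 0 (1 / p)) :
    (∫ x in (0 : ℝ)..1, ((1 / x) * ∫ y in (0 : ℝ)..x, y ^ d) ^ (-p)) =
        (d + 1) ^ p * (1 / (1 - d * p)) ∧
      (∫ x in (0 : ℝ)..1,
          ((1 / x) * ∫ y in (0 : ℝ)..x, y ^ d) ^ (-p + q) * (x ^ d) ^ (-q)) =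
        (d + 1) ^ (p - q) * (1 / (1 - d * p)) ∧
      IntegrableOn (fun x : ℝ => ((1 / x) * ∫ y in (0 : ℝ)..x, y ^ d) ^ (-p))
        (Set.Ioc 0 1) ∧
      IntegrableOn
        (fun x : ℝ => ((1 / x) * ∫ y in (0 : ℝ)..x, y ^ d) ^ (-p + q) * (x ^ d) ^ (-q))
        (Set.Ioc 0 1) := by
  have hp : 0 < p := lt_of_lt_of_le hq hpq
  have hd0 : 0 < d := hd.1
  have hdp : d * p < 1 := by
    have := hd.2
    rw [lt_div_iff₀ hp] at this
    linarith
  have hdp0 : 0 < d * p := mul_pos hd0 hp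
  have hexp : (-1 : ℝ) < d * (-p) := by nlinarith
  have hI : (∫ x in (0 : ℝ)..1, x ^ (d * (-p))) = 1 / (1 - d * p) := by
    rw [integral_rpow (Or.inl hexp), Real.one_rpow,
      Real.zero_rpow (by linarith : d * (-p) + 1 ≠ 0)]
    rw [mul_neg]
    ring_nf
  have huIcc : uIcc (0:ℝ) 1 = Icc 0 1 := uIcc_of_le zero_le_one
  have hInt : IntegrableOn (fun x : ℝ => x ^ (d * (-p))) (Ioc (0:ℝ) 1) :=
    (intervalIntegrable_iff_integrableOn_Ioc_of_le zero_le_one).mp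
      (intervalIntegrable_rpow' hexp)
  refine ⟨?_, ?_, ?_, ?_⟩
  · rw [integral_congr (huIcc ▸ hardy_eqOn1 hq hpq hd0),
      intervalIntegral.integral_const_mul, hI]
  · rw [integral_congr (huIcc ▸ hardy_eqOn2 hq hpq hd0),
      intervalIntegral.integral_const_mul, hI]
  · exact MeasureTheory.IntegrableOn.congr_fun
      (MeasureTheory.Integrable.const_mul hInt ((d + 1) ^ p))
      (fun x hx => (hardy_eqOn1 hq hpq hd0 (Ioc_subset_Icc_self hx)).symm)
      measurableSet_Ioc
  · exact MeasureTheory.IntegrableOn.congr_fun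
      (MeasureTheory.Integrable.const_mul hInt ((d + 1) ^ (p - q)))
      (fun x hx => (hardy_eqOn2 hq hpq hd0 (Ioc_subset_Icc_self hx)).symm)
      measurableSet_Ioc

/-- **Sharpness of Theorem 1.** For `p ≥ q > 0` and `d ∈ (0, 1/p)`, the function
`f(x) = x^d` on `[0,1]` gives equality
`∫_0^1 ((1/x)∫_0^x f)^{-p} dx = (d+1)^q ∫_0^1 ((1/x)∫_0^x f)^{-p+q} f(x)^{-q} dx`,
with both integrals finite; consequently (since `(d+1)^q → ((p+1)/p)^q` as
`d → (1/p)⁻`) the constant `((p+1)/p)^q` cannot be replaced by any smaller constant. -/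
theorem hardy_negative_exponent_sharp (p q d : ℝ) (hq : 0 < q) (hpq : q ≤ p)
    (hd : d ∈ Set.Ioo 0 (1 / p)) :
    (∫ x in (0 : ℝ)..1, ((1 / x) * ∫ y in (0 : ℝ)..x, y ^ d) ^ (-p)) =
        (d + 1) ^ q *
          ∫ x in (0 : ℝ)..1,
            ((1 / x) * ∫ y in (0 : ℝ)..x, y ^ d) ^ (-p + q) * (x ^ d) ^ (-q) ∧
      IntegrableOn (fun x : ℝ => ((1 / x) * ∫ y in (0 : ℝ)..x, y ^ d) ^ (-p))
        (Set.Ioc 0 1) ∧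
      IntegrableOn
        (fun x : ℝ => ((1 / x) * ∫ y in (0 : ℝ)..x, y ^ d) ^ (-p + q) * (x ^ d) ^ (-q))
        (Set.Ioc 0 1) ∧
      ∀ C : ℝ, 0 ≤ C →
        (∀ d' ∈ Set.Ioo (0 : ℝ) (1 / p),
          (∫ x in (0 : ℝ)..1, ((1 / x) * ∫ y in (0 : ℝ)..x, y ^ d') ^ (-p)) ≤
            C * ∫ x in (0 : ℝ)..1,
              ((1 / x) * ∫ y in (0 : ℝ)..x, y ^ d') ^ (-p + q) * (x ^ d') ^ (-q)) →
        ((p + 1) / p) ^ q ≤ C := by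
  have hp : 0 < p := lt_of_lt_of_le hq hpq
  obtain ⟨h1, h2, h3, h4⟩ := hardy_aux p q d hq hpq hd
  refine ⟨?_, h3, h4, ?_⟩
  · rw [h1, h2, ← mul_assoc, ← Real.rpow_add (by linarith [hd.1] : (0:ℝ) < d + 1),
      show q + (p - q) = p by ring]
  · intro C hC hall
    have key : ∀ d' ∈ Set.Ioo (0:ℝ) (1/p), d' + 1 ≤ C ^ (1/q) := by
      intro d' hd'
      obtain ⟨e1, e2, _, _⟩ := hardy_aux p q d' hq hpq hd'
      have h := hall d' hd'
      rw [e1, e2] at h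
      have hdp' : 0 < 1 - d' * p := by
        have := hd'.2; rw [lt_div_iff₀ hp] at this; linarith
      have hd1' : (0:ℝ) < d' + 1 := by linarith [hd'.1]
      have hpos : 0 < 1 / (1 - d' * p) := by positivity
      rw [← mul_assoc] at h
      have h2 : (d' + 1) ^ p ≤ C * (d' + 1) ^ (p - q) :=
        le_of_mul_le_mul_right h hpos
      have h3 : (d' + 1) ^ q ≤ C := by
        have hsplit : (d' + 1) ^ p = (d' + 1) ^ q * (d' + 1) ^ (p - q) := by
          rw [← Real.rpow_add hd1', show q + (p - q) = p by ring]
        rw [hsplit] at h2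
        exact le_of_mul_le_mul_right h2 (Real.rpow_pos_of_pos hd1' _)
      calc d' + 1 = ((d' + 1) ^ q) ^ (1/q) := by
            rw [← Real.rpow_mul hd1'.le, mul_one_div_cancel hq.ne', Real.rpow_one]
        _ ≤ C ^ (1/q) :=
            Real.rpow_le_rpow (Real.rpow_nonneg hd1'.le q) h3 (by positivity)
    set M := C ^ (1/q) with hM
    have hsup : 1/p + 1 ≤ M := by
      by_contra hcon
      push_neg at hcon
      have h1p : 0 < 1/p := by positivity
      have hmax0 : 0 ≤ max (M - 1) 0 := le_max_right _ _
      have hmax1 : M - 1 ≤ max (M - 1) 0 := le_max_left _ _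
      have hmaxlt : max (M - 1) 0 < 1/p := max_lt (by linarith) h1p
      set d' := (max (M - 1) 0 + 1/p) / 2 with hd'def
      have hd'mem : d' ∈ Set.Ioo (0:ℝ) (1/p) := ⟨by simp only [hd'def]; linarith,
        by simp only [hd'def]; linarith⟩
      have := key d' hd'mem
      have hgt : max (M - 1) 0 < d' := by simp only [hd'def]; linarith
      linarith
    have hfinal : ((p + 1) / p) ^ q ≤ M ^ q := by
      refine Real.rpow_le_rpow (by positivity) ?_ hq.le
      rw [add_div, div_self hp.ne']
      linarith
    rwa [hM, ← Real.rpow_mul hC, one_div_mul_cancel hq.ne', Real.rpow_one] at hfinal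
end

section
/- Let q > 1 and 0 < a < q−1, and set M = (1/(a+1))·((q−1)/(q−1−a))^{q-1}. Then: (i) p_0 = a+1 is the unique solution in [1,q] of ((q−p_0)/(q−1))·(M·p_0)^{1/(q-1)} = 1; and (ii) the function f(t) = t^a satisfies the A_q condition with constant M on every interval (0,t), t ∈ (0,1], while f^{-1/(p_0−1)}(t) = t^{-1} is not integrable on (0,1). Hence in Theorem 3 the range (p_0, q] of exponents cannot be enlarged: the conclusion fails at p = p_0. -/
open MeasureTheory Set intervalIntegral

lemma aux_strictAnti (q C : ℝ) (hq : 1 < q) (hC : 0 < C) :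
    StrictAntiOn (fun p => C * ((q - p) * p ^ (1 / (q - 1)))) (Set.Icc 1 q) := by
  set r : ℝ := 1 / (q - 1) with hr
  have hq1 : (0:ℝ) < q - 1 := by linarith
  have hrpos : 0 < r := by positivity
  apply strictAntiOn_of_deriv_neg (convex_Icc 1 q)
  · apply ContinuousOn.mul continuousOn_const
    apply ContinuousOn.mul (by fun_prop)
    intro x hx
    exact (Real.continuousAt_rpow_const x r (Or.inl (by linarith [hx.1]))).continuousWithinAt
  · intro x hx
    rw [interior_Icc] at hx
    have hx0 : (0:ℝ) < x := by linarith [hx.1]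
    have hd1 : HasDerivAt (fun p : ℝ => p ^ r) (r * x ^ (r - 1)) x :=
      Real.hasDerivAt_rpow_const (Or.inl hx0.ne')
    have hd2 : HasDerivAt (fun p : ℝ => q - p) (-1) x := by
      simpa using (hasDerivAt_id x).const_sub q
    have hd : HasDerivAt (fun p => C * ((q - p) * p ^ r))
        (C * ((-1) * x ^ r + (q - x) * (r * x ^ (r - 1)))) x := (hd2.mul hd1).const_mul C
    rw [hd.deriv]
    have hxr : x ^ r = x ^ (r - 1) * x := by
      rw [← Real.rpow_add_one hx0.ne']; ring_nf
    have hxr1 : 0 < x ^ (r - 1) := Real.rpow_pos_of_pos hx0 _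
    have key : (-1) * x ^ r + (q - x) * (r * x ^ (r - 1)) = x ^ (r - 1) * ((q - x) * r - x) := by
      rw [hxr]; ring
    rw [key]
    have : (q - x) * r - x < 0 := by
      have hqr : q * r = r + 1 := by rw [hr]; field_simp <;> ring
      nlinarith [hx.1, hx.2, hrpos]
    exact mul_neg_of_pos_of_neg hC (mul_neg_of_pos_of_neg hxr1 this)

/-- **Sharpness of Theorem 3.** Let `q > 1`, `0 < a < q−1` and
`M = (1/(a+1))((q−1)/(q−1−a))^{q-1}`. Then (i) `p₀ = a+1` is the unique solution in
`[1,q]` of `((q−p₀)/(q−1))(M p₀)^{1/(q-1)} = 1`, and (ii) `f(t) = t^a` satisfies the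
`A_q` condition with constant `M` on every `(0,t)`, `t ∈ (0,1]`, while
`f^{-1/(p₀−1)}(t) = t⁻¹` is not integrable on `(0,1)`; hence the range `(p₀,q]` in
Theorem 3 cannot be enlarged. -/
theorem muckenhoupt_sharpness (q a : ℝ) (hq : 1 < q) (ha : 0 < a)
    (haq : a < q - 1) :
    ((a + 1) ∈ Set.Icc 1 q ∧
      ((q - (a + 1)) / (q - 1)) *
          (((1 / (a + 1)) * ((q - 1) / (q - 1 - a)) ^ (q - 1)) * (a + 1)) ^ (1 / (q - 1)) = 1 ∧
      (∀ p ∈ Set.Icc 1 q,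
        ((q - p) / (q - 1)) *
            (((1 / (a + 1)) * ((q - 1) / (q - 1 - a)) ^ (q - 1)) * p) ^ (1 / (q - 1)) = 1 →
          p = a + 1)) ∧
    ((∀ t ∈ Set.Ioc (0 : ℝ) 1,
        ((1 / t) * ∫ y in (0 : ℝ)..t, y ^ a) *
            ((1 / t) * ∫ y in (0 : ℝ)..t, (y ^ a) ^ (-(1 / (q - 1)))) ^ (q - 1) ≤
          (1 / (a + 1)) * ((q - 1) / (q - 1 - a)) ^ (q - 1)) ∧
      (∀ t ∈ Set.Ioo (0 : ℝ) 1, (t ^ a) ^ (-(1 / ((a + 1) - 1))) = t⁻¹) ∧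
      ¬ IntegrableOn (fun t : ℝ => (t ^ a) ^ (-(1 / ((a + 1) - 1)))) (Set.Ioo 0 1)) := by
  have hq1 : (0:ℝ) < q - 1 := by linarith
  have hqa : (0:ℝ) < q - 1 - a := by linarith
  have ha1 : (0:ℝ) < a + 1 := by linarith
  set Y : ℝ := (q - 1) / (q - 1 - a) with hYdef
  have hY : 0 < Y := by positivity
  set M : ℝ := (1 / (a + 1)) * Y ^ (q - 1) with hMdef
  have hM : 0 < M := by positivity
  set r : ℝ := 1 / (q - 1) with hrdef
  have hrpos : 0 < r := by positivity
  have hYr : (Y ^ (q - 1)) ^ r = Y := by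
    rw [← Real.rpow_mul hY.le, hrdef, mul_one_div, div_self hq1.ne', Real.rpow_one]
  -- part (ii2), used twice
  have hii2 : ∀ t ∈ Set.Ioo (0 : ℝ) 1, (t ^ a) ^ (-(1 / ((a + 1) - 1))) = t⁻¹ := by
    intro t ht
    rw [← Real.rpow_mul ht.1.le]
    have : a * -(1 / (a + 1 - 1)) = -1 := by
      field_simp
      rw [add_sub_cancel_right, div_self ha.ne']
    rw [this, Real.rpow_neg_one]
  refine ⟨⟨⟨by linarith, by linarith⟩, ?_, ?_⟩, ?_, hii2, ?_⟩
  · -- equation at p₀ = a+1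
    have hMa : M * (a + 1) = Y ^ (q - 1) := by
      rw [hMdef]; field_simp
    rw [hMa, hYr, hYdef]
    field_simp
    ring
  · -- uniqueness
    intro p hp hep
    set C : ℝ := M ^ r / (q - 1) with hCdef
    have hC : 0 < C := by positivity
    have hEq : ∀ x ∈ Set.Icc (1:ℝ) q,
        ((q - x) / (q - 1)) * (M * x) ^ r = C * ((q - x) * x ^ r) := by
      intro x hx
      rw [Real.mul_rpow hM.le (by linarith [hx.1] : (0:ℝ) ≤ x), hCdef]
      ring
    have hmem : (a + 1) ∈ Set.Icc (1:ℝ) q := ⟨by linarith, by linarith⟩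
    have he0 : ((q - (a+1)) / (q - 1)) * (M * (a+1)) ^ r = 1 := by
      have hMa : M * (a + 1) = Y ^ (q - 1) := by rw [hMdef]; field_simp
      rw [hMa, hYr, hYdef]; field_simp; ring
    have := (aux_strictAnti q C hq hC).injOn hp hmem
      (by rw [← hEq p hp, ← hEq (a+1) hmem, hep, he0])
    exact this
  · -- A_q condition
    intro t ht
    have ht0 : (0:ℝ) < t := ht.1
    set s : ℝ := a * -(1 / (q - 1)) with hsdef
    have hs1 : -1 < s := by
      rw [hsdef]; rw [neg_lt, mul_neg, neg_neg, mul_one_div, div_lt_one hq1]; linarith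
    have hs1' : s + 1 = Y⁻¹ := by
      rw [hsdef, hYdef]; field_simp; ring
    have hI1 : (∫ y in (0:ℝ)..t, y ^ a) = t ^ (a + 1) / (a + 1) := by
      rw [integral_rpow (Or.inl (by linarith)), Real.zero_rpow (by linarith)]
      ring
    have hI2 : (∫ y in (0:ℝ)..t, (y ^ a) ^ (-(1 / (q - 1)))) = t ^ (s + 1) / (s + 1) := by
      rw [intervalIntegral.integral_congr (g := fun y => y ^ s) ?_,
        integral_rpow (Or.inl hs1), Real.zero_rpow (by rw [hs1']; positivity)]
      · ring
      · intro x hx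
        rw [Set.uIcc_of_le ht0.le] at hx
        exact (Real.rpow_mul hx.1 a _).symm
    rw [hI1, hI2]
    have h1 : 1 / t * (t ^ (a+1) / (a+1)) = t ^ a / (a + 1) := by
      rw [Real.rpow_add_one ht0.ne']; field_simp
    have h2 : 1 / t * (t ^ (s+1) / (s+1)) = t ^ s / (s + 1) := by
      rw [Real.rpow_add_one ht0.ne']; field_simp
    rw [h1, h2]
    have h3 : (t ^ s / (s + 1)) ^ (q - 1) = t ^ (s * (q-1)) / (s+1) ^ (q-1) := by
      rw [Real.div_rpow (Real.rpow_nonneg ht0.le _) (by rw [hs1']; positivity),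
        ← Real.rpow_mul ht0.le]
    have hsq : s * (q - 1) = -a := by
      rw [hsdef]; field_simp
    have h4 : (s + 1) ^ (q - 1) = (Y ^ (q-1))⁻¹ := by
      rw [hs1', Real.inv_rpow hY.le]
    rw [h3, hsq, h4]
    have h5 : t ^ a / (a + 1) * (t ^ (-a) / (Y ^ (q-1))⁻¹) =
        (t ^ a * t ^ (-a)) * ((1/(a+1)) * Y ^ (q-1)) := by
      field_simp
    rw [h5, ← Real.rpow_add ht0, add_neg_cancel, Real.rpow_zero, one_mul, hMdef]
  · -- non-integrability
    intro hInt
    have h1 : IntegrableOn (fun t : ℝ => t⁻¹) (Set.Ioo 0 1) := by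
      exact (hInt.congr_fun hii2 measurableSet_Ioo)
    have h2 : IntervalIntegrable (fun t : ℝ => t⁻¹) volume 0 1 := by
      rw [intervalIntegrable_iff_integrableOn_Ioc_of_le (by norm_num)]
      exact h1.congr_set_ae (MeasureTheory.Ioo_ae_eq_Ioc).symm
    rw [intervalIntegrable_inv_iff] at h2
    rcases h2 with h | h
    · norm_num at h
    · exact h (by rw [Set.uIcc_of_le (by norm_num)]; exact ⟨le_refl _, by norm_num⟩)
end
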